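/- arXiv:2105.04518 — 5 statements merged into one kernel-verified Lean document; each statement's English description precedes it below -/
import Mathlib

section
/- For each n, let Z^(n) be a random treatment assignment on a population of N_n units, N_n → ∞, with exposure indicators D^(n)_{i,k} ∈ {0,1} (i ≤ N_n, k ≤ K, Σ_k D^(n)_{i,k} = 1 a.s.), exposure probabilities p^(n)_i(c_k) = E[D^(n)_{i,k}] and joint exposure probabilities p^(n)_{ij}(c_k) = E[D^(n)_{i,k} D^(n)_{j,k}], and fixed potential outcomes y^(n)_i(c_k) with |y^(n)_i(c_k)| ≤ c < ∞ uniformly. Assume for every k: (Condition 1) p^(n)_i(c_k) > 0 for all i and Σ_{i=1}^{N_n} 1/p^(n)_i(c_k) = o(N_n²); (Condition 2) Σ_{i=1}^{N_n} Σ_{j≠i} | p^(n)_{ij}(c_k)/(p^(n)_i(c_k) p^(n)_j(c_k)) − 1 | = o(N_n²). Then for every pair of conditions k, l and every ε > 0, P(|τ̂_n(c_k,c_l) − τ_n(c_k,c_l)| > ε) → 0 as n → ∞, where ŷ_n(c_k) = (1/N_n) Σ_i D^(n)_{i,k} y^(n)_i(c_k)/p^(n)_i(c_k), τ̂_n(c_k,c_l)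 = ŷ_n(c_k) − ŷ_n(c_l), and τ_n(c_k,c_l) = (1/N_n) Σ_i (y^(n)_i(c_k) − y^(n)_i(c_l)). -/
open MeasureTheory ProbabilityTheory Filter

lemma ht_int_of_bdd {Ω : Type} [MeasurableSpace Ω] (μ : Measure Ω) [IsProbabilityMeasure μ]
    {f : Ω → ℝ} (hf : Measurable f) (C : ℝ) (h : ∀ ω, |f ω| ≤ C) : Integrable f μ :=
  memLp_one_iff_integrable.mp (MemLp.of_bound hf.aestronglyMeasurable C
    (Filter.Eventually.of_forall (by simpa [Real.norm_eq_abs] using h)))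

lemma ht_key {Ω : Type} [MeasurableSpace Ω] (μ : Measure Ω) [IsProbabilityMeasure μ]
    {M : ℕ} (D : Fin M → Ω → ℝ) (hDmeas : ∀ i, Measurable (D i))
    (hD01 : ∀ i ω, D i ω = 0 ∨ D i ω = 1)
    (y : Fin M → ℝ) (c : ℝ) (hy : ∀ i, |y i| ≤ c)
    (p : Fin M → ℝ) (hp : ∀ i, p i = ∫ ω, D i ω ∂μ)
    (pp : Fin M → Fin M → ℝ) (hpp : ∀ i j, pp i j = ∫ ω, D i ω * D j ω ∂μ)
    (hppos : ∀ i, 0 < p i) :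
    Integrable (fun ω => (∑ i, D i ω * y i / p i - ∑ i, y i) ^ 2) μ ∧
    ∫ ω, (∑ i, D i ω * y i / p i - ∑ i, y i) ^ 2 ∂μ ≤
      c ^ 2 * ((∑ i, 1 / p i) + ∑ i, ∑ j ∈ Finset.univ.erase i,
        |pp i j / (p i * p j) - 1|) := by
  simp_rw [mul_div_assoc]
  have hDb : ∀ i ω, |D i ω| ≤ 1 := by
    intro i ω; rcases hD01 i ω with h | h <;> simp [h]
  have hDi : ∀ i, Integrable (D i) μ := fun i => ht_int_of_bdd μ (hDmeas i) 1 (hDb i)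
  have hDDi : ∀ i j, Integrable (fun ω => D i ω * D j ω) μ := by
    intro i j
    refine ht_int_of_bdd μ ((hDmeas i).mul (hDmeas j)) 1 ?_
    intro ω
    rw [abs_mul]
    calc |D i ω| * |D j ω| ≤ 1 * 1 := by
          exact mul_le_mul (hDb i ω) (hDb j ω) (abs_nonneg _) zero_le_one
      _ = 1 := one_mul 1
  set a : Fin M → ℝ := fun i => y i / p i with ha
  set f : Ω → ℝ := fun ω => ∑ i, D i ω * a i with hf
  set m : ℝ := ∑ i, y i with hm
  -- p i ≤ 1
  have hple : ∀ i, p i ≤ 1 := by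
    intro i
    rw [hp i]
    calc ∫ ω, D i ω ∂μ ≤ ∫ _ω, (1 : ℝ) ∂μ := by
          refine integral_mono (hDi i) (integrable_const 1) ?_
          intro ω; exact (abs_le.mp (hDb i ω)).2
      _ = 1 := by simp
  -- integral of f
  have hfint : Integrable f μ :=
    integrable_finset_sum _ (fun i _ => (hDi i).mul_const _)
  have hIf : ∫ ω, f ω ∂μ = m := by
    rw [hf]
    rw [integral_finset_sum _ (fun i _ => (hDi i).mul_const _)]
    have : ∀ i, ∫ ω, D i ω * a i ∂μ = y i := by
      intro i
      rw [integral_mul_const, ← hp i]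
      show p i * (y i / p i) = y i
      rw [mul_comm, div_mul_cancel₀ _ (hppos i).ne']
    simp_rw [this]
    exact hm.symm
  -- integral of f^2
  have hf2 : ∀ ω, f ω ^ 2 = ∑ i, ∑ j, (D i ω * D j ω) * (a i * a j) := by
    intro ω
    rw [sq, hf, Finset.sum_mul_sum]
    congr 1; ext i; congr 1; ext j; ring
  have hf2int : Integrable (fun ω => f ω ^ 2) μ := by
    have : Integrable (fun ω => ∑ i, ∑ j, (D i ω * D j ω) * (a i * a j)) μ :=
      integrable_finset_sum _ (fun i _ =>
        integrable_finset_sum _ (fun j _ => (hDDi i j).mul_const _))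
    exact this.congr (Filter.Eventually.of_forall fun ω => (hf2 ω).symm)
  have hIf2 : ∫ ω, f ω ^ 2 ∂μ = ∑ i, ∑ j, pp i j * (a i * a j) := by
    simp_rw [hf2]
    rw [integral_finset_sum _ (fun i _ =>
      integrable_finset_sum _ (fun j _ => (hDDi i j).mul_const _))]
    congr 1; ext i
    rw [integral_finset_sum _ (fun j _ => (hDDi i j).mul_const _)]
    congr 1; ext j
    rw [integral_mul_const, ← hpp i j]
  -- the main variance identity
  have i0 : Integrable (fun ω => f ω ^ 2 - 2 * m * f ω) μ :=
    hf2int.sub (hfint.const_mul (2 * m))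
  have i1 : Integrable (fun ω => f ω ^ 2 - 2 * m * f ω + m ^ 2) μ :=
    i0.add (integrable_const _)
  have hgint : Integrable (fun ω => (f ω - m) ^ 2) μ := by
    have h1 : ∀ ω, (f ω - m) ^ 2 = f ω ^ 2 - 2 * m * f ω + m ^ 2 := by intro ω; ring
    exact i1.congr (Filter.Eventually.of_forall fun ω => (h1 ω).symm)
  have hIg : ∫ ω, (f ω - m) ^ 2 ∂μ = (∑ i, ∑ j, pp i j * (a i * a j)) - m ^ 2 := by
    have h1 : ∀ ω, (f ω - m) ^ 2 = f ω ^ 2 - 2 * m * f ω + m ^ 2 := by intro ω; ring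
    simp_rw [h1]
    rw [integral_add i0 (integrable_const _),
      integral_sub hf2int (hfint.const_mul _), integral_const_mul, hIf, hIf2]
    simp
    ring
  -- rewrite as covariance-type sum
  have hcov : (∑ i, ∑ j, pp i j * (a i * a j)) - m ^ 2 =
      ∑ i, ∑ j, y i * y j * (pp i j / (p i * p j) - 1) := by
    have hm2 : m ^ 2 = ∑ i, ∑ j, y i * y j := by
      rw [hm, sq, Finset.sum_mul_sum]
    rw [hm2, ← Finset.sum_sub_distrib]
    congr 1; ext i
    rw [← Finset.sum_sub_distrib]
    congr 1; ext j
    have hpi := (hppos i).ne'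
    have hpj := (hppos j).ne'
    simp only [ha]
    field_simp [ha]
  -- diagonal: pp i i = p i
  have hdiag : ∀ i, pp i i = p i := by
    intro i
    rw [hpp i i, hp i]
    congr 1; ext ω
    rcases hD01 i ω with h | h <;> simp [h]
  have hc0 : ∀ (_ : Fin M), (0:ℝ) ≤ c := fun i => le_trans (abs_nonneg _) (hy i)
  -- bound
  refine ⟨hgint, ?_⟩
  rw [hIg, hcov]
  rw [mul_add, Finset.mul_sum, Finset.mul_sum, ← Finset.sum_add_distrib]
  refine Finset.sum_le_sum ?_
  intro i _
  have hci : (0:ℝ) ≤ c := hc0 i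
  -- split off diagonal
  rw [← Finset.add_sum_erase _ _ (Finset.mem_univ i)]
  have hd : y i * y i * (pp i i / (p i * p i) - 1) ≤ c ^ 2 * (1 / p i) := by
    have hpi := hppos i
    have h1 : pp i i / (p i * p i) - 1 = 1 / p i - 1 := by
      rw [hdiag i]; field_simp
    rw [h1]
    have h2 : (0:ℝ) ≤ 1 / p i - 1 := by
      have : (1:ℝ) ≤ 1 / p i := by
        rw [le_div_iff₀ hpi]; simpa using hple i
      linarith
    have h3 : y i * y i ≤ c ^ 2 := by
      calc y i * y i ≤ |y i * y i| := le_abs_self _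
        _ = |y i| * |y i| := abs_mul _ _
        _ ≤ c * c := mul_le_mul (hy i) (hy i) (abs_nonneg _) hci
        _ = c ^ 2 := (sq c).symm
    calc y i * y i * (1 / p i - 1) ≤ c ^ 2 * (1 / p i - 1) :=
          mul_le_mul_of_nonneg_right h3 h2
      _ ≤ c ^ 2 * (1 / p i) := by
          have : (0:ℝ) ≤ c ^ 2 := sq_nonneg c
          nlinarith
  refine add_le_add hd ?_
  rw [Finset.mul_sum]
  refine Finset.sum_le_sum ?_
  intro j _
  calc y i * y j * (pp i j / (p i * p j) - 1)
      ≤ |y i * y j * (pp i j / (p i * p j) - 1)| := le_abs_self _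
    _ = |y i| * |y j| * |pp i j / (p i * p j) - 1| := by rw [abs_mul, abs_mul]
    _ ≤ c * c * |pp i j / (p i * p j) - 1| := by
        refine mul_le_mul_of_nonneg_right ?_ (abs_nonneg _)
        exact mul_le_mul (hy i) (hy j) (abs_nonneg _) hci
    _ = c ^ 2 * |pp i j / (p i * p j) - 1| := by rw [sq]

lemma ht_markov {Ω : Type} [MeasurableSpace Ω] (μ : Measure Ω) [IsProbabilityMeasure μ]
    {g : Ω → ℝ} (hg : Integrable (fun ω => g ω ^ 2) μ) {t : ℝ} (ht : 0 < t) :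
    μ {ω | t < |g ω|} ≤ ENNReal.ofReal ((∫ ω, g ω ^ 2 ∂μ) / t ^ 2) := by
  have hsub : {ω | t < |g ω|} ⊆ {ω | t ^ 2 ≤ g ω ^ 2} := by
    intro ω h
    simp only [Set.mem_setOf_eq] at *
    calc t ^ 2 ≤ |g ω| ^ 2 := pow_le_pow_left₀ ht.le h.le 2
      _ = g ω ^ 2 := sq_abs _
  refine le_trans (measure_mono hsub) ?_
  have hmar := mul_meas_ge_le_integral_of_nonneg
    (Filter.Eventually.of_forall fun ω => sq_nonneg (g ω)) hg (t ^ 2)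
  have ht2 : 0 < t ^ 2 := pow_pos ht 2
  have hne : μ {ω | t ^ 2 ≤ g ω ^ 2} ≠ ⊤ := measure_ne_top μ _
  rw [← ENNReal.ofReal_toReal hne]
  apply ENNReal.ofReal_le_ofReal
  rw [le_div_iff₀ ht2]
  rw [measureReal_def] at hmar
  linarith [hmar]

lemma ht_tail {Ω : Type} [MeasurableSpace Ω] (μ : Measure Ω) [IsProbabilityMeasure μ]
    {M : ℕ} (D : Fin M → Ω → ℝ) (hDmeas : ∀ i, Measurable (D i))
    (hD01 : ∀ i ω, D i ω = 0 ∨ D i ω = 1)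
    (y : Fin M → ℝ) (c : ℝ) (hy : ∀ i, |y i| ≤ c)
    (p : Fin M → ℝ) (hp : ∀ i, p i = ∫ ω, D i ω ∂μ)
    (pp : Fin M → Fin M → ℝ) (hpp : ∀ i j, pp i j = ∫ ω, D i ω * D j ω ∂μ)
    (hppos : ∀ i, 0 < p i) {ε : ℝ} (hε : 0 < ε) (hM : 0 < M) :
    μ {ω | ε / 2 < |(M : ℝ)⁻¹ * ∑ i, D i ω * y i / p i - (M : ℝ)⁻¹ * ∑ i, y i|} ≤
      ENNReal.ofReal ((4 * c ^ 2 / ε ^ 2) *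
        (((∑ i, 1 / p i) + ∑ i, ∑ j ∈ Finset.univ.erase i,
          |pp i j / (p i * p j) - 1|) / (M : ℝ) ^ 2)) := by
  obtain ⟨hint, hle⟩ := ht_key μ D hDmeas hD01 y c hy p hp pp hpp hppos
  have hMr : (0 : ℝ) < (M : ℝ) := Nat.cast_pos.mpr hM
  have ht : (0 : ℝ) < ε / 2 * (M : ℝ) := by positivity
  have hset : {ω | ε / 2 < |(M : ℝ)⁻¹ * ∑ i, D i ω * y i / p i - (M : ℝ)⁻¹ * ∑ i, y i|}
      = {ω | ε / 2 * (M : ℝ) < |(∑ i, D i ω * y i / p i) - ∑ i, y i|} := by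
    ext ω
    simp only [Set.mem_setOf_eq]
    rw [← mul_sub, abs_mul, abs_inv, abs_of_pos hMr, inv_mul_eq_div, lt_div_iff₀ hMr]
  rw [hset]
  refine le_trans (ht_markov μ hint ht) ?_
  apply ENNReal.ofReal_le_ofReal
  have hS : (0 : ℝ) ≤ (∑ i, 1 / p i) + ∑ i, ∑ j ∈ Finset.univ.erase i,
      |pp i j / (p i * p j) - 1| := by
    have h1 : (0:ℝ) ≤ ∑ i, 1 / p i :=
      Finset.sum_nonneg fun i _ => one_div_nonneg.mpr (hppos i).le
    have h2 : (0:ℝ) ≤ ∑ i, ∑ j ∈ Finset.univ.erase i, |pp i j / (p i * p j) - 1| :=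
      Finset.sum_nonneg fun i _ => Finset.sum_nonneg fun j _ => abs_nonneg _
    linarith
  calc (∫ ω, ((∑ i, D i ω * y i / p i) - ∑ i, y i) ^ 2 ∂μ) / (ε / 2 * (M:ℝ)) ^ 2
      ≤ (c ^ 2 * ((∑ i, 1 / p i) + ∑ i, ∑ j ∈ Finset.univ.erase i,
          |pp i j / (p i * p j) - 1|)) / (ε / 2 * (M:ℝ)) ^ 2 := by
        exact (div_le_div_iff_of_pos_right (pow_pos ht 2)).mpr hle
    _ = (4 * c ^ 2 / ε ^ 2) * (((∑ i, 1 / p i) + ∑ i, ∑ j ∈ Finset.univ.erase i,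
          |pp i j / (p i * p j) - 1|) / (M : ℝ) ^ 2) := by
        field_simp
        ring


/-- Consistency of the Horvitz–Thompson contrast estimator under
Conditions 1 and 2 (bounded outcomes, positive exposure probabilities with
`∑_i 1/p_i = o(N²)`, and limited pairwise clustering `∑_{i≠j}|p_ij/(p_i p_j) − 1| = o(N²)`). -/
theorem horvitz_thompson_consistent
    (K : ℕ)
    (Ω : ℕ → Type) [∀ n, MeasurableSpace (Ω n)]
    (μ : ∀ n, Measure (Ω n)) [∀ n, IsProbabilityMeasure (μ n)]
    (N : ℕ → ℕ) (hN : Tendsto N atTop atTop)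
    -- exposure indicators
    (D : ∀ n, Fin (N n) → Fin K → Ω n → ℝ)
    (hDmeas : ∀ n i k, Measurable (D n i k))
    (hD01 : ∀ n i k ω, D n i k ω = 0 ∨ D n i k ω = 1)
    (hDone : ∀ n, ∀ᵐ ω ∂μ n, ∀ i, ∑ k, D n i k ω = 1)
    -- fixed potential outcomes, uniformly bounded
    (y : ∀ n, Fin (N n) → Fin K → ℝ)
    (c : ℝ) (hy : ∀ n i k, |y n i k| ≤ c)
    -- exposure probabilities and joint exposure probabilities
    (p : ∀ n, Fin (N n) → Fin K → ℝ)
    (hp : ∀ n i k, p n i k = ∫ ω, D n i k ω ∂μ n)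
    (pp : ∀ n, Fin (N n) → Fin (N n) → Fin K → ℝ)
    (hpp : ∀ n i j k, pp n i j k = ∫ ω, D n i k ω * D n j k ω ∂μ n)
    -- Condition 1
    (hppos : ∀ n i k, 0 < p n i k)
    (hcond1 : ∀ k : Fin K,
      Tendsto (fun n => (∑ i, 1 / p n i k) / (N n : ℝ) ^ 2) atTop (nhds 0))
    -- Condition 2
    (hcond2 : ∀ k : Fin K,
      Tendsto (fun n =>
          (∑ i, ∑ j ∈ Finset.univ.erase i,
            |pp n i j k / (p n i k * p n j k) - 1|) / (N n : ℝ) ^ 2)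
        atTop (nhds 0)) :
    ∀ k l : Fin K, ∀ ε : ℝ, 0 < ε →
      Tendsto (fun n =>
          μ n {ω | ε <
            |((N n : ℝ)⁻¹ * ∑ i, D n i k ω * y n i k / p n i k
              - (N n : ℝ)⁻¹ * ∑ i, D n i l ω * y n i l / p n i l)
              - (N n : ℝ)⁻¹ * ∑ i, (y n i k - y n i l)|})
        atTop (nhds 0) := by
  intro k l ε hε
  -- the deterministic bound for condition m at step n
  set B : Fin K → ℕ → ENNReal := fun m n => ENNReal.ofReal ((4 * c ^ 2 / ε ^ 2) *
    (((∑ i, 1 / p n i m) + ∑ i, ∑ j ∈ Finset.univ.erase i,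
      |pp n i j m / (p n i m * p n j m) - 1|) / (N n : ℝ) ^ 2)) with hB
  have hBtend : ∀ m : Fin K, Tendsto (fun n => B m n) atTop (nhds 0) := by
    intro m
    have h1 : Tendsto (fun n => ((∑ i, 1 / p n i m) + ∑ i, ∑ j ∈ Finset.univ.erase i,
        |pp n i j m / (p n i m * p n j m) - 1|) / (N n : ℝ) ^ 2) atTop (nhds 0) := by
      have := (hcond1 m).add (hcond2 m)
      simpa [add_div] using this
    have h2 : Tendsto (fun n => (4 * c ^ 2 / ε ^ 2) *
        (((∑ i, 1 / p n i m) + ∑ i, ∑ j ∈ Finset.univ.erase i,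
          |pp n i j m / (p n i m * p n j m) - 1|) / (N n : ℝ) ^ 2)) atTop (nhds 0) := by
      simpa using h1.const_mul (4 * c ^ 2 / ε ^ 2)
    have h3 := ENNReal.tendsto_ofReal h2
    simpa [hB] using h3
  have hBsum : Tendsto (fun n => B k n + B l n) atTop (nhds 0) := by
    simpa using (hBtend k).add (hBtend l)
  refine tendsto_of_tendsto_of_tendsto_of_le_of_le' tendsto_const_nhds hBsum
    (Filter.Eventually.of_forall fun n => zero_le) ?_
  filter_upwards [hN.eventually_ge_atTop 1] with n hn
  have hM : 0 < N n := hn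
  set E1 : Set (Ω n) := {ω | ε / 2 <
    |(N n : ℝ)⁻¹ * ∑ i, D n i k ω * y n i k / p n i k - (N n : ℝ)⁻¹ * ∑ i, y n i k|}
  set E2 : Set (Ω n) := {ω | ε / 2 <
    |(N n : ℝ)⁻¹ * ∑ i, D n i l ω * y n i l / p n i l - (N n : ℝ)⁻¹ * ∑ i, y n i l|}
  have hsub : {ω | ε <
      |((N n : ℝ)⁻¹ * ∑ i, D n i k ω * y n i k / p n i k
        - (N n : ℝ)⁻¹ * ∑ i, D n i l ω * y n i l / p n i l)
        - (N n : ℝ)⁻¹ * ∑ i, (y n i k - y n i l)|} ⊆ E1 ∪ E2 := by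
    intro ω hω
    simp only [Set.mem_setOf_eq] at hω
    by_contra hc2
    simp only [Set.mem_union, E1, E2, Set.mem_setOf_eq, not_or, not_lt] at hc2
    obtain ⟨h1, h2⟩ := hc2
    have hsplit : (N n : ℝ)⁻¹ * ∑ i, (y n i k - y n i l)
        = (N n : ℝ)⁻¹ * ∑ i, y n i k - (N n : ℝ)⁻¹ * ∑ i, y n i l := by
      rw [Finset.sum_sub_distrib, mul_sub]
    rw [hsplit] at hω
    have h1' := abs_le.mp h1
    have h2' := abs_le.mp h2
    have hbig : |((N n : ℝ)⁻¹ * ∑ i, D n i k ω * y n i k / p n i k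
          - (N n : ℝ)⁻¹ * ∑ i, D n i l ω * y n i l / p n i l)
        - ((N n : ℝ)⁻¹ * ∑ i, y n i k - (N n : ℝ)⁻¹ * ∑ i, y n i l)| ≤ ε := by
      rw [abs_le]
      constructor <;> linarith [h1'.1, h1'.2, h2'.1, h2'.2]
    linarith
  calc μ n _ ≤ μ n (E1 ∪ E2) := measure_mono hsub
    _ ≤ μ n E1 + μ n E2 := measure_union_le _ _
    _ ≤ B k n + B l n := by
        refine add_le_add ?_ ?_
        · exact ht_tail (μ n) (fun i => D n i k) (fun i => hDmeas n i k)
            (fun i ω => hD01 n i k ω) (fun i => y n i k) c (fun i => hy n i k)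
            (fun i => p n i k) (fun i => hp n i k) (fun i j => pp n i j k)
            (fun i j => hpp n i j k) (fun i => hppos n i k) hε hM
        · exact ht_tail (μ n) (fun i => D n i l) (fun i => hDmeas n i l)
            (fun i ω => hD01 n i l ω) (fun i => y n i l) c (fun i => hy n i l)
            (fun i => p n i l) (fun i => hp n i l) (fun i j => pp n i j l)
            (fun i j => hpp n i j l) (fun i => hppos n i l) hε hM
end

section
/- Under the four-level exposure model with noisy network observation and i.i.d. Bernoulli(p) treatment, the confusion matrix entries of vertex i for the treated block are: P_i(c̃_{10}, c_{10}) = p (1−p)^{d_i} (1−αp)^{N−1−d_i}; P_i(c̃_{11}, c_{10}) = p (1−p)^{d_i} [1 − (1−αp)^{N−1−d_i}]; P_i(c̃_{10}, c_{11}) = p (1−αp)^{N−1−d_i} [ (1−(1−β)p)^{d_i} − (1−p)^{d_i} ]; and P_i(c̃_{11}, c_{11}) = p [ 1 − (1−p)^{d_i} − (1−αp)^{N−1−d_i} ( (1−(1−β)p)^{d_i} − (1−p)^{d_i} ) ]. -/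
open MeasureTheory ProbabilityTheory Filter

section Aux

lemma meas_iInter_blocks {Ω ι κ : Type*} {mΩ : MeasurableSpace Ω} {μ : Measure Ω}
    [IsProbabilityMeasure μ] {m : ι → MeasurableSpace Ω}
    (h_le : ∀ i, m i ≤ mΩ) (h_indep : iIndep m μ)
    (T : κ → Set ι) (hT : Pairwise (Function.onFun Disjoint T))
    (E : κ → Set Ω) (hE : ∀ k, MeasurableSet[⨆ i ∈ T k, m i] (E k))
    (s : Finset κ) :
    μ (⋂ k ∈ s, E k) = ∏ k ∈ s, μ (E k) := by
  classical
  induction s using Finset.induction with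
  | empty => simp
  | @insert a s ha ih =>
    rw [Finset.set_biInter_insert, Finset.prod_insert ha, ← ih]
    have hdisj : Disjoint (T a) (⋃ k ∈ (s : Set κ), T k) :=
      Set.disjoint_iUnion₂_right.mpr fun k hk => hT (fun h => ha (h ▸ hk))
    have hindep2 : Indep (⨆ i ∈ T a, m i) (⨆ i ∈ ⋃ k ∈ (s : Set κ), T k, m i) μ :=
      indep_iSup_of_disjoint h_le h_indep hdisj
    refine (Indep_iff _ _ _).1 hindep2 _ _ (hE a) ?_
    refine MeasurableSet.biInter s.countable_toSet fun k hk => ?_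
    have hle2 : (⨆ i ∈ T k, m i) ≤ ⨆ i ∈ ⋃ k ∈ (s : Set κ), T k, m i := by
      refine iSup₂_le fun i hi => le_iSup₂ (f := fun i (_ : i ∈ _) => m i) i ?_
      exact Set.mem_biUnion hk hi
    exact hle2 _ (hE k)

/-- The ordered edge between `i` and `j`. -/
def edgeOf {N : ℕ} (i j : Fin N) (h : j ≠ i) : {e : Fin N × Fin N // e.1 < e.2} :=
  if hij : i < j then ⟨(i, j), hij⟩ else ⟨(j, i), lt_of_le_of_ne (not_lt.1 hij) h⟩

lemma edgeOf_val {N : ℕ} (i j : Fin N) (h : j ≠ i) :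
    (edgeOf i j h).1 = (i, j) ∨ (edgeOf i j h).1 = (j, i) := by
  unfold edgeOf; split <;> simp

/-- The block of coordinates associated to vertex `j` (relative to `i`). -/
def blockOf {N : ℕ} (i j : Fin N) : Set (Fin N ⊕ {e : Fin N × Fin N // e.1 < e.2}) :=
  {x | x = Sum.inl j ∨ ∃ h : j ≠ i, x = Sum.inr (edgeOf i j h)}

lemma blockOf_disjoint {N : ℕ} (i : Fin N) :
    Pairwise (Function.onFun Disjoint (blockOf i)) := by
  intro a b hab
  rw [Function.onFun, Set.disjoint_left]
  rintro x (rfl | ⟨h, rfl⟩) hx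
  · rcases hx with h1 | ⟨h2, h3⟩
    · exact hab (Sum.inl.inj h1)
    · simp at h3
  · rcases hx with h1 | ⟨h2, h3⟩
    · simp [eq_comm] at h1
    · have hval : (edgeOf i a h).1 = (edgeOf i b h2).1 := by
        have := Sum.inr.inj h3; rw [this]
      rcases edgeOf_val i a h with hv1 | hv1 <;> rcases edgeOf_val i b h2 with hv2 | hv2 <;>
        rw [hv1, hv2, Prod.mk.injEq] at hval
      · exact hab hval.2
      · exact h2 hval.1.symm
      · exact h hval.1
      · exact hab hval.1

end Aux

/-- Confusion matrix entries of vertex `i` for the treated block under the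
four-level exposure model with noisy network observation and i.i.d. Bernoulli(p)
treatment. Here the observed exposure uses the noisy network `Ã` and the true exposure
uses `A`; `P_i(c̃_k, c_l)` is the probability of observed exposure `c_k` and true
exposure `c_l`. -/
theorem confusion_matrix_treated_block
    {Ω : Type} [MeasurableSpace Ω] (μ : Measure Ω) [IsProbabilityMeasure μ]
    (N : ℕ)
    (A : Fin N → Fin N → ℕ)
    (hAsymm : ∀ i j, A i j = A j i)
    (hAdiag : ∀ i, A i i = 0)
    (hA01 : ∀ i j, A i j = 0 ∨ A i j = 1)
    (α β p : ℝ) (hα0 : 0 ≤ α) (hα1 : α ≤ 1) (hβ0 : 0 ≤ β) (hβ1 : β ≤ 1)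
    (hp0 : 0 ≤ p) (hp1 : p ≤ 1)
    (Z : Fin N → Ω → ℕ)
    (hZmeas : ∀ i, Measurable (Z i))
    (hZ01 : ∀ i ω, Z i ω = 0 ∨ Z i ω = 1)
    (hZp : ∀ i, μ {ω | Z i ω = 1} = ENNReal.ofReal p)
    (Atil : Fin N → Fin N → Ω → ℕ)
    (hmeas : ∀ i j, Measurable (Atil i j))
    (hsymm : ∀ i j ω, Atil i j ω = Atil j i ω)
    (hdiag : ∀ i ω, Atil i i ω = 0)
    (h01 : ∀ i j ω, Atil i j ω = 0 ∨ Atil i j ω = 1)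
    (hfalse : ∀ i j : Fin N, i < j → A i j = 0 →
      μ {ω | Atil i j ω = 1} = ENNReal.ofReal α)
    (htrue : ∀ i j : Fin N, i < j → A i j = 1 →
      μ {ω | Atil i j ω = 1} = ENNReal.ofReal (1 - β))
    (hindep : iIndepFun
      (Sum.elim Z (fun e : {e : Fin N × Fin N // e.1 < e.2} => Atil e.1.1 e.1.2)) μ) :
    ∀ i : Fin N,
      -- P_i(c̃_10, c_10)
      μ {ω | (Z i ω = 1 ∧ (∑ j, Z j ω * Atil i j ω) = 0)
            ∧ (Z i ω = 1 ∧ (∑ j, Z j ω * A i j) = 0)}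
        = ENNReal.ofReal (p * (1 - p) ^ (∑ j, A i j)
            * (1 - α * p) ^ (N - 1 - (∑ j, A i j))) ∧
      -- P_i(c̃_11, c_10)
      μ {ω | (Z i ω = 1 ∧ 0 < ∑ j, Z j ω * Atil i j ω)
            ∧ (Z i ω = 1 ∧ (∑ j, Z j ω * A i j) = 0)}
        = ENNReal.ofReal (p * (1 - p) ^ (∑ j, A i j)
            * (1 - (1 - α * p) ^ (N - 1 - (∑ j, A i j)))) ∧
      -- P_i(c̃_10, c_11)
      μ {ω | (Z i ω = 1 ∧ (∑ j, Z j ω * Atil i j ω) = 0)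
            ∧ (Z i ω = 1 ∧ 0 < ∑ j, Z j ω * A i j)}
        = ENNReal.ofReal (p * (1 - α * p) ^ (N - 1 - (∑ j, A i j))
            * ((1 - (1 - β) * p) ^ (∑ j, A i j) - (1 - p) ^ (∑ j, A i j))) ∧
      -- P_i(c̃_11, c_11)
      μ {ω | (Z i ω = 1 ∧ 0 < ∑ j, Z j ω * Atil i j ω)
            ∧ (Z i ω = 1 ∧ 0 < ∑ j, Z j ω * A i j)}
        = ENNReal.ofReal (p * (1 - (1 - p) ^ (∑ j, A i j)
            - (1 - α * p) ^ (N - 1 - (∑ j, A i j))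
              * ((1 - (1 - β) * p) ^ (∑ j, A i j) - (1 - p) ^ (∑ j, A i j)))) := by
  classical
  intro i
  set F : (Fin N ⊕ {e : Fin N × Fin N // e.1 < e.2}) → Ω → ℕ :=
    Sum.elim Z (fun e => Atil e.1.1 e.1.2) with hF
  have hFmeas : ∀ x, Measurable (F x) := by rintro (j | e); exacts [hZmeas j, hmeas _ _]
  -- the comap σ-algebras
  set mfam : (Fin N ⊕ {e : Fin N × Fin N // e.1 < e.2}) → MeasurableSpace Ω :=
    fun x => MeasurableSpace.comap (F x) inferInstance with hmfam
  have h_indep : iIndep mfam μ := hindep.iIndep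
  have h_le : ∀ x, mfam x ≤ ‹MeasurableSpace Ω› := fun x => (hFmeas x).comap_le
  -- basic real inequalities
  have h1p : (0:ℝ) ≤ 1 - p := by linarith
  have hap0 : (0:ℝ) ≤ 1 - α * p := by nlinarith
  have hbp0 : (0:ℝ) ≤ 1 - (1 - β) * p := by nlinarith
  -- basic sets and facts
  have hmWset : ∀ j, MeasurableSet {ω | Z j ω = 1} := fun j =>
    hZmeas j (measurableSet_singleton 1)
  have hmAset : MeasurableSet {ω | Atil i i ω = 1} := hmeas i i (measurableSet_singleton 1)
  have hedge : ∀ (j : Fin N) (h : j ≠ i) (ω : Ω),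
      Atil (edgeOf i j h).1.1 (edgeOf i j h).1.2 ω = Atil i j ω := by
    intro j h ω
    rcases edgeOf_val i j h with hv | hv <;> rw [hv]
    exact (hsymm i j ω).symm
  -- measures of single-coordinate events
  have hμZero : ∀ j, μ {ω | Z j ω = 0} = ENNReal.ofReal (1 - p) := by
    intro j
    have hset : {ω | Z j ω = 0} = {ω | Z j ω = 1}ᶜ := by
      ext ω; simp only [Set.mem_setOf_eq, Set.mem_compl_iff]
      rcases hZ01 j ω with h | h <;> simp [h]
    rw [hset, prob_compl_eq_one_sub (hmWset j), hZp j, ENNReal.ofReal_sub 1 hp0,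
      ENNReal.ofReal_one]
  have hμA : ∀ j, j ≠ i → μ {ω | Atil i j ω = 1}
      = ENNReal.ofReal (if A i j = 1 then 1 - β else α) := by
    intro j hj
    rcases lt_trichotomy i j with hij | hij | hij
    · rcases hA01 i j with h0 | h1
      · rw [if_neg (by omega), hfalse i j hij h0]
      · rw [if_pos h1, htrue i j hij h1]
    · exact absurd hij.symm hj
    · have hset : {ω | Atil i j ω = 1} = {ω | Atil j i ω = 1} := by
        ext ω; rw [Set.mem_setOf_eq, Set.mem_setOf_eq, hsymm i j ω]
      rw [hset, hAsymm i j]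
      rcases hA01 j i with h0 | h1
      · rw [if_neg (by omega), hfalse j i hij h0]
      · rw [if_pos h1, htrue j i hij h1]
  have hμG : ∀ j, j ≠ i → μ ({ω | Z j ω = 1} ∩ {ω | Atil i j ω = 1})
      = ENNReal.ofReal (p * (if A i j = 1 then 1 - β else α)) := by
    intro j hj
    have hind : IndepFun (F (Sum.inl j)) (F (Sum.inr (edgeOf i j hj))) μ :=
      hindep.indepFun (by simp)
    have := hind.measure_inter_preimage_eq_mul {1} {1} (measurableSet_singleton 1)
      (measurableSet_singleton 1)
    have hpre1 : F (Sum.inl j) ⁻¹' {1} = {ω | Z j ω = 1} := rfl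
    have hpre2 : F (Sum.inr (edgeOf i j hj)) ⁻¹' {1} = {ω | Atil i j ω = 1} := by
      ext ω; simp only [Set.mem_preimage, Set.mem_singleton_iff, Set.mem_setOf_eq, hF,
        Sum.elim_inr, hedge j hj ω]
    rw [hpre1, hpre2] at this
    rw [this, hZp j, hμA j hj, ← ENNReal.ofReal_mul hp0]
  have hμGc : ∀ j, j ≠ i → μ (({ω | Z j ω = 1} ∩ {ω | Atil i j ω = 1})ᶜ)
      = ENNReal.ofReal (if A i j = 1 then 1 - (1 - β) * p else 1 - α * p) := by
    intro j hj
    have hm : MeasurableSet ({ω | Z j ω = 1} ∩ {ω | Atil i j ω = 1}) :=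
      (hmWset j).inter (hmeas i j (measurableSet_singleton 1))
    rw [prob_compl_eq_one_sub hm, hμG j hj]
    split_ifs with hA
    · rw [← ENNReal.ofReal_one, ← ENNReal.ofReal_sub _ (by nlinarith)]; congr 1; ring
    · rw [← ENNReal.ofReal_one, ← ENNReal.ofReal_sub _ (by nlinarith)]; congr 1; ring
  -- the blocks and the grouping lemma
  have hblkW : ∀ j, MeasurableSet[⨆ x ∈ blockOf i j, mfam x] {ω | Z j ω = 1} := by
    intro j
    refine le_biSup mfam (Or.inl rfl : Sum.inl j ∈ blockOf i j) _ ?_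
    exact ⟨{1}, measurableSet_singleton 1, rfl⟩
  have hblkZero : ∀ j, MeasurableSet[⨆ x ∈ blockOf i j, mfam x] {ω | Z j ω = 0} := by
    intro j
    refine le_biSup mfam (Or.inl rfl : Sum.inl j ∈ blockOf i j) _ ?_
    exact ⟨{0}, measurableSet_singleton 0, rfl⟩
  have hblkA : ∀ j (h : j ≠ i), MeasurableSet[⨆ x ∈ blockOf i j, mfam x]
      {ω | Atil i j ω = 1} := by
    intro j h
    refine le_biSup mfam (Or.inr ⟨h, rfl⟩ : Sum.inr (edgeOf i j h) ∈ blockOf i j) _ ?_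
    refine ⟨{1}, measurableSet_singleton 1, ?_⟩
    ext ω; simp only [Set.mem_preimage, Set.mem_singleton_iff, Set.mem_setOf_eq, hF,
      Sum.elim_inr, hedge j h ω]
  have group : ∀ E : Fin N → Set Ω,
      (∀ j, MeasurableSet[⨆ x ∈ blockOf i j, mfam x] (E j)) →
      μ (⋂ j, E j) = ∏ j, μ (E j) := by
    intro E hE
    have := meas_iInter_blocks h_le h_indep (blockOf i) (blockOf_disjoint i) E hE
      Finset.univ
    simpa using this
  -- the generic product computation
  have hdcard : (∑ j, A i j) = (Finset.univ.filter (fun j => A i j = 1)).card := by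
    rw [Finset.card_filter]
    exact Finset.sum_congr rfl fun j _ => by rcases hA01 i j with h | h <;> simp [h]
  have hcard_ne : (Finset.univ.filter fun j : Fin N => ¬ j = i).card = N - 1 := by
    rw [show (Finset.univ.filter fun j : Fin N => ¬ j = i) = Finset.univ.erase i from by
      ext j; simp [Finset.mem_erase], Finset.card_erase_of_mem (Finset.mem_univ i),
      Finset.card_univ, Fintype.card_fin]
  have h2 : ((Finset.univ.filter fun j : Fin N => ¬ j = i).filter fun j => A i j = 1)
      = Finset.univ.filter (fun j => A i j = 1) := by
    ext j
    simp only [Finset.filter_filter, Finset.mem_filter, Finset.mem_univ, true_and]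
    constructor
    · rintro ⟨-, h⟩; exact h
    · intro h; exact ⟨fun hj => by rw [hj, hAdiag i] at h; omega, h⟩
  have hdle : (∑ j, A i j) ≤ N - 1 := by
    rw [hdcard, ← hcard_ne, ← h2]
    exact Finset.card_filter_le _ _
  have hcard_y : ((Finset.univ.filter fun j : Fin N => ¬ j = i).filter
      fun j => ¬ A i j = 1).card = N - 1 - ∑ j, A i j := by
    have hsplit := Finset.card_filter_add_card_filter_not
      (s := Finset.univ.filter fun j : Fin N => ¬ j = i) (p := fun j => A i j = 1)
    rw [h2, hcard_ne, ← hdcard] at hsplit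
    omega
  have hprod : ∀ x y : ℝ,
      (∏ j : Fin N, ENNReal.ofReal (if j = i then p else if A i j = 1 then x else y))
      = ENNReal.ofReal p * ENNReal.ofReal x ^ (∑ j, A i j)
        * ENNReal.ofReal y ^ (N - 1 - ∑ j, A i j) := by
    intro x y
    rw [← Finset.prod_filter_mul_prod_filter_not Finset.univ (fun j => j = i)]
    have h1 : Finset.univ.filter (fun j : Fin N => j = i) = {i} := by ext j; simp
    rw [h1, Finset.prod_singleton, if_pos rfl,
      ← Finset.prod_filter_mul_prod_filter_not
        (Finset.univ.filter fun j : Fin N => ¬ j = i) (fun j => A i j = 1)]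
    have hx : ∀ j ∈ ((Finset.univ.filter fun j : Fin N => ¬ j = i).filter
        fun j => A i j = 1), ENNReal.ofReal (if j = i then p else if A i j = 1 then x else y)
        = ENNReal.ofReal x := by
      intro j hj
      simp only [Finset.mem_filter, Finset.mem_univ, true_and] at hj
      rw [if_neg hj.1, if_pos hj.2]
    have hy : ∀ j ∈ ((Finset.univ.filter fun j : Fin N => ¬ j = i).filter
        fun j => ¬ A i j = 1), ENNReal.ofReal (if j = i then p else if A i j = 1 then x else y)
        = ENNReal.ofReal y := by
      intro j hj
      simp only [Finset.mem_filter, Finset.mem_univ, true_and] at hj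
      rw [if_neg hj.1, if_neg hj.2]
    rw [Finset.prod_congr rfl hx, Finset.prod_congr rfl hy, Finset.prod_const,
      Finset.prod_const, h2, ← hdcard, hcard_y, mul_assoc]
  -- sums as universal statements
  have hsum0A : ∀ ω, ((∑ j, Z j ω * A i j) = 0 ↔ ∀ j, A i j = 1 → Z j ω = 0) := by
    intro ω
    rw [Finset.sum_eq_zero_iff]
    constructor
    · intro h j hA
      have := h j (Finset.mem_univ j)
      rwa [hA, mul_one] at this
    · intro h j _
      rcases hA01 i j with h0 | h1
      · rw [h0, mul_zero]
      · rw [h j h1, zero_mul]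
  have hsum0At : ∀ ω, ((∑ j, Z j ω * Atil i j ω) = 0 ↔
      ∀ j, ¬(Z j ω = 1 ∧ Atil i j ω = 1)) := by
    intro ω
    rw [Finset.sum_eq_zero_iff]
    constructor
    · rintro h j ⟨hz, ha⟩
      have := h j (Finset.mem_univ j)
      rw [hz, ha] at this; omega
    · intro h j _
      rcases hZ01 j ω with hz | hz
      · rw [hz, zero_mul]
      · rcases h01 i j ω with ha | ha
        · rw [ha, mul_zero]
        · exact absurd ⟨hz, ha⟩ (h j)
  -- the three event families
  set Ea : Fin N → Set Ω := fun j => if j = i then {ω | Z i ω = 1}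
    else if A i j = 1 then {ω | Z j ω = 0}
    else ({ω | Z j ω = 1} ∩ {ω | Atil i j ω = 1})ᶜ with hEa
  set Eb : Fin N → Set Ω := fun j => if j = i then {ω | Z i ω = 1}
    else if A i j = 1 then {ω | Z j ω = 0} else Set.univ with hEb
  set Ec : Fin N → Set Ω := fun j => if j = i then {ω | Z i ω = 1}
    else ({ω | Z j ω = 1} ∩ {ω | Atil i j ω = 1})ᶜ with hEc
  have hEaj : ∀ j, Ea j = if j = i then {ω | Z i ω = 1}
    else if A i j = 1 then {ω | Z j ω = 0}
    else ({ω | Z j ω = 1} ∩ {ω | Atil i j ω = 1})ᶜ := fun j => rfl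
  have hEbj : ∀ j, Eb j = if j = i then {ω | Z i ω = 1}
    else if A i j = 1 then {ω | Z j ω = 0} else Set.univ := fun j => rfl
  have hEcj : ∀ j, Ec j = if j = i then {ω | Z i ω = 1}
    else ({ω | Z j ω = 1} ∩ {ω | Atil i j ω = 1})ᶜ := fun j => rfl
  have hblkGc : ∀ (j : Fin N) (h : j ≠ i), MeasurableSet[⨆ x ∈ blockOf i j, mfam x]
      (({ω | Z j ω = 1} ∩ {ω | Atil i j ω = 1})ᶜ) := fun j h =>
    ((hblkW j).inter (hblkA j h)).compl
  have hEameas : ∀ j, MeasurableSet[⨆ x ∈ blockOf i j, mfam x] (Ea j) := by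
    intro j
    rw [hEaj j]
    split_ifs with h1 h2
    · subst h1; exact hblkW j
    · exact hblkZero j
    · exact hblkGc j h1
  have hEbmeas : ∀ j, MeasurableSet[⨆ x ∈ blockOf i j, mfam x] (Eb j) := by
    intro j
    rw [hEbj j]
    split_ifs with h1 h2
    · subst h1; exact hblkW j
    · exact hblkZero j
    · exact MeasurableSet.univ
  have hEcmeas : ∀ j, MeasurableSet[⨆ x ∈ blockOf i j, mfam x] (Ec j) := by
    intro j
    rw [hEcj j]
    split_ifs with h1
    · subst h1; exact hblkW j
    · exact hblkGc j h1
  -- measures of the events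
  have hμEa : ∀ j, μ (Ea j) = ENNReal.ofReal
      (if j = i then p else if A i j = 1 then 1 - p else 1 - α * p) := by
    intro j
    rw [hEaj j]
    split_ifs with h1 h2
    · exact hZp i
    · exact hμZero j
    · have := hμGc j h1; rw [if_neg h2] at this; exact this
  have hμEb : ∀ j, μ (Eb j) = ENNReal.ofReal
      (if j = i then p else if A i j = 1 then 1 - p else 1) := by
    intro j
    rw [hEbj j]
    split_ifs with h1 h2
    · exact hZp i
    · exact hμZero j
    · rw [measure_univ, ENNReal.ofReal_one]
  have hμEc : ∀ j, μ (Ec j) = ENNReal.ofReal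
      (if j = i then p else if A i j = 1 then 1 - (1 - β) * p else 1 - α * p) := by
    intro j
    rw [hEcj j]
    split_ifs with h1 h2
    · exact hZp i
    · have := hμGc j h1; rw [if_pos h2] at this; exact this
    · have := hμGc j h1; rw [if_neg h2] at this; exact this
  -- product values
  have hμa : μ (⋂ j, Ea j)
      = ENNReal.ofReal (p * (1 - p) ^ (∑ j, A i j)
          * (1 - α * p) ^ (N - 1 - ∑ j, A i j)) := by
    rw [group Ea hEameas, Finset.prod_congr rfl fun j _ => hμEa j, hprod,
      ← ENNReal.ofReal_pow h1p, ← ENNReal.ofReal_pow hap0,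
      ← ENNReal.ofReal_mul hp0,
      ← ENNReal.ofReal_mul (mul_nonneg hp0 (pow_nonneg h1p _))]
  have hμb : μ (⋂ j, Eb j)
      = ENNReal.ofReal (p * (1 - p) ^ (∑ j, A i j)) := by
    rw [group Eb hEbmeas, Finset.prod_congr rfl fun j _ => hμEb j, hprod,
      ← ENNReal.ofReal_pow h1p, ENNReal.ofReal_one, one_pow, mul_one,
      ← ENNReal.ofReal_mul hp0]
  have hμc : μ (⋂ j, Ec j)
      = ENNReal.ofReal (p * (1 - (1 - β) * p) ^ (∑ j, A i j)
          * (1 - α * p) ^ (N - 1 - ∑ j, A i j)) := by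
    rw [group Ec hEcmeas, Finset.prod_congr rfl fun j _ => hμEc j, hprod,
      ← ENNReal.ofReal_pow hbp0, ← ENNReal.ofReal_pow hap0,
      ← ENNReal.ofReal_mul hp0,
      ← ENNReal.ofReal_mul (mul_nonneg hp0 (pow_nonneg hbp0 _))]
  -- the key sets
  set S1 : Set Ω := {ω | (Z i ω = 1 ∧ (∑ j, Z j ω * Atil i j ω) = 0)
      ∧ (Z i ω = 1 ∧ (∑ j, Z j ω * A i j) = 0)} with hS1def
  set Sb : Set Ω := {ω | Z i ω = 1 ∧ (∑ j, Z j ω * A i j) = 0} with hSbdef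
  set Sc : Set Ω := {ω | Z i ω = 1 ∧ (∑ j, Z j ω * Atil i j ω) = 0} with hScdef
  have hS1E : S1 = ⋂ j, Ea j := by
    ext ω
    rw [hS1def]
    simp only [Set.mem_setOf_eq, Set.mem_iInter]
    rw [hsum0A ω, hsum0At ω]
    constructor
    · rintro ⟨⟨hzi, hSt⟩, -, hS⟩ j
      rw [hEaj j]
      by_cases hj : j = i
      · subst hj; rw [if_pos rfl]; exact hzi
      · by_cases hA : A i j = 1
        · rw [if_neg hj, if_pos hA]; exact hS j hA
        · rw [if_neg hj, if_neg hA]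
          intro hmem
          exact hSt j ⟨hmem.1, hmem.2⟩
    · intro h
      have hzi : Z i ω = 1 := by have := h i; rw [hEaj i, if_pos rfl] at this; exact this
      refine ⟨⟨hzi, ?_⟩, hzi, ?_⟩
      · intro j
        by_cases hj : j = i
        · subst hj; rintro ⟨-, ha⟩; rw [hdiag j ω] at ha; omega
        · by_cases hA : A i j = 1
          · have := h j; rw [hEaj j, if_neg hj, if_pos hA] at this
            rintro ⟨hz, -⟩
            rw [Set.mem_setOf_eq] at this; omega
          · have := h j; rw [hEaj j, if_neg hj, if_neg hA] at this
            intro hc; exact this ⟨hc.1, hc.2⟩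
      · intro j hA
        have hj : ¬ j = i := fun e => by rw [e, hAdiag i] at hA; omega
        have := h j; rw [hEaj j, if_neg hj, if_pos hA] at this; exact this
  have hSbE : Sb = ⋂ j, Eb j := by
    ext ω
    rw [hSbdef]
    simp only [Set.mem_setOf_eq, Set.mem_iInter]
    rw [hsum0A ω]
    constructor
    · rintro ⟨hzi, hS⟩ j
      rw [hEbj j]
      by_cases hj : j = i
      · subst hj; rw [if_pos rfl]; exact hzi
      · by_cases hA : A i j = 1
        · rw [if_neg hj, if_pos hA]; exact hS j hA
        · rw [if_neg hj, if_neg hA]; trivial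
    · intro h
      have hzi : Z i ω = 1 := by have := h i; rw [hEbj i, if_pos rfl] at this; exact this
      refine ⟨hzi, fun j hA => ?_⟩
      have hj : ¬ j = i := fun e => by rw [e, hAdiag i] at hA; omega
      have := h j; rw [hEbj j, if_neg hj, if_pos hA] at this; exact this
  have hScE : Sc = ⋂ j, Ec j := by
    ext ω
    rw [hScdef]
    simp only [Set.mem_setOf_eq, Set.mem_iInter]
    rw [hsum0At ω]
    constructor
    · rintro ⟨hzi, hSt⟩ j
      rw [hEcj j]
      by_cases hj : j = i
      · subst hj; rw [if_pos rfl]; exact hzi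
      · rw [if_neg hj]; intro hmem; exact hSt j ⟨hmem.1, hmem.2⟩
    · intro h
      have hzi : Z i ω = 1 := by have := h i; rw [hEcj i, if_pos rfl] at this; exact this
      refine ⟨hzi, fun j => ?_⟩
      by_cases hj : j = i
      · subst hj; rintro ⟨-, ha⟩; rw [hdiag j ω] at ha; omega
      · have := h j; rw [hEcj j, if_neg hj] at this
        intro hc; exact this ⟨hc.1, hc.2⟩
  -- measures of the key sets
  have hμS1 : μ S1 = ENNReal.ofReal (p * (1 - p) ^ (∑ j, A i j)
      * (1 - α * p) ^ (N - 1 - ∑ j, A i j)) := by rw [hS1E, hμa]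
  have hμSb : μ Sb = ENNReal.ofReal (p * (1 - p) ^ (∑ j, A i j)) := by rw [hSbE, hμb]
  have hμSc : μ Sc = ENNReal.ofReal (p * (1 - (1 - β) * p) ^ (∑ j, A i j)
      * (1 - α * p) ^ (N - 1 - ∑ j, A i j)) := by rw [hScE, hμc]
  -- ambient measurability
  have hmsumA : Measurable fun ω => ∑ j, Z j ω * A i j :=
    Finset.measurable_sum _ fun j _ => (hZmeas j).mul measurable_const
  have hmsumAt : Measurable fun ω => ∑ j, Z j ω * Atil i j ω :=
    Finset.measurable_sum _ fun j _ => (hZmeas j).mul (hmeas i j)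
  have hmS1 : MeasurableSet S1 :=
    ((hmWset i).inter (hmsumAt (measurableSet_singleton 0))).inter
      ((hmWset i).inter (hmsumA (measurableSet_singleton 0)))
  have hmSb : MeasurableSet Sb := (hmWset i).inter (hmsumA (measurableSet_singleton 0))
  have hmSc : MeasurableSet Sc := (hmWset i).inter (hmsumAt (measurableSet_singleton 0))
  -- subsets
  have hS1Sb : S1 ⊆ Sb := fun ω h => ⟨h.1.1, h.2.2⟩
  have hS1Sc : S1 ⊆ Sc := fun ω h => h.1
  have hSbW : Sb ⊆ {ω | Z i ω = 1} := fun ω h => h.1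
  -- nonnegativity facts
  have ha_nonneg : (0:ℝ) ≤ p * (1 - p) ^ (∑ j, A i j)
      * (1 - α * p) ^ (N - 1 - ∑ j, A i j) :=
    mul_nonneg (mul_nonneg hp0 (pow_nonneg h1p _)) (pow_nonneg hap0 _)
  have hb_nonneg : (0:ℝ) ≤ p * (1 - p) ^ (∑ j, A i j) :=
    mul_nonneg hp0 (pow_nonneg h1p _)
  have hac : p * (1 - p) ^ (∑ j, A i j) * (1 - α * p) ^ (N - 1 - ∑ j, A i j)
      ≤ p * (1 - (1 - β) * p) ^ (∑ j, A i j) * (1 - α * p) ^ (N - 1 - ∑ j, A i j) := by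
    have hle : (1 - p : ℝ) ≤ 1 - (1 - β) * p := by nlinarith
    have h3 := pow_le_pow_left₀ h1p hle (∑ j, A i j)
    have h2 := pow_nonneg hap0 (N - 1 - ∑ j, A i j)
    exact mul_le_mul_of_nonneg_right (mul_le_mul_of_nonneg_left h3 hp0) h2
  -- target 3 set
  have hT3 : {ω | (Z i ω = 1 ∧ (∑ j, Z j ω * Atil i j ω) = 0)
      ∧ (Z i ω = 1 ∧ 0 < ∑ j, Z j ω * A i j)} = Sc \ S1 := by
    ext ω
    simp only [Set.mem_setOf_eq, Set.mem_diff, hScdef, hS1def, Nat.pos_iff_ne_zero]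
    tauto
  have hμScS1 : μ (Sc \ S1) = ENNReal.ofReal
      (p * (1 - (1 - β) * p) ^ (∑ j, A i j) * (1 - α * p) ^ (N - 1 - ∑ j, A i j)
        - p * (1 - p) ^ (∑ j, A i j) * (1 - α * p) ^ (N - 1 - ∑ j, A i j)) := by
    rw [measure_diff hS1Sc hmS1.nullMeasurableSet (measure_ne_top μ S1), hμSc, hμS1,
      ENNReal.ofReal_sub _ ha_nonneg]
  refine ⟨?_, ?_, ?_, ?_⟩
  · exact hμS1
  · -- target 2
    have hT2 : {ω | (Z i ω = 1 ∧ 0 < ∑ j, Z j ω * Atil i j ω)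
        ∧ (Z i ω = 1 ∧ (∑ j, Z j ω * A i j) = 0)} = Sb \ S1 := by
      ext ω
      simp only [Set.mem_setOf_eq, Set.mem_diff, hSbdef, hS1def, Nat.pos_iff_ne_zero]
      tauto
    rw [hT2, measure_diff hS1Sb hmS1.nullMeasurableSet (measure_ne_top μ S1), hμSb, hμS1,
      ← ENNReal.ofReal_sub _ ha_nonneg]
    congr 1; ring
  · -- target 3
    rw [hT3, hμScS1]
    congr 1; ring
  · -- target 4
    have hT4 : {ω | (Z i ω = 1 ∧ 0 < ∑ j, Z j ω * Atil i j ω)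
        ∧ (Z i ω = 1 ∧ 0 < ∑ j, Z j ω * A i j)}
        = ({ω | Z i ω = 1} \ Sb) \ (Sc \ S1) := by
      ext ω
      simp only [Set.mem_setOf_eq, Set.mem_diff, hSbdef, hScdef, hS1def,
        Nat.pos_iff_ne_zero]
      tauto
    have hsub : Sc \ S1 ⊆ {ω | Z i ω = 1} \ Sb := by
      rintro ω ⟨hc, hn1⟩
      refine ⟨hc.1, fun hb => hn1 ⟨hc, hb⟩⟩
    have hμWSb : μ ({ω | Z i ω = 1} \ Sb)
        = ENNReal.ofReal (p - p * (1 - p) ^ (∑ j, A i j)) := by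
      rw [measure_diff hSbW hmSb.nullMeasurableSet (measure_ne_top μ Sb), hZp i, hμSb,
        ENNReal.ofReal_sub _ hb_nonneg]
    rw [hT4, measure_diff hsub (hmSc.diff hmS1).nullMeasurableSet (measure_ne_top μ _),
      hμWSb, hμScS1, ← ENNReal.ofReal_sub _ (by linarith)]
    congr 1; ring
end

section
/- Under the four-level exposure model with noisy network observation and i.i.d. Bernoulli(p) treatment, the confusion matrix entries of vertex i for the untreated block are: P_i(c̃_{00}, c_{00}) = (1−p) (1−p)^{d_i} (1−αp)^{N−1−d_i}; P_i(c̃_{01}, c_{00}) = (1−p) (1−p)^{d_i} [1 − (1−αp)^{N−1−d_i}]; P_i(c̃_{00}, c_{01}) = (1−p) (1−αp)^{N−1−d_i} [ (1−(1−β)p)^{d_i} − (1−p)^{d_i} ]; and P_i(c̃_{01}, c_{01}) = (1−p) [ 1 − (1−p)^{d_i} − (1−αp)^{N−1−d_i} ( (1−(1−β)p)^{d_i} − (1−p)^{d_i} ) ]. Moreover, all entries mixing a treated observed exposure with an untreated true exposure (or vice versa) vanish: P_i(c̃_{11}, c_{01}) = P_i(c̃_{11}, c_{00}) = P_i(c̃_{10},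 c_{01}) = P_i(c̃_{10}, c_{00}) = P_i(c̃_{01}, c_{11}) = P_i(c̃_{01}, c_{10}) = P_i(c̃_{00}, c_{11}) = P_i(c̃_{00}, c_{10}) = 0. -/
open MeasureTheory ProbabilityTheory Filter

lemma all_meas {X : Type*} [Countable X] [MeasurableSpace X] [MeasurableSingletonClass X]
    (s : Set X) : MeasurableSet s := s.to_countable.measurableSet

lemma meas_iInter_blocks_s10 {Ω ι J : Type*} [MeasurableSpace Ω] [DecidableEq ι]
    (μ : Measure Ω) [IsProbabilityMeasure μ]
    (f : ι → Ω → ℕ) (hindep : iIndepFun f μ)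
    (hfmeas : ∀ k, Measurable (f k))
    (S : J → Finset ι) (hdisj : Pairwise (Function.onFun Disjoint S))
    (T : ∀ j, Set ({x // x ∈ S j} → ℕ)) (t : Finset J) :
    μ (⋂ j ∈ t, (fun ω (k : {x // x ∈ S j}) => f k ω) ⁻¹' (T j))
      = ∏ j ∈ t, μ ((fun ω (k : {x // x ∈ S j}) => f k ω) ⁻¹' (T j)) := by
  classical
  induction t using Finset.induction with
  | empty => simp
  | @insert j0 t hj0 ih =>
    rw [Finset.set_biInter_insert, Finset.prod_insert hj0]
    set U : Finset ι := t.biUnion S with hU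
    have hST : Disjoint (S j0) U := by
      rw [hU, Finset.disjoint_biUnion_right]
      exact fun j hj => hdisj (fun h => hj0 (h ▸ hj))
    have hI := hindep.indepFun_finset (S j0) U hST hfmeas
    have hmem : ∀ j ∈ t, ∀ k : {x // x ∈ S j}, (k : ι) ∈ U :=
      fun j hj k => Finset.mem_biUnion.mpr ⟨j, hj, k.2⟩
    have hEq : (⋂ j ∈ t, (fun ω (k : {x // x ∈ S j}) => f k ω) ⁻¹' (T j))
        = (fun ω (k : {x // x ∈ U}) => f k ω) ⁻¹'
          (⋂ j, ⋂ hj : j ∈ t,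
            (fun (g : {x // x ∈ U} → ℕ) (k : {x // x ∈ S j}) =>
              g ⟨(k : ι), hmem j hj k⟩) ⁻¹' (T j)) := by
      rw [Set.preimage_iInter]
      refine Set.iInter_congr fun j => ?_
      rw [Set.preimage_iInter]
      exact Set.iInter_congr fun hj => rfl
    rw [hEq, hI.measure_inter_preimage_eq_mul _ _ (all_meas _) (all_meas _), ← hEq, ih]

/-- Grouped independence for events that depend only on blocks of coordinates. -/
lemma meas_iInter_blocks' {Ω ι J : Type*} [MeasurableSpace Ω] [DecidableEq ι]
    (μ : Measure Ω) [IsProbabilityMeasure μ]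
    (f : ι → Ω → ℕ) (hindep : iIndepFun f μ)
    (hfmeas : ∀ k, Measurable (f k))
    (S : J → Finset ι) (hdisj : Pairwise (Function.onFun Disjoint S))
    (E : J → Set Ω)
    (hE : ∀ j, ∀ ω ω', (∀ k ∈ S j, f k ω = f k ω') → ω ∈ E j → ω' ∈ E j)
    (t : Finset J) :
    μ (⋂ j ∈ t, E j) = ∏ j ∈ t, μ (E j) := by
  have hrepr : ∀ j, E j = (fun ω (k : {x // x ∈ S j}) => f k ω) ⁻¹'
      {g : {x // x ∈ S j} → ℕ | ∃ ω, ω ∈ E j ∧ ∀ k : {x // x ∈ S j}, g k = f k ω} := by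
    intro j
    ext ω
    constructor
    · exact fun h => ⟨ω, h, fun k => rfl⟩
    · rintro ⟨ω0, h0, hagree⟩
      exact hE j ω0 ω (fun k hk => (hagree ⟨k, hk⟩).symm) h0
  calc μ (⋂ j ∈ t, E j) = μ (⋂ j ∈ t, (fun ω (k : {x // x ∈ S j}) => f k ω) ⁻¹'
      {g : {x // x ∈ S j} → ℕ | ∃ ω, ω ∈ E j ∧ ∀ k : {x // x ∈ S j}, g k = f k ω}) := by
        congr 1; exact Set.iInter₂_congr fun j _ => hrepr j
    _ = ∏ j ∈ t, μ ((fun ω (k : {x // x ∈ S j}) => f k ω) ⁻¹'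
      {g : {x // x ∈ S j} → ℕ | ∃ ω, ω ∈ E j ∧ ∀ k : {x // x ∈ S j}, g k = f k ω}) :=
        meas_iInter_blocks_s10 μ f hindep hfmeas S hdisj _ t
    _ = ∏ j ∈ t, μ (E j) := Finset.prod_congr rfl fun j _ => by rw [← hrepr j]

/-- The index of the unordered pair `{i,j}` among strictly increasing pairs. -/
def pairIdx {N : ℕ} (i j : Fin N) (h : i ≠ j) : {e : Fin N × Fin N // e.1 < e.2} :=
  if hlt : i < j then ⟨(i, j), hlt⟩ else ⟨(j, i), h.lt_or_gt.resolve_left hlt⟩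

lemma pairIdx_ne {N : ℕ} {i j j' : Fin N} (h : i ≠ j) (h' : i ≠ j') (hjj : j ≠ j') :
    pairIdx i j h ≠ pairIdx i j' h' := by
  unfold pairIdx
  split <;> split <;>
    simp only [ne_eq, Subtype.mk.injEq, Prod.mk.injEq] <;> tauto

/-- The block of coordinates relevant to vertex `j` as seen from `i`. -/
def blk {N : ℕ} (i j : Fin N) : Finset (Fin N ⊕ {e : Fin N × Fin N // e.1 < e.2}) :=
  if h : i = j then {Sum.inl i} else {Sum.inl j, Sum.inr (pairIdx i j h)}

lemma mem_blk_inl {N : ℕ} (i j : Fin N) : Sum.inl j ∈ blk i j := by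
  unfold blk; split <;> simp [*]

lemma mem_blk_inr {N : ℕ} (i j : Fin N) (h : i ≠ j) :
    Sum.inr (pairIdx i j h) ∈ blk i j := by
  unfold blk; rw [dif_neg h]; simp

lemma blk_disj {N : ℕ} (i : Fin N) : Pairwise (Function.onFun Disjoint (blk i)) := by
  intro j j' hjj
  unfold Function.onFun blk
  split <;> split <;> rename_i h1 h2 <;>
    rw [Finset.disjoint_left] <;> intro a ha ha' <;>
    simp only [Finset.mem_insert, Finset.mem_singleton] at ha ha'
  · exact hjj (h1 ▸ h2 ▸ rfl)
  · rcases ha' with h | h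
    · rw [ha] at h; exact h2 (Sum.inl.inj h)
    · rw [ha] at h; exact Sum.inl_ne_inr h
  · rcases ha with h | h
    · rw [h] at ha'; exact h1 (Sum.inl.inj ha').symm
    · rw [h] at ha'; exact Sum.inl_ne_inr ha'.symm
  · rcases ha with h | h <;> rcases ha' with h' | h'
    · exact hjj (Sum.inl.inj (h ▸ h'))
    · rw [h] at h'; exact Sum.inl_ne_inr h'
    · rw [h] at h'; exact Sum.inr_ne_inl h'
    · rw [h] at h'
      exact pairIdx_ne h1 h2 hjj (Sum.inr.inj h')

/-- Confusion matrix entries of vertex `i` for the untreated block under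
the four-level exposure model with noisy network observation and i.i.d. Bernoulli(p)
treatment, together with the vanishing of all entries mixing a treated observed
exposure with an untreated true exposure (or vice versa). -/
theorem confusion_matrix_untreated_block
    {Ω : Type} [MeasurableSpace Ω] (μ : Measure Ω) [IsProbabilityMeasure μ]
    (N : ℕ)
    (A : Fin N → Fin N → ℕ)
    (hAsymm : ∀ i j, A i j = A j i)
    (hAdiag : ∀ i, A i i = 0)
    (hA01 : ∀ i j, A i j = 0 ∨ A i j = 1)
    (α β p : ℝ) (hα0 : 0 ≤ α) (hα1 : α ≤ 1) (hβ0 : 0 ≤ β) (hβ1 : β ≤ 1)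
    (hp0 : 0 ≤ p) (hp1 : p ≤ 1)
    (Z : Fin N → Ω → ℕ)
    (hZmeas : ∀ i, Measurable (Z i))
    (hZ01 : ∀ i ω, Z i ω = 0 ∨ Z i ω = 1)
    (hZp : ∀ i, μ {ω | Z i ω = 1} = ENNReal.ofReal p)
    (Atil : Fin N → Fin N → Ω → ℕ)
    (hmeas : ∀ i j, Measurable (Atil i j))
    (hsymm : ∀ i j ω, Atil i j ω = Atil j i ω)
    (hdiag : ∀ i ω, Atil i i ω = 0)
    (h01 : ∀ i j ω, Atil i j ω = 0 ∨ Atil i j ω = 1)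
    (hfalse : ∀ i j : Fin N, i < j → A i j = 0 →
      μ {ω | Atil i j ω = 1} = ENNReal.ofReal α)
    (htrue : ∀ i j : Fin N, i < j → A i j = 1 →
      μ {ω | Atil i j ω = 1} = ENNReal.ofReal (1 - β))
    (hindep : iIndepFun
      (Sum.elim Z (fun e : {e : Fin N × Fin N // e.1 < e.2} => Atil e.1.1 e.1.2)) μ) :
    ∀ i : Fin N,
      -- P_i(c̃_00, c_00)
      (μ {ω | (Z i ω = 0 ∧ (∑ j, Z j ω * Atil i j ω) = 0)
            ∧ (Z i ω = 0 ∧ (∑ j, Z j ω * A i j) = 0)}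
        = ENNReal.ofReal ((1 - p) * (1 - p) ^ (∑ j, A i j)
            * (1 - α * p) ^ (N - 1 - (∑ j, A i j)))) ∧
      -- P_i(c̃_01, c_00)
      (μ {ω | (Z i ω = 0 ∧ 0 < ∑ j, Z j ω * Atil i j ω)
            ∧ (Z i ω = 0 ∧ (∑ j, Z j ω * A i j) = 0)}
        = ENNReal.ofReal ((1 - p) * (1 - p) ^ (∑ j, A i j)
            * (1 - (1 - α * p) ^ (N - 1 - (∑ j, A i j))))) ∧
      -- P_i(c̃_00, c_01)
      (μ {ω | (Z i ω = 0 ∧ (∑ j, Z j ω * Atil i j ω) = 0)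
            ∧ (Z i ω = 0 ∧ 0 < ∑ j, Z j ω * A i j)}
        = ENNReal.ofReal ((1 - p) * (1 - α * p) ^ (N - 1 - (∑ j, A i j))
            * ((1 - (1 - β) * p) ^ (∑ j, A i j) - (1 - p) ^ (∑ j, A i j)))) ∧
      -- P_i(c̃_01, c_01)
      (μ {ω | (Z i ω = 0 ∧ 0 < ∑ j, Z j ω * Atil i j ω)
            ∧ (Z i ω = 0 ∧ 0 < ∑ j, Z j ω * A i j)}
        = ENNReal.ofReal ((1 - p) * (1 - (1 - p) ^ (∑ j, A i j)
            - (1 - α * p) ^ (N - 1 - (∑ j, A i j))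
              * ((1 - (1 - β) * p) ^ (∑ j, A i j) - (1 - p) ^ (∑ j, A i j))))) ∧
      -- mixed treated/untreated entries vanish
      (μ {ω | (Z i ω = 1 ∧ 0 < ∑ j, Z j ω * Atil i j ω)
            ∧ (Z i ω = 0 ∧ 0 < ∑ j, Z j ω * A i j)} = 0) ∧
      (μ {ω | (Z i ω = 1 ∧ 0 < ∑ j, Z j ω * Atil i j ω)
            ∧ (Z i ω = 0 ∧ (∑ j, Z j ω * A i j) = 0)} = 0) ∧
      (μ {ω | (Z i ω = 1 ∧ (∑ j, Z j ω * Atil i j ω) = 0)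
            ∧ (Z i ω = 0 ∧ 0 < ∑ j, Z j ω * A i j)} = 0) ∧
      (μ {ω | (Z i ω = 1 ∧ (∑ j, Z j ω * Atil i j ω) = 0)
            ∧ (Z i ω = 0 ∧ (∑ j, Z j ω * A i j) = 0)} = 0) ∧
      (μ {ω | (Z i ω = 0 ∧ 0 < ∑ j, Z j ω * Atil i j ω)
            ∧ (Z i ω = 1 ∧ 0 < ∑ j, Z j ω * A i j)} = 0) ∧
      (μ {ω | (Z i ω = 0 ∧ 0 < ∑ j, Z j ω * Atil i j ω)
            ∧ (Z i ω = 1 ∧ (∑ j, Z j ω * A i j) = 0)} = 0) ∧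
      (μ {ω | (Z i ω = 0 ∧ (∑ j, Z j ω * Atil i j ω) = 0)
            ∧ (Z i ω = 1 ∧ 0 < ∑ j, Z j ω * A i j)} = 0) ∧
      (μ {ω | (Z i ω = 0 ∧ (∑ j, Z j ω * Atil i j ω) = 0)
            ∧ (Z i ω = 1 ∧ (∑ j, Z j ω * A i j) = 0)} = 0) := by
  classical
  intro i
  -- trivial zero entries
  have hz10 : ∀ (P Q : Ω → Prop),
      μ {ω | (Z i ω = 1 ∧ P ω) ∧ (Z i ω = 0 ∧ Q ω)} = 0 := by
    intro P Q
    have : {ω | (Z i ω = 1 ∧ P ω) ∧ (Z i ω = 0 ∧ Q ω)} = (∅ : Set Ω) := by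
      ext ω
      simp only [Set.mem_setOf_eq, Set.mem_empty_iff_false, iff_false]
      rintro ⟨⟨h1, -⟩, ⟨h0, -⟩⟩
      omega
    rw [this, measure_empty]
  have hz01 : ∀ (P Q : Ω → Prop),
      μ {ω | (Z i ω = 0 ∧ P ω) ∧ (Z i ω = 1 ∧ Q ω)} = 0 := by
    intro P Q
    have : {ω | (Z i ω = 0 ∧ P ω) ∧ (Z i ω = 1 ∧ Q ω)} = (∅ : Set Ω) := by
      ext ω
      simp only [Set.mem_setOf_eq, Set.mem_empty_iff_false, iff_false]
      rintro ⟨⟨h1, -⟩, ⟨h0, -⟩⟩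
      omega
    rw [this, measure_empty]
  set f : (Fin N ⊕ {e : Fin N × Fin N // e.1 < e.2}) → Ω → ℕ :=
    Sum.elim Z (fun e => Atil e.1.1 e.1.2) with hfdef
  have hfmeas : ∀ k, Measurable (f k) := by
    rintro (j | e)
    · exact hZmeas j
    · exact hmeas e.1.1 e.1.2
  have hfr : ∀ (j : Fin N) (h : i ≠ j) (ω : Ω),
      f (Sum.inr (pairIdx i j h)) ω = Atil i j ω := by
    intro j h ω
    unfold pairIdx
    split
    · rfl
    · exact (hsymm j i ω)
  -- basic probabilities
  have hZ0 : ∀ j, μ {ω | Z j ω = 0} = ENNReal.ofReal (1 - p) := by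
    intro j
    have hset : {ω | Z j ω = 0} = (Z j ⁻¹' {1})ᶜ := by
      ext ω; rcases hZ01 j ω with h | h <;> simp [h]
    rw [hset, prob_compl_eq_one_sub (hZmeas j (measurableSet_singleton 1)),
      show μ (Z j ⁻¹' {1}) = ENNReal.ofReal p from hZp j,
      ENNReal.ofReal_sub 1 hp0, ENNReal.ofReal_one]
  have hApair : ∀ (j : Fin N), i ≠ j →
      μ {ω | Atil i j ω = 1} = ENNReal.ofReal (if A i j = 1 then 1 - β else α) := by
    intro j h
    rcases h.lt_or_gt with hlt | hlt
    · rcases hA01 i j with h0 | h1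
      · rw [hfalse i j hlt h0, if_neg (by omega)]
      · rw [htrue i j hlt h1, if_pos h1]
    · have hset : {ω | Atil i j ω = 1} = {ω | Atil j i ω = 1} := by
        ext ω; rw [Set.mem_setOf_eq, Set.mem_setOf_eq, hsymm i j ω]
      rw [hset]
      rcases hA01 i j with h0 | h1
      · rw [hfalse j i hlt (by rw [← hAsymm i j]; exact h0), if_neg (by omega)]
      · rw [htrue j i hlt (by rw [← hAsymm i j]; exact h1), if_pos h1]
  have hq0 : ∀ j, (0:ℝ) ≤ (if A i j = 1 then 1 - β else α) := by
    intro j; split <;> linarith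
  have hjoint : ∀ (j : Fin N), i ≠ j →
      μ {ω | ¬(Z j ω = 1 ∧ Atil i j ω = 1)}
        = ENNReal.ofReal (1 - (if A i j = 1 then 1 - β else α) * p) := by
    intro j h
    have hne : (Sum.inl j : Fin N ⊕ {e : Fin N × Fin N // e.1 < e.2})
        ≠ Sum.inr (pairIdx i j h) := by simp
    have hind : IndepFun (Z j) (Atil i j) μ := by
      have h' := hindep.indepFun hne
      have he : f (Sum.inr (pairIdx i j h)) = Atil i j := funext (hfr j h)
      have hz : f (Sum.inl j) = Z j := rfl
      rwa [hz, he] at h'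
    have hprod := hind.measure_inter_preimage_eq_mul {1} {1}
      (measurableSet_singleton 1) (measurableSet_singleton 1)
    have hset : {ω | ¬(Z j ω = 1 ∧ Atil i j ω = 1)}
        = (Z j ⁻¹' {1} ∩ Atil i j ⁻¹' {1})ᶜ := by
      ext ω; simp [Set.mem_preimage]
    rw [hset, prob_compl_eq_one_sub
      (((hZmeas j) (measurableSet_singleton 1)).inter
        ((hmeas i j) (measurableSet_singleton 1))), hprod]
    have h1 : μ (Z j ⁻¹' {1}) = ENNReal.ofReal p := hZp j
    have h2 : μ (Atil i j ⁻¹' {1})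
        = ENNReal.ofReal (if A i j = 1 then 1 - β else α) := hApair j h
    rw [h1, h2, ← ENNReal.ofReal_mul hp0,
      ENNReal.ofReal_sub 1 (by nlinarith [hq0 j]), ENNReal.ofReal_one, mul_comm]
  -- counting
  set d := ∑ j, A i j with hddef
  have hcard1 : ((Finset.univ.erase i).filter (fun j => A i j = 1)).card = d := by
    have h1 : (Finset.univ.erase i).filter (fun j => A i j = 1)
        = Finset.univ.filter (fun j => A i j = 1) := by
      ext j
      simp only [Finset.mem_filter, Finset.mem_erase, Finset.mem_univ, true_and,
        and_true]
      constructor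
      · tauto
      · intro hj
        refine ⟨fun e => ?_, hj⟩
        rw [e, hAdiag i] at hj
        omega
    rw [h1, hddef, Finset.card_filter]
    refine (Finset.sum_congr rfl fun j _ => ?_).symm
    rcases hA01 i j with hh | hh <;> simp [hh]
  have hcard0 : ((Finset.univ.erase i).filter (fun j => ¬ A i j = 1)).card
      = N - 1 - d := by
    have hsplit := Finset.card_filter_add_card_filter_not
      (s := Finset.univ.erase i) (p := fun j => A i j = 1)
    have hcard_erase : (Finset.univ.erase i).card = N - 1 := by
      rw [Finset.card_erase_of_mem (Finset.mem_univ i), Finset.card_univ,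
        Fintype.card_fin]
    omega
  -- sum characterizations
  have hsum_true : ∀ ω, ((∑ j, Z j ω * A i j) = 0 ↔ ∀ j, A i j = 1 → Z j ω = 0) := by
    intro ω
    rw [Finset.sum_eq_zero_iff]
    constructor
    · intro h j hA
      have := h j (Finset.mem_univ j)
      rcases hZ01 j ω with hz | hz
      · exact hz
      · rw [hz, hA] at this; omega
    · intro h j _
      rcases hA01 i j with hA | hA
      · simp [hA]
      · rw [h j hA]; ring
  have hsum_obs : ∀ ω, ((∑ j, Z j ω * Atil i j ω) = 0
      ↔ ∀ j, ¬(Z j ω = 1 ∧ Atil i j ω = 1)) := by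
    intro ω
    rw [Finset.sum_eq_zero_iff]
    constructor
    · rintro h j ⟨h1, h2⟩
      have := h j (Finset.mem_univ j)
      rw [h1, h2] at this; omega
    · intro h j _
      rcases hZ01 j ω with hz | hz
      · simp [hz]
      · rcases h01 i j ω with ht | ht
        · simp [ht]
        · exact absurd ⟨hz, ht⟩ (h j)
  -- measurability of sums
  have hobs_meas : Measurable (fun ω => ∑ j, Z j ω * Atil i j ω) :=
    Finset.measurable_sum _ fun j _ => (hZmeas j).mul (hmeas i j)
  have htrue_meas : Measurable (fun ω => ∑ j, Z j ω * A i j) :=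
    Finset.measurable_sum _ fun j _ => (hZmeas j).mul measurable_const
  have h1p : (0:ℝ) ≤ 1 - p := by linarith
  have hap : (0:ℝ) ≤ 1 - α * p := by nlinarith
  have hbp : (0:ℝ) ≤ 1 - (1 - β) * p := by nlinarith
  -- generic product splitting
  have hprod_split : ∀ (a b : ℝ), 0 ≤ a → 0 ≤ b →
      (∏ j : Fin N, ENNReal.ofReal (if i = j then 1 - p else if A i j = 1 then a else b))
      = ENNReal.ofReal ((1 - p) * (a ^ d * b ^ (N - 1 - d))) := by
    intro a b ha hb
    rw [← Finset.mul_prod_erase Finset.univ _ (Finset.mem_univ i), if_pos rfl]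
    have hc1 : ∏ j ∈ Finset.univ.erase i,
        ENNReal.ofReal (if i = j then 1 - p else if A i j = 1 then a else b)
        = ∏ j ∈ Finset.univ.erase i, ENNReal.ofReal (if A i j = 1 then a else b) := by
      refine Finset.prod_congr rfl fun j hj => ?_
      rw [if_neg (fun e => (Finset.ne_of_mem_erase hj) e.symm)]
    have hc2 : ∏ j ∈ Finset.univ.erase i, ENNReal.ofReal (if A i j = 1 then a else b)
        = ENNReal.ofReal a ^ d * ENNReal.ofReal b ^ (N - 1 - d) := by
      simp only [apply_ite ENNReal.ofReal]
      rw [Finset.prod_ite, Finset.prod_const, Finset.prod_const, hcard1, hcard0]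
    rw [hc1, hc2, ← ENNReal.ofReal_pow ha, ← ENNReal.ofReal_pow hb,
      ← ENNReal.ofReal_mul (by positivity), ← ENNReal.ofReal_mul h1p]
  -- block-determinedness helper
  have hdep : ∀ (E : Fin N → Set Ω),
      (E i = {ω | Z i ω = 0}) →
      (∀ j, i ≠ j → E j = {ω | Z j ω = 0}
        ∨ E j = {ω | ¬(Z j ω = 1 ∧ Atil i j ω = 1)} ∨ E j = Set.univ) →
      ∀ j ω ω', (∀ k ∈ blk i j, f k ω = f k ω') → ω ∈ E j → ω' ∈ E j := by
    intro E hEi hEj j ω ω' hagr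
    by_cases h : i = j
    · subst h
      rw [hEi]
      intro hω
      have hz : Z i ω = Z i ω' := hagr (Sum.inl i) (mem_blk_inl i i)
      simp only [Set.mem_setOf_eq] at hω ⊢
      rw [← hz]; exact hω
    · have hz : Z j ω = Z j ω' := hagr (Sum.inl j) (mem_blk_inl i j)
      have ha : Atil i j ω = Atil i j ω' := by
        have := hagr (Sum.inr (pairIdx i j h)) (mem_blk_inr i j h)
        rwa [hfr j h ω, hfr j h ω'] at this
      rcases hEj j h with hE | hE | hE <;> rw [hE] <;> intro hω
      · simp only [Set.mem_setOf_eq] at hω ⊢; rw [← hz]; exact hω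
      · simp only [Set.mem_setOf_eq] at hω ⊢; rw [← hz, ← ha]; exact hω
      · trivial
  -- scenario A
  set EA : Fin N → Set Ω := fun j =>
    if i = j then {ω | Z i ω = 0} else if A i j = 1 then {ω | Z j ω = 0}
      else {ω | ¬(Z j ω = 1 ∧ Atil i j ω = 1)} with hEA
  have hEAi : EA i = {ω | Z i ω = 0} := by rw [hEA]; simp
  have hEAj : ∀ j, i ≠ j → EA j = {ω | Z j ω = 0}
      ∨ EA j = {ω | ¬(Z j ω = 1 ∧ Atil i j ω = 1)} ∨ EA j = Set.univ := by
    intro j h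
    rw [hEA]; simp only [if_neg h]
    by_cases hA : A i j = 1
    · left; rw [if_pos hA]
    · right; left; rw [if_neg hA]
  have hμEA := meas_iInter_blocks' μ f hindep hfmeas (blk i) (blk_disj i) EA
    (hdep EA hEAi hEAj) Finset.univ
  have hEAval : ∀ j, μ (EA j)
      = ENNReal.ofReal (if i = j then 1 - p else if A i j = 1 then 1 - p
          else 1 - α * p) := by
    intro j
    by_cases h : i = j
    · subst h; rw [hEA]; simp only [if_pos rfl]; exact hZ0 i
    · rw [hEA]; simp only [if_neg h]
      by_cases hA : A i j = 1
      · simp only [if_pos hA]; exact hZ0 j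
      · simp only [if_neg hA]
        have := hjoint j h; rw [if_neg hA] at this; exact this
  have hSAset : {ω | (Z i ω = 0 ∧ (∑ j, Z j ω * Atil i j ω) = 0)
      ∧ (Z i ω = 0 ∧ (∑ j, Z j ω * A i j) = 0)} = ⋂ j ∈ Finset.univ, EA j := by
    ext ω
    simp only [Set.mem_iInter, Finset.mem_univ, forall_const, Set.mem_setOf_eq]
    rw [hEA]
    constructor
    · rintro ⟨⟨h0, hobs⟩, ⟨-, htr⟩⟩ j
      by_cases h : i = j
      · simp only [if_pos h]; exact h0
      · simp only [if_neg h]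
        by_cases hA : A i j = 1
        · simp only [if_pos hA, Set.mem_setOf_eq]; exact (hsum_true ω).1 htr j hA
        · simp only [if_neg hA, Set.mem_setOf_eq]; exact (hsum_obs ω).1 hobs j
    · intro hj
      have h0 : Z i ω = 0 := by
        have := hj i; simp only [if_pos rfl, Set.mem_setOf_eq] at this; exact this
      refine ⟨⟨h0, (hsum_obs ω).2 ?_⟩, ⟨h0, (hsum_true ω).2 ?_⟩⟩
      · intro j
        by_cases h : i = j
        · subst h; rintro ⟨-, hA1⟩; rw [hdiag i ω] at hA1; omega
        · have := hj j; simp only [if_neg h] at this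
          by_cases hA : A i j = 1
          · rw [if_pos hA] at this; simp only [Set.mem_setOf_eq] at this
            rintro ⟨h1, -⟩; omega
          · rw [if_neg hA] at this; exact this
      · intro j hA1
        by_cases h : i = j
        · subst h; rw [hAdiag i] at hA1; omega
        · have := hj j; simp only [if_neg h, if_pos hA1, Set.mem_setOf_eq] at this
          exact this
  have hμSA : μ {ω | (Z i ω = 0 ∧ (∑ j, Z j ω * Atil i j ω) = 0)
      ∧ (Z i ω = 0 ∧ (∑ j, Z j ω * A i j) = 0)}
      = ENNReal.ofReal ((1 - p) * ((1 - p) ^ d * (1 - α * p) ^ (N - 1 - d))) := by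
    rw [hSAset, hμEA]
    rw [Finset.prod_congr rfl fun j _ => hEAval j]
    exact hprod_split (1 - p) (1 - α * p) h1p hap
  -- scenario B
  set EB : Fin N → Set Ω := fun j =>
    if i = j then {ω | Z i ω = 0} else if A i j = 1 then {ω | Z j ω = 0}
      else Set.univ with hEB
  have hEBi : EB i = {ω | Z i ω = 0} := by rw [hEB]; simp
  have hEBj : ∀ j, i ≠ j → EB j = {ω | Z j ω = 0}
      ∨ EB j = {ω | ¬(Z j ω = 1 ∧ Atil i j ω = 1)} ∨ EB j = Set.univ := by
    intro j h
    rw [hEB]; simp only [if_neg h]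
    by_cases hA : A i j = 1
    · left; rw [if_pos hA]
    · right; right; rw [if_neg hA]
  have hμEB := meas_iInter_blocks' μ f hindep hfmeas (blk i) (blk_disj i) EB
    (hdep EB hEBi hEBj) Finset.univ
  have hEBval : ∀ j, μ (EB j)
      = ENNReal.ofReal (if i = j then 1 - p else if A i j = 1 then 1 - p
          else 1) := by
    intro j
    by_cases h : i = j
    · subst h; rw [hEB]; simp only [if_pos rfl]; exact hZ0 i
    · rw [hEB]; simp only [if_neg h]
      by_cases hA : A i j = 1
      · simp only [if_pos hA]; exact hZ0 j
      · simp only [if_neg hA, measure_univ, ENNReal.ofReal_one]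
  have hSBset : {ω | Z i ω = 0 ∧ (∑ j, Z j ω * A i j) = 0}
      = ⋂ j ∈ Finset.univ, EB j := by
    ext ω
    simp only [Set.mem_iInter, Finset.mem_univ, forall_const, Set.mem_setOf_eq]
    rw [hEB]
    constructor
    · rintro ⟨h0, htr⟩ j
      by_cases h : i = j
      · simp only [if_pos h]; exact h0
      · simp only [if_neg h]
        by_cases hA : A i j = 1
        · simp only [if_pos hA, Set.mem_setOf_eq]; exact (hsum_true ω).1 htr j hA
        · simp only [if_neg hA]; trivial
    · intro hj
      have h0 : Z i ω = 0 := by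
        have := hj i; simp only [if_pos rfl, Set.mem_setOf_eq] at this; exact this
      refine ⟨h0, (hsum_true ω).2 ?_⟩
      intro j hA1
      by_cases h : i = j
      · subst h; rw [hAdiag i] at hA1; omega
      · have := hj j; simp only [if_neg h, if_pos hA1, Set.mem_setOf_eq] at this
        exact this
  have hμSB : μ {ω | Z i ω = 0 ∧ (∑ j, Z j ω * A i j) = 0}
      = ENNReal.ofReal ((1 - p) * ((1 - p) ^ d * 1 ^ (N - 1 - d))) := by
    rw [hSBset, hμEB]
    rw [Finset.prod_congr rfl fun j _ => hEBval j]
    exact hprod_split (1 - p) 1 h1p zero_le_one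
  -- scenario C
  set EC : Fin N → Set Ω := fun j =>
    if i = j then {ω | Z i ω = 0}
      else {ω | ¬(Z j ω = 1 ∧ Atil i j ω = 1)} with hEC
  have hECi : EC i = {ω | Z i ω = 0} := by rw [hEC]; simp
  have hECj : ∀ j, i ≠ j → EC j = {ω | Z j ω = 0}
      ∨ EC j = {ω | ¬(Z j ω = 1 ∧ Atil i j ω = 1)} ∨ EC j = Set.univ := by
    intro j h
    rw [hEC]; simp [if_neg h]
  have hμEC := meas_iInter_blocks' μ f hindep hfmeas (blk i) (blk_disj i) EC
    (hdep EC hECi hECj) Finset.univ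
  have hECval : ∀ j, μ (EC j)
      = ENNReal.ofReal (if i = j then 1 - p else if A i j = 1 then 1 - (1 - β) * p
          else 1 - α * p) := by
    intro j
    by_cases h : i = j
    · subst h; rw [hEC]; simp only [if_pos rfl]; exact hZ0 i
    · rw [hEC]; simp only [if_neg h]
      have := hjoint j h
      by_cases hA : A i j = 1
      · rw [if_pos hA] at this; rw [if_pos hA]; exact this
      · rw [if_neg hA] at this; rw [if_neg hA]; exact this
  have hSCset : {ω | Z i ω = 0 ∧ (∑ j, Z j ω * Atil i j ω) = 0}
      = ⋂ j ∈ Finset.univ, EC j := by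
    ext ω
    simp only [Set.mem_iInter, Finset.mem_univ, forall_const, Set.mem_setOf_eq]
    rw [hEC]
    constructor
    · rintro ⟨h0, hobs⟩ j
      by_cases h : i = j
      · simp only [if_pos h]; exact h0
      · simp only [if_neg h, Set.mem_setOf_eq]; exact (hsum_obs ω).1 hobs j
    · intro hj
      have h0 : Z i ω = 0 := by
        have := hj i; simp only [if_pos rfl, Set.mem_setOf_eq] at this; exact this
      refine ⟨h0, (hsum_obs ω).2 ?_⟩
      intro j
      by_cases h : i = j
      · subst h; rintro ⟨-, hA1⟩; rw [hdiag i ω] at hA1; omega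
      · have := hj j; simp only [if_neg h, Set.mem_setOf_eq] at this; exact this
  have hμSC : μ {ω | Z i ω = 0 ∧ (∑ j, Z j ω * Atil i j ω) = 0}
      = ENNReal.ofReal ((1 - p)
          * ((1 - (1 - β) * p) ^ d * (1 - α * p) ^ (N - 1 - d))) := by
    rw [hSCset, hμEC]
    rw [Finset.prod_congr rfl fun j _ => hECval j]
    exact hprod_split (1 - (1 - β) * p) (1 - α * p) hbp hap
  -- measurability of the basic sets
  have h0m : MeasurableSet {ω | Z i ω = 0} := hZmeas i (measurableSet_singleton 0)
  have hobsm : MeasurableSet {ω | (∑ j, Z j ω * Atil i j ω) = 0} :=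
    hobs_meas (measurableSet_singleton 0)
  have htrm : MeasurableSet {ω | (∑ j, Z j ω * A i j) = 0} :=
    htrue_meas (measurableSet_singleton 0)
  have hmSA : MeasurableSet {ω | (Z i ω = 0 ∧ (∑ j, Z j ω * Atil i j ω) = 0)
      ∧ (Z i ω = 0 ∧ (∑ j, Z j ω * A i j) = 0)} :=
    (h0m.inter hobsm).inter (h0m.inter htrm)
  have hmSB : MeasurableSet {ω | Z i ω = 0 ∧ (∑ j, Z j ω * A i j) = 0} :=
    h0m.inter htrm
  have hmSC : MeasurableSet {ω | Z i ω = 0 ∧ (∑ j, Z j ω * Atil i j ω) = 0} :=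
    h0m.inter hobsm
  -- real inequalities
  have ha0 : (0:ℝ) ≤ (1 - p) * ((1 - p) ^ d * (1 - α * p) ^ (N - 1 - d)) := by
    positivity
  have hab : (1 - p) * ((1 - p) ^ d * (1 - α * p) ^ (N - 1 - d))
      ≤ (1 - p) * ((1 - p) ^ d * 1 ^ (N - 1 - d)) := by
    gcongr <;> nlinarith
  have hac : (1 - p) * ((1 - p) ^ d * (1 - α * p) ^ (N - 1 - d))
      ≤ (1 - p) * ((1 - (1 - β) * p) ^ d * (1 - α * p) ^ (N - 1 - d)) := by
    gcongr <;> nlinarith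
  have hc0 : (0:ℝ) ≤ (1 - p) * ((1 - (1 - β) * p) ^ d * (1 - α * p) ^ (N - 1 - d)) := by
    positivity
  -- Entry 1
  have e1 : μ {ω | (Z i ω = 0 ∧ (∑ j, Z j ω * Atil i j ω) = 0)
      ∧ (Z i ω = 0 ∧ (∑ j, Z j ω * A i j) = 0)}
      = ENNReal.ofReal ((1 - p) * (1 - p) ^ d * (1 - α * p) ^ (N - 1 - d)) := by
    rw [hμSA]; congr 1; ring
  -- Entry 2
  have e2 : μ {ω | (Z i ω = 0 ∧ 0 < ∑ j, Z j ω * Atil i j ω)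
      ∧ (Z i ω = 0 ∧ (∑ j, Z j ω * A i j) = 0)}
      = ENNReal.ofReal ((1 - p) * (1 - p) ^ d
          * (1 - (1 - α * p) ^ (N - 1 - d))) := by
    have hdiff : {ω | (Z i ω = 0 ∧ 0 < ∑ j, Z j ω * Atil i j ω)
        ∧ (Z i ω = 0 ∧ (∑ j, Z j ω * A i j) = 0)}
        = {ω | Z i ω = 0 ∧ (∑ j, Z j ω * A i j) = 0}
          \ {ω | (Z i ω = 0 ∧ (∑ j, Z j ω * Atil i j ω) = 0)
            ∧ (Z i ω = 0 ∧ (∑ j, Z j ω * A i j) = 0)} := by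
      ext ω
      simp only [Set.mem_setOf_eq, Set.mem_diff, Nat.pos_iff_ne_zero]
      tauto
    have hsub : {ω | (Z i ω = 0 ∧ (∑ j, Z j ω * Atil i j ω) = 0)
        ∧ (Z i ω = 0 ∧ (∑ j, Z j ω * A i j) = 0)}
        ⊆ {ω | Z i ω = 0 ∧ (∑ j, Z j ω * A i j) = 0} := fun ω h => h.2
    rw [hdiff, measure_diff hsub hmSA.nullMeasurableSet
        (measure_ne_top μ _), hμSB, hμSA, ← ENNReal.ofReal_sub _ ha0]
    congr 1; ring
  -- Entry 3
  have e3 : μ {ω | (Z i ω = 0 ∧ (∑ j, Z j ω * Atil i j ω) = 0)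
      ∧ (Z i ω = 0 ∧ 0 < ∑ j, Z j ω * A i j)}
      = ENNReal.ofReal ((1 - p) * (1 - α * p) ^ (N - 1 - d)
          * ((1 - (1 - β) * p) ^ d - (1 - p) ^ d)) := by
    have hdiff : {ω | (Z i ω = 0 ∧ (∑ j, Z j ω * Atil i j ω) = 0)
        ∧ (Z i ω = 0 ∧ 0 < ∑ j, Z j ω * A i j)}
        = {ω | Z i ω = 0 ∧ (∑ j, Z j ω * Atil i j ω) = 0}
          \ {ω | (Z i ω = 0 ∧ (∑ j, Z j ω * Atil i j ω) = 0)
            ∧ (Z i ω = 0 ∧ (∑ j, Z j ω * A i j) = 0)} := by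
      ext ω
      simp only [Set.mem_setOf_eq, Set.mem_diff, Nat.pos_iff_ne_zero]
      tauto
    have hsub : {ω | (Z i ω = 0 ∧ (∑ j, Z j ω * Atil i j ω) = 0)
        ∧ (Z i ω = 0 ∧ (∑ j, Z j ω * A i j) = 0)}
        ⊆ {ω | Z i ω = 0 ∧ (∑ j, Z j ω * Atil i j ω) = 0} := fun ω h => h.1
    rw [hdiff, measure_diff hsub hmSA.nullMeasurableSet
        (measure_ne_top μ _), hμSC, hμSA, ← ENNReal.ofReal_sub _ ha0]
    congr 1; ring
  -- Entry 4
  have e4 : μ {ω | (Z i ω = 0 ∧ 0 < ∑ j, Z j ω * Atil i j ω)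
      ∧ (Z i ω = 0 ∧ 0 < ∑ j, Z j ω * A i j)}
      = ENNReal.ofReal ((1 - p) * (1 - (1 - p) ^ d
          - (1 - α * p) ^ (N - 1 - d)
            * ((1 - (1 - β) * p) ^ d - (1 - p) ^ d))) := by
    have hinter : {ω | Z i ω = 0 ∧ (∑ j, Z j ω * A i j) = 0}
        ∩ {ω | Z i ω = 0 ∧ (∑ j, Z j ω * Atil i j ω) = 0}
        = {ω | (Z i ω = 0 ∧ (∑ j, Z j ω * Atil i j ω) = 0)
            ∧ (Z i ω = 0 ∧ (∑ j, Z j ω * A i j) = 0)} := by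
      ext ω
      simp only [Set.mem_inter_iff, Set.mem_setOf_eq]
      tauto
    have hUnion := measure_union_add_inter (μ := μ)
      {ω | Z i ω = 0 ∧ (∑ j, Z j ω * A i j) = 0} hmSC
    rw [hinter, hμSA, hμSB, hμSC] at hUnion
    have hbca0 : (0:ℝ) ≤ (1 - p) * ((1 - p) ^ d * 1 ^ (N - 1 - d))
        + (1 - p) * ((1 - (1 - β) * p) ^ d * (1 - α * p) ^ (N - 1 - d))
        - (1 - p) * ((1 - p) ^ d * (1 - α * p) ^ (N - 1 - d)) := by linarith
    have hcalc : ENNReal.ofReal ((1 - p) * ((1 - p) ^ d * 1 ^ (N - 1 - d))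
        + (1 - p) * ((1 - (1 - β) * p) ^ d * (1 - α * p) ^ (N - 1 - d))
        - (1 - p) * ((1 - p) ^ d * (1 - α * p) ^ (N - 1 - d)))
        + ENNReal.ofReal ((1 - p) * ((1 - p) ^ d * (1 - α * p) ^ (N - 1 - d)))
        = ENNReal.ofReal ((1 - p) * ((1 - p) ^ d * 1 ^ (N - 1 - d)))
        + ENNReal.ofReal ((1 - p)
            * ((1 - (1 - β) * p) ^ d * (1 - α * p) ^ (N - 1 - d))) := by
      rw [← ENNReal.ofReal_add hbca0 ha0, ← ENNReal.ofReal_add (by positivity) hc0]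
      congr 1; ring
    have hU : μ ({ω | Z i ω = 0 ∧ (∑ j, Z j ω * A i j) = 0}
        ∪ {ω | Z i ω = 0 ∧ (∑ j, Z j ω * Atil i j ω) = 0})
        = ENNReal.ofReal ((1 - p) * ((1 - p) ^ d * 1 ^ (N - 1 - d))
          + (1 - p) * ((1 - (1 - β) * p) ^ d * (1 - α * p) ^ (N - 1 - d))
          - (1 - p) * ((1 - p) ^ d * (1 - α * p) ^ (N - 1 - d))) :=
      (ENNReal.add_left_inj ENNReal.ofReal_ne_top).mp (hUnion.trans hcalc.symm)
    have hdiff : {ω | (Z i ω = 0 ∧ 0 < ∑ j, Z j ω * Atil i j ω)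
        ∧ (Z i ω = 0 ∧ 0 < ∑ j, Z j ω * A i j)}
        = {ω | Z i ω = 0}
          \ ({ω | Z i ω = 0 ∧ (∑ j, Z j ω * A i j) = 0}
            ∪ {ω | Z i ω = 0 ∧ (∑ j, Z j ω * Atil i j ω) = 0}) := by
      ext ω
      simp only [Set.mem_setOf_eq, Set.mem_diff, Set.mem_union, Nat.pos_iff_ne_zero]
      constructor
      · rintro ⟨⟨h0, ho⟩, ⟨-, ht⟩⟩
        exact ⟨h0, fun hmem => by rcases hmem with ⟨-, h⟩ | ⟨-, h⟩ <;> omega⟩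
      · rintro ⟨h0, hn⟩
        refine ⟨⟨h0, fun h => hn (Or.inr ⟨h0, h⟩)⟩, ⟨h0, fun h => hn (Or.inl ⟨h0, h⟩)⟩⟩
    have hsub : ({ω | Z i ω = 0 ∧ (∑ j, Z j ω * A i j) = 0}
        ∪ {ω | Z i ω = 0 ∧ (∑ j, Z j ω * Atil i j ω) = 0}) ⊆ {ω | Z i ω = 0} :=
      Set.union_subset (fun ω h => h.1) (fun ω h => h.1)
    rw [hdiff, measure_diff hsub
        (hmSB.union hmSC).nullMeasurableSet (measure_ne_top μ _),
      hZ0 i, hU, ← ENNReal.ofReal_sub _ hbca0]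
    congr 1; ring
  exact ⟨e1, e2, e3, e4, hz10 _ _, hz10 _ _, hz10 _ _, hz10 _ _,
    hz01 _ _, hz01 _ _, hz01 _ _, hz01 _ _⟩
end

section
/- Under the four-level exposure model with noisy network observation and i.i.d. Bernoulli(p) treatment, let P_i be the 4×4 expected confusion matrix of vertex i (rows indexed by observed exposure, columns by true exposure) and let ỹ_i be the 4-vector whose k-th component is I{vertex i's observed exposure is c_k} · y_i(c_l), where c_l is vertex i's true exposure. Then E[ỹ_i] = P_i y_i, where y_i = (y_i(c_{11}), y_i(c_{10}), y_i(c_{01}), y_i(c_{00}))^⊤; the determinant of P_i equals p² (1−p)² (1−p)^{2 d_i} (1−αp)^{2(N−1−d_i)} (1 − (1−(1−β)p)^{d_i})²; and if 0 < p < 1, β < 1, and 1 ≤ d_i ≤ N−1, then P_i is invertible and the method-of-moments estimator with known parameters satisfies E[P_i^{−1} ỹ_i] = P_i^{−1} E[ỹ_i] = y_i. -/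
open MeasureTheory ProbabilityTheory Filter MeasurableSpace

lemma aux_pair {Ω : Type} [MeasurableSpace Ω] {μ : Measure Ω} {N : ℕ}
    {Z : Fin N → Ω → ℕ} {Atil : Fin N → Fin N → Ω → ℕ}
    (hsymm : ∀ i j ω, Atil i j ω = Atil j i ω)
    (hindep : iIndepFun
      (Sum.elim Z (fun e : {e : Fin N × Fin N // e.1 < e.2} => Atil e.1.1 e.1.2)) μ)
    {i j : Fin N} (hij : j ≠ i) (u v : Set ℕ) :
    μ (Z j ⁻¹' u ∩ Atil i j ⁻¹' v) = μ (Z j ⁻¹' u) * μ (Atil i j ⁻¹' v) := by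
  rcases lt_or_gt_of_ne hij with h | h
  · have hfun : Atil i j = (Sum.elim Z
        (fun e : {e : Fin N × Fin N // e.1 < e.2} => Atil e.1.1 e.1.2)) (Sum.inr ⟨(j, i), h⟩) := by
      funext ω; exact hsymm i j ω
    rw [hfun]
    exact (hindep.indepFun (i := Sum.inl j) (j := Sum.inr ⟨(j, i), h⟩)
      (by simp)).measure_inter_preimage_eq_mul u v trivial trivial
  · have hfun : Atil i j = (Sum.elim Z
        (fun e : {e : Fin N × Fin N // e.1 < e.2} => Atil e.1.1 e.1.2)) (Sum.inr ⟨(i, j), h⟩) := rfl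
    rw [hfun]
    exact (hindep.indepFun (i := Sum.inl j) (j := Sum.inr ⟨(i, j), h⟩)
      (by simp)).measure_inter_preimage_eq_mul u v trivial trivial

lemma aux_indep {Ω : Type} [MeasurableSpace Ω] {μ : Measure Ω} [IsProbabilityMeasure μ] {N : ℕ}
    {Z : Fin N → Ω → ℕ} (hZmeas : ∀ i, Measurable (Z i))
    {Atil : Fin N → Fin N → Ω → ℕ} (hmeas : ∀ i j, Measurable (Atil i j))
    (hsymm : ∀ i j ω, Atil i j ω = Atil j i ω)
    (hdiag : ∀ i ω, Atil i i ω = 0)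
    (hindep : iIndepFun
      (Sum.elim Z (fun e : {e : Fin N × Fin N // e.1 < e.2} => Atil e.1.1 e.1.2)) μ)
    (i : Fin N) :
    iIndep (fun j : Fin N => generateFrom
      {S : Set Ω | ∃ u v : Set ℕ, S = Z j ⁻¹' u ∩ Atil i j ⁻¹' v}) μ := by
  classical
  refine iIndepSets.iIndep (fun j => generateFrom_le ?_) _ (fun j => ?_) (fun j => rfl) ?_
  · rintro S ⟨u, v, rfl⟩
    exact ((hZmeas j) trivial).inter ((hmeas i j) trivial)
  · rintro S1 ⟨u1, v1, rfl⟩ S2 ⟨u2, v2, rfl⟩ _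
    refine ⟨u1 ∩ u2, v1 ∩ v2, ?_⟩
    ext ω; simp only [Set.mem_inter_iff, Set.mem_preimage, Set.mem_inter_iff]; tauto
  · rw [iIndepSets_iff]
    intro s f hf
    have hch : ∀ j : Fin N, ∃ w : Set ℕ × Set ℕ,
        j ∈ s → f j = Z j ⁻¹' w.1 ∩ Atil i j ⁻¹' w.2 := by
      intro j
      by_cases hj : j ∈ s
      · obtain ⟨u, v, h⟩ := hf j hj
        exact ⟨(u, v), fun _ => h⟩
      · exact ⟨(∅, ∅), fun h => (hj h).elim⟩
    choose w hw using hch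
    by_cases hdeg : i ∈ s ∧ (0 : ℕ) ∉ (w i).2
    · have hfi : f i = ∅ := by
        rw [hw i hdeg.1]
        ext ω
        simp [Set.mem_preimage, hdiag i ω, hdeg.2]
      have h1 : μ (⋂ j ∈ s, f j) = 0 := by
        refine le_antisymm ?_ (zero_le)
        refine le_trans (measure_mono (Set.biInter_subset_of_mem hdeg.1)) (le_of_eq ?_)
        rw [hfi]; exact measure_empty
      rw [h1, eq_comm]
      refine Finset.prod_eq_zero hdeg.1 ?_
      rw [hfi]; exact measure_empty
    · have hvi : i ∈ s → (0:ℕ) ∈ (w i).2 := by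
        intro hi; by_contra hne; exact hdeg ⟨hi, hne⟩
      have hfi : i ∈ s → f i = Z i ⁻¹' (w i).1 := by
        intro hi
        rw [hw i hi]
        have h0 : Atil i i ⁻¹' (w i).2 = Set.univ := by
          ext ω; simp [Set.mem_preimage, hdiag i ω, hvi hi]
        rw [h0, Set.inter_univ]
      set X := Sum.elim Z (fun e : {e : Fin N × Fin N // e.1 < e.2} => Atil e.1.1 e.1.2) with hX
      set sets : (Fin N ⊕ {e : Fin N × Fin N // e.1 < e.2}) → Set ℕ := fun k =>
        Sum.elim (fun j => if j ∈ s then (w j).1 else Set.univ)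
          (fun e => if e.1.1 = i ∧ e.1.2 ∈ s.erase i then (w e.1.2).2
            else if e.1.2 = i ∧ e.1.1 ∈ s.erase i then (w e.1.1).2
            else Set.univ) k with hsets
    -- product formula from independence
      have hprod := hindep.measure_inter_preimage_eq_mul (sets := sets) Finset.univ
        (fun k _ => trivial)
      have hIeq : (⋂ k ∈ Finset.univ, X k ⁻¹' sets k) = ⋂ j ∈ s, f j := by
        ext ω
        simp only [Set.mem_iInter, Finset.mem_univ, forall_const, Set.mem_preimage]
        constructor
        · intro h j hj
          by_cases hji : j = i
          · subst hji
            rw [hfi hj]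
            have := h (Sum.inl j)
            simpa [hsets, hX, hj] using this
          · rw [hw j hj]
            refine ⟨by simpa [hsets, hX, hj] using h (Sum.inl j), ?_⟩
            rcases lt_or_gt_of_ne hji with hlt | hgt
            · have hthis := h (Sum.inr ⟨(j, i), hlt⟩)
              simp only [hsets, Sum.elim_inr, hX, Set.mem_preimage] at hthis ⊢
              split_ifs at hthis with hc1 hc2
              · exact absurd hc1.1 hji
              · rw [hsymm i j ω]; exact hthis
              · exact absurd ⟨by simp, Finset.mem_erase.mpr ⟨hji, hj⟩⟩ hc2
            · have hthis := h (Sum.inr ⟨(i, j), hgt⟩)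
              simp only [hsets, Sum.elim_inr, hX, Set.mem_preimage] at hthis ⊢
              split_ifs at hthis with hc1
              · exact hthis
              · exact absurd ⟨by simp, Finset.mem_erase.mpr ⟨hji, hj⟩⟩ hc1
              · exact absurd ⟨by simp, Finset.mem_erase.mpr ⟨hji, hj⟩⟩ hc1
        · intro h k
          cases k with
          | inl j =>
            by_cases hj : j ∈ s
            · have hh := h j hj
              by_cases hji : j = i
              · subst hji; rw [hfi hj] at hh; simpa [hsets, hX, hj] using hh
              · rw [hw j hj] at hh; simpa [hsets, hX, hj] using hh.1
            · simp [hsets, hj]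
          | inr e =>
            simp only [hsets, Sum.elim_inr, hX, Set.mem_preimage]
            split_ifs with hc1 hc2
            · have hj2 := h e.1.2 (Finset.mem_of_mem_erase hc1.2)
              rw [hw _ (Finset.mem_of_mem_erase hc1.2)] at hj2
              rw [hc1.1]
              exact hj2.2
            · have hj1 := h e.1.1 (Finset.mem_of_mem_erase hc2.2)
              rw [hw _ (Finset.mem_of_mem_erase hc2.2)] at hj1
              rw [hc2.1, hsymm e.1.1 i ω]
              exact hj1.2
            · trivial
      have hpair : ∀ j ∈ s, j ≠ i →
          μ (Z j ⁻¹' (w j).1 ∩ Atil i j ⁻¹' (w j).2)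
            = μ (Z j ⁻¹' (w j).1) * μ (Atil i j ⁻¹' (w j).2) :=
        fun j _ hji => aux_pair hsymm hindep hji _ _
      -- the edge map
      have hPeq : (∏ k : Fin N ⊕ {e : Fin N × Fin N // e.1 < e.2}, μ (X k ⁻¹' sets k))
          = ∏ j ∈ s, μ (f j) := by
        rw [Fintype.prod_sum_type]
        have hA : (∏ j : Fin N, μ (X (Sum.inl j) ⁻¹' sets (Sum.inl j)))
            = ∏ j ∈ s, μ (Z j ⁻¹' (w j).1) := by
          have h1 : ∀ j : Fin N, μ (X (Sum.inl j) ⁻¹' sets (Sum.inl j))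
              = if j ∈ s then μ (Z j ⁻¹' (w j).1) else 1 := by
            intro j
            by_cases hj : j ∈ s <;> simp [hsets, hX, hj, measure_univ]
          rw [Finset.prod_congr rfl (fun j _ => h1 j), Finset.prod_ite_mem, Finset.univ_inter]
        set edge : {x // x ∈ s.erase i} → {e : Fin N × Fin N // e.1 < e.2} := fun jj =>
          if hlt : i < jj.1 then ⟨(i, jj.1), hlt⟩
          else ⟨(jj.1, i), lt_of_le_of_ne (not_lt.mp hlt) (Finset.mem_erase.mp jj.2).1⟩
          with hedge
        have hB : (∏ e : {e : Fin N × Fin N // e.1 < e.2}, μ (X (Sum.inr e) ⁻¹' sets (Sum.inr e)))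
            = ∏ j ∈ s.erase i, μ (Atil i j ⁻¹' (w j).2) := by
          have hval : ∀ jj : {x // x ∈ s.erase i},
              μ (X (Sum.inr (edge jj)) ⁻¹' sets (Sum.inr (edge jj)))
                = μ (Atil i jj.1 ⁻¹' (w jj.1).2) := by
            intro jj
            obtain ⟨hne, hjs⟩ := Finset.mem_erase.mp jj.2
            by_cases hlt : i < jj.1
            · simp only [hedge, dif_pos hlt, hsets, hX, Sum.elim_inr]
              rw [if_pos ⟨trivial, jj.2⟩]
            · simp only [hedge, dif_neg hlt, hsets, hX, Sum.elim_inr]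
              rw [if_neg (fun hc => hne hc.1), if_pos ⟨trivial, jj.2⟩,
                show Atil jj.1 i = Atil i jj.1 from funext (fun ω => hsymm jj.1 i ω)]
          have hsub : ∀ e : {e : Fin N × Fin N // e.1 < e.2},
              e ∉ (s.erase i).attach.image edge
                → μ (X (Sum.inr e) ⁻¹' sets (Sum.inr e)) = 1 := by
            intro e he
            have hcond1 : ¬(e.1.1 = i ∧ e.1.2 ∈ s.erase i) := by
              rintro ⟨h1, h2⟩
              refine he (Finset.mem_image.mpr ⟨⟨e.1.2, h2⟩, Finset.mem_attach _ _, ?_⟩)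
              have hlt : i < e.1.2 := h1 ▸ e.2
              simp only [hedge, dif_pos hlt]
              exact Subtype.ext (Prod.ext h1.symm rfl)
            have hcond2 : ¬(e.1.2 = i ∧ e.1.1 ∈ s.erase i) := by
              rintro ⟨h1, h2⟩
              refine he (Finset.mem_image.mpr ⟨⟨e.1.1, h2⟩, Finset.mem_attach _ _, ?_⟩)
              have hlt : ¬ i < e.1.1 := by
                have h3 := e.2; rw [h1] at h3; exact not_lt.mpr (le_of_lt h3)
              simp only [hedge, dif_neg hlt]
              exact Subtype.ext (Prod.ext rfl h1.symm)
            simp only [hsets, hX, Sum.elim_inr]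
            rw [if_neg hcond1, if_neg hcond2, Set.preimage_univ, measure_univ]
          have hinj : ∀ a ∈ (s.erase i).attach, ∀ b ∈ (s.erase i).attach,
              edge a = edge b → a = b := by
            intro a _ b _ hab
            obtain ⟨hnea, _⟩ := Finset.mem_erase.mp a.2
            obtain ⟨hneb, _⟩ := Finset.mem_erase.mp b.2
            apply Subtype.ext
            by_cases ha : i < a.1 <;> by_cases hb : i < b.1
            · simp only [hedge, dif_pos ha, dif_pos hb, Subtype.mk.injEq, Prod.mk.injEq] at hab
              exact hab.2
            · simp only [hedge, dif_pos ha, dif_neg hb, Subtype.mk.injEq, Prod.mk.injEq] at hab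
              exact absurd hab.1.symm hneb
            · simp only [hedge, dif_neg ha, dif_pos hb, Subtype.mk.injEq, Prod.mk.injEq] at hab
              exact absurd hab.1 hnea
            · simp only [hedge, dif_neg ha, dif_neg hb, Subtype.mk.injEq, Prod.mk.injEq] at hab
              exact hab.1
          calc (∏ e : {e : Fin N × Fin N // e.1 < e.2}, μ (X (Sum.inr e) ⁻¹' sets (Sum.inr e)))
              = ∏ e ∈ (s.erase i).attach.image edge, μ (X (Sum.inr e) ⁻¹' sets (Sum.inr e)) :=
                (Finset.prod_subset (Finset.subset_univ _) (fun e _ he => hsub e he)).symm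
            _ = ∏ jj ∈ (s.erase i).attach, μ (X (Sum.inr (edge jj)) ⁻¹' sets (Sum.inr (edge jj))) :=
                Finset.prod_image hinj
            _ = ∏ jj ∈ (s.erase i).attach, μ (Atil i jj.1 ⁻¹' (w jj.1).2) :=
                Finset.prod_congr rfl (fun jj _ => hval jj)
            _ = ∏ j ∈ s.erase i, μ (Atil i j ⁻¹' (w j).2) := Finset.prod_attach (s.erase i) (fun j => μ (Atil i j ⁻¹' (w j).2))
        rw [hA, hB]
        have hsplit2 : ∀ j ∈ s, μ (f j)
            = μ (Z j ⁻¹' (w j).1) * (if j = i then 1 else μ (Atil i j ⁻¹' (w j).2)) := by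
          intro j hj
          by_cases hji : j = i
          · subst hji; rw [hfi hj, if_pos rfl, mul_one]
          · rw [hw j hj, if_neg hji, hpair j hj hji]
        rw [Finset.prod_congr rfl hsplit2, Finset.prod_mul_distrib]
        congr 1
        by_cases his : i ∈ s
        · rw [← Finset.prod_erase s
            (f := fun j => if j = i then (1:ENNReal) else μ (Atil i j ⁻¹' (w j).2)) (if_pos rfl)]
          exact (Finset.prod_congr rfl (fun j hj => (if_neg (Finset.mem_erase.mp hj).1))).symm
        · rw [Finset.erase_eq_of_notMem his]
          exact (Finset.prod_congr rfl (fun j hj => (if_neg (fun h => his (by rw [← h]; exact hj))))).symm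
      rw [← hIeq]
      rw [show μ (⋂ k ∈ Finset.univ, X k ⁻¹' sets k)
        = ∏ k : Fin N ⊕ {e : Fin N × Fin N // e.1 < e.2}, μ (X k ⁻¹' sets k) from hprod, hPeq]
lemma det4 (M : Matrix (Fin 4) (Fin 4) ℝ)
    (h02 : M 0 2 = 0) (h03 : M 0 3 = 0) (h12 : M 1 2 = 0) (h13 : M 1 3 = 0)
    (h20 : M 2 0 = 0) (h21 : M 2 1 = 0) (h30 : M 3 0 = 0) (h31 : M 3 1 = 0) :
    M.det = (M 0 0 * M 1 1 - M 0 1 * M 1 0) * (M 2 2 * M 3 3 - M 2 3 * M 3 2) := by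
  have a1 : (Fin.succ 2 : Fin 4) = 3 := rfl
  have a2 : (Fin.castSucc 2 : Fin 4) = 2 := rfl
  have a3 : (Fin.succAbove (1 : Fin 4) 2 : Fin 4) = 3 := rfl
  simp [Matrix.det_succ_row_zero, Fin.sum_univ_succ, a1, a2, a3,
    h02, h03, h12, h13, h20, h21, h30, h31]
  ring

/-- With `P i` the 4×4 expected confusion matrix of vertex `i`
(rows: observed exposure, columns: true exposure, in the order c_11, c_10, c_01, c_00)
and `ytil i ω` the vector whose k-th component is the indicator of observed exposure
`c_k` times the potential outcome at the true exposure, one has `E[ỹ_i] = P_i y_i`,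
the stated determinant formula, and (when `0 < p < 1`, `β < 1` and `1 ≤ d_i ≤ N−1`)
invertibility of `P_i` and unbiasedness `E[P_i⁻¹ ỹ_i] = P_i⁻¹ E[ỹ_i] = y_i` of the
method-of-moments estimator with known parameters. -/
theorem mme_known_parameters_unbiased
    {Ω : Type} [MeasurableSpace Ω] (μ : Measure Ω) [IsProbabilityMeasure μ]
    (N : ℕ)
    (A : Fin N → Fin N → ℕ)
    (hAsymm : ∀ i j, A i j = A j i)
    (hAdiag : ∀ i, A i i = 0)
    (hA01 : ∀ i j, A i j = 0 ∨ A i j = 1)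
    (α β p : ℝ) (hα0 : 0 ≤ α) (hα1 : α ≤ 1) (hβ0 : 0 ≤ β) (hβ1 : β ≤ 1)
    (hp0 : 0 ≤ p) (hp1 : p ≤ 1)
    (Z : Fin N → Ω → ℕ)
    (hZmeas : ∀ i, Measurable (Z i))
    (hZ01 : ∀ i ω, Z i ω = 0 ∨ Z i ω = 1)
    (hZp : ∀ i, μ {ω | Z i ω = 1} = ENNReal.ofReal p)
    (Atil : Fin N → Fin N → Ω → ℕ)
    (hmeas : ∀ i j, Measurable (Atil i j))
    (hsymm : ∀ i j ω, Atil i j ω = Atil j i ω)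
    (hdiag : ∀ i ω, Atil i i ω = 0)
    (h01 : ∀ i j ω, Atil i j ω = 0 ∨ Atil i j ω = 1)
    (hfalse : ∀ i j : Fin N, i < j → A i j = 0 →
      μ {ω | Atil i j ω = 1} = ENNReal.ofReal α)
    (htrue : ∀ i j : Fin N, i < j → A i j = 1 →
      μ {ω | Atil i j ω = 1} = ENNReal.ofReal (1 - β))
    (hindep : iIndepFun
      (Sum.elim Z (fun e : {e : Fin N × Fin N // e.1 < e.2} => Atil e.1.1 e.1.2)) μ)
    -- observed and true exposure levels (0 ↦ c_11, 1 ↦ c_10, 2 ↦ c_01, 3 ↦ c_00)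
    (obs tru : Fin N → Ω → Fin 4)
    (hobs : ∀ i ω, obs i ω =
      if Z i ω = 1 then (if 0 < ∑ j, Z j ω * Atil i j ω then 0 else 1)
      else (if 0 < ∑ j, Z j ω * Atil i j ω then 2 else 3))
    (htru : ∀ i ω, tru i ω =
      if Z i ω = 1 then (if 0 < ∑ j, Z j ω * A i j then 0 else 1)
      else (if 0 < ∑ j, Z j ω * A i j then 2 else 3))
    -- fixed potential outcomes
    (y : Fin N → Fin 4 → ℝ)
    -- the observed-outcome vector ỹ_i
    (ytil : Fin N → Ω → Fin 4 → ℝ)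
    (hytil : ∀ i ω k, ytil i ω k = (if obs i ω = k then 1 else 0) * y i (tru i ω))
    -- the expected confusion matrix P_i
    (P : Fin N → Matrix (Fin 4) (Fin 4) ℝ)
    (hP : ∀ i k l, P i k l = (μ {ω | obs i ω = k ∧ tru i ω = l}).toReal) :
    ∀ i : Fin N,
      -- E[ỹ_i] = P_i y_i
      (∀ k, ∫ ω, ytil i ω k ∂μ = (P i).mulVec (y i) k) ∧
      -- determinant formula
      ((P i).det = p ^ 2 * (1 - p) ^ 2 * (1 - p) ^ (2 * ∑ j, A i j)
          * (1 - α * p) ^ (2 * (N - 1 - ∑ j, A i j))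
          * (1 - (1 - (1 - β) * p) ^ (∑ j, A i j)) ^ 2) ∧
      -- invertibility and unbiasedness of the MME with known parameters
      (0 < p → p < 1 → β < 1 → 1 ≤ ∑ j, A i j → (∑ j, A i j) ≤ N - 1 →
        IsUnit (P i).det ∧
        (∀ k, ∫ ω, (P i)⁻¹.mulVec (ytil i ω) k ∂μ
            = (P i)⁻¹.mulVec (fun l => ∫ ω, ytil i ω l ∂μ) k) ∧
        (∀ k, ∫ ω, (P i)⁻¹.mulVec (ytil i ω) k ∂μ = y i k)) := by

  intro i
  classical
  set d := ∑ j, A i j with hdd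
  set T1 : Set Ω := Z i ⁻¹' {1} with hT1d
  set Ht : Set Ω := {ω | 0 < ∑ j, Z j ω * Atil i j ω} with hHtd
  set H : Set Ω := {ω | 0 < ∑ j, Z j ω * A i j} with hHd
  have h1p : (0:ℝ) ≤ 1 - p := by linarith
  have hap1 : α * p ≤ 1 := mul_le_one₀ hα1 hp0 hp1
  have hap0 : (0:ℝ) ≤ 1 - α * p := by linarith
  have hbp1 : (1 - β) * p ≤ 1 := mul_le_one₀ (by linarith) hp0 hp1
  have hbp0 : (0:ℝ) ≤ 1 - (1 - β) * p := by linarith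
  have hmT1 : MeasurableSet T1 := (hZmeas i) trivial
  have hmHt : MeasurableSet Ht := by
    have hsum : Measurable fun ω => ∑ j, Z j ω * Atil i j ω :=
      Finset.measurable_sum _ (fun j _ => (hZmeas j).mul (hmeas i j))
    exact hsum (trivial : MeasurableSet {n : ℕ | 0 < n})
  have hmH : MeasurableSet H := by
    have hsum : Measurable fun ω => ∑ j, Z j ω * A i j :=
      Finset.measurable_sum _ (fun j _ => (hZmeas j).mul measurable_const)
    exact hsum (trivial : MeasurableSet {n : ℕ | 0 < n})
  set RowS : Fin 4 → Set Ω := fun k =>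
    if k = 0 then T1 ∩ Ht else if k = 1 then T1 ∩ Htᶜ
    else if k = 2 then T1ᶜ ∩ Ht else T1ᶜ ∩ Htᶜ with hRowS
  set ColS : Fin 4 → Set Ω := fun l =>
    if l = 0 then T1 ∩ H else if l = 1 then T1 ∩ Hᶜ
    else if l = 2 then T1ᶜ ∩ H else T1ᶜ ∩ Hᶜ with hColS
  have hrowmem : ∀ k ω, obs i ω = k ↔ ω ∈ RowS k := by
    intro k ω
    rw [hobs i ω, hRowS]
    by_cases h1 : Z i ω = 1 <;> by_cases h2 : 0 < ∑ j, Z j ω * Atil i j ω <;>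
      fin_cases k <;>
      simp [h1, h2, hT1d, hHtd, Set.mem_inter_iff, Set.mem_compl_iff, Set.mem_preimage,
        Set.mem_setOf_eq]
  have hcolmem : ∀ l ω, tru i ω = l ↔ ω ∈ ColS l := by
    intro l ω
    rw [htru i ω, hColS]
    by_cases h1 : Z i ω = 1 <;> by_cases h2 : 0 < ∑ j, Z j ω * A i j <;>
      fin_cases l <;>
      simp [h1, h2, hT1d, hHd, Set.mem_inter_iff, Set.mem_compl_iff, Set.mem_preimage,
        Set.mem_setOf_eq]
  have hsetEq : ∀ k l, {ω | obs i ω = k ∧ tru i ω = l} = RowS k ∩ ColS l := by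
    intro k l; ext ω
    simp only [Set.mem_setOf_eq, Set.mem_inter_iff, hrowmem k ω, hcolmem l ω]
  have hmRow : ∀ k, MeasurableSet (RowS k) := by
    intro k; rw [hRowS]
    dsimp only
    split_ifs
    exacts [hmT1.inter hmHt, hmT1.inter hmHt.compl, hmT1.compl.inter hmHt,
      hmT1.compl.inter hmHt.compl]
  have hmCol : ∀ l, MeasurableSet (ColS l) := by
    intro l; rw [hColS]
    dsimp only
    split_ifs
    exacts [hmT1.inter hmH, hmT1.inter hmH.compl, hmT1.compl.inter hmH,
      hmT1.compl.inter hmH.compl]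
  have hmE : ∀ k l, MeasurableSet {ω | obs i ω = k ∧ tru i ω = l} := by
    intro k l; rw [hsetEq]; exact (hmRow k).inter (hmCol l)
  -- part 1 : expectation identity
  have hyrep : ∀ k ω, ytil i ω k
      = ∑ l : Fin 4, Set.indicator {ω' | obs i ω' = k ∧ tru i ω' = l} (fun _ => y i l) ω := by
    intro k ω
    rw [hytil]
    by_cases hk : obs i ω = k
    · rw [if_pos hk, one_mul, Finset.sum_eq_single (tru i ω)]
      · have hmem : ω ∈ {ω' | obs i ω' = k ∧ tru i ω' = tru i ω} := ⟨hk, rfl⟩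
        rw [Set.indicator_of_mem hmem]
      · intro l _ hl
        exact Set.indicator_of_notMem (fun hc => hl hc.2.symm) _
      · intro h; exact absurd (Finset.mem_univ _) h
    · rw [if_neg hk, zero_mul, eq_comm]
      exact Finset.sum_eq_zero (fun l _ => Set.indicator_of_notMem (fun hc => hk hc.1) _)
  have hIntEach : ∀ k, Integrable (fun ω => ytil i ω k) μ := by
    intro k
    rw [show (fun ω => ytil i ω k) = fun ω => ∑ l : Fin 4,
      Set.indicator {ω' | obs i ω' = k ∧ tru i ω' = l} (fun _ => y i l) ω
      from funext (fun ω => hyrep k ω)]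
    exact integrable_finset_sum _ (fun l _ => (integrable_const _).indicator (hmE k l))
  have part1 : ∀ k, ∫ ω, ytil i ω k ∂μ = (P i).mulVec (y i) k := by
    intro k
    have h1 : ∫ ω, ytil i ω k ∂μ = ∑ l : Fin 4, P i k l * y i l := by
      simp only [hyrep k]
      rw [integral_finset_sum _ (fun l _ => (integrable_const _).indicator (hmE k l))]
      refine Finset.sum_congr rfl (fun l _ => ?_)
      rw [integral_indicator_const _ (hmE k l), hP i k l, smul_eq_mul, measureReal_def]
    rw [h1]
    simp [Matrix.mulVec, dotProduct]
  -- grouped independence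
  have hInd := aux_indep hZmeas hmeas hsymm hdiag hindep i
  have hCgen : ∀ (u₀ : Set ℕ) (B : Fin N → Set Ω),
      (∀ j, MeasurableSet[MeasurableSpace.generateFrom
        {S : Set Ω | ∃ u v : Set ℕ, S = Z j ⁻¹' u ∩ Atil i j ⁻¹' v}] (B j)) →
      B i = Set.univ →
      μ (Z i ⁻¹' u₀ ∩ ⋂ j, B j)
        = μ (Z i ⁻¹' u₀) * ∏ j ∈ Finset.univ.erase i, μ (B j) := by
    intro u₀ B hB hBi
    have hmeasD : ∀ j, MeasurableSet[MeasurableSpace.generateFrom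
        {S : Set Ω | ∃ u v : Set ℕ, S = Z j ⁻¹' u ∩ Atil i j ⁻¹' v}]
        ((fun j' => if j' = i then Z i ⁻¹' u₀ else B j') j) := by
      intro j
      dsimp only
      by_cases hj : j = i
      · subst hj
        rw [if_pos rfl]
        exact measurableSet_generateFrom ⟨u₀, Set.univ, by simp⟩
      · rw [if_neg hj]; exact hB j
    have h2 := hInd.meas_iInter hmeasD
    have h1 : (⋂ j, if j = i then Z i ⁻¹' u₀ else B j) = Z i ⁻¹' u₀ ∩ ⋂ j, B j := by
      ext ω
      simp only [Set.mem_iInter, Set.mem_inter_iff]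
      constructor
      · intro h
        refine ⟨by simpa using h i, fun j => ?_⟩
        by_cases hj : j = i
        · subst hj; rw [hBi]; trivial
        · simpa [hj] using h j
      · rintro ⟨h0, h⟩ j
        by_cases hj : j = i
        · subst hj; simpa using h0
        · simpa [hj] using h j
    rw [h1] at h2
    rw [h2, ← Finset.mul_prod_erase Finset.univ _ (Finset.mem_univ i), if_pos rfl]
    congr 1
    exact Finset.prod_congr rfl (fun j hj => by rw [if_neg (Finset.mem_erase.mp hj).1])
  -- counting neighbours
  have hderase : d = ∑ j ∈ Finset.univ.erase i, A i j := by
    rw [hdd]; exact (Finset.sum_erase _ (hAdiag i)).symm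
  have hcard1 : ((Finset.univ.erase i).filter (fun j => A i j = 1)).card = d := by
    rw [Finset.card_filter, hderase]
    refine Finset.sum_congr rfl (fun j _ => ?_)
    rcases hA01 i j with h0 | h0 <;> simp [h0]
  have hcard0 : ((Finset.univ.erase i).filter (fun j => ¬ A i j = 1)).card = N - 1 - d := by
    have hsum := Finset.card_filter_add_card_filter_not
      (s := Finset.univ.erase i) (p := fun j => A i j = 1)
    have hce : (Finset.univ.erase i).card = N - 1 := by
      rw [Finset.card_erase_of_mem (Finset.mem_univ i), Finset.card_univ, Fintype.card_fin]
    rw [hcard1, hce] at hsum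
    omega
  have hcount : ∀ (a b : ENNReal),
      (∏ j ∈ Finset.univ.erase i, (if A i j = 1 then a else b)) = a ^ d * b ^ (N - 1 - d) := by
    intro a b
    rw [Finset.prod_ite, Finset.prod_const, Finset.prod_const, hcard1, hcard0]
  -- per-vertex / per-edge measures
  have hZ1pre : ∀ j : Fin N, μ (Z j ⁻¹' {1}) = ENNReal.ofReal p := by
    intro j
    rw [show Z j ⁻¹' {1} = {ω | Z j ω = 1} from by ext ω; simp]
    exact hZp j
  have hZ0pre : ∀ j : Fin N, μ {ω | Z j ω = 0} = ENNReal.ofReal (1 - p) := by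
    intro j
    have hs0 : {ω | Z j ω = 0} = (Z j ⁻¹' {1})ᶜ := by
      ext ω; rcases hZ01 j ω with h | h <;> simp [h]
    rw [hs0, prob_compl_eq_one_sub ((hZmeas j) trivial), hZ1pre j, ← ENNReal.ofReal_one,
      ← ENNReal.ofReal_sub _ hp0]
  have hAt1 : ∀ j : Fin N, j ≠ i → μ (Atil i j ⁻¹' {1})
      = ENNReal.ofReal (if A i j = 1 then 1 - β else α) := by
    intro j hji
    have hsetA : ∀ a b : Fin N, Atil a b ⁻¹' {1} = {ω | Atil a b ω = 1} := by
      intro a b; ext ω; simp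
    rcases lt_or_gt_of_ne hji with hlt | hgt
    · rw [show Atil i j = Atil j i from funext (fun ω => hsymm i j ω), hsetA]
      rcases hA01 i j with h0 | h1
      · rw [if_neg (by simp [h0]), hfalse j i hlt (by rw [hAsymm j i]; exact h0)]
      · rw [if_pos h1, htrue j i hlt (by rw [hAsymm j i]; exact h1)]
    · rw [hsetA]
      rcases hA01 i j with h0 | h1
      · rw [if_neg (by simp [h0]), hfalse i j hgt h0]
      · rw [if_pos h1, htrue i j hgt h1]
  have hq0 : ∀ j, (0:ℝ) ≤ (if A i j = 1 then 1 - β else α) := by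
    intro j; split_ifs
    · linarith
    · exact hα0
  have hsetm : ∀ j : Fin N, {ω | Z j ω * Atil i j ω = 0}
      = (Z j ⁻¹' {1} ∩ Atil i j ⁻¹' {1})ᶜ := by
    intro j
    ext ω
    rcases hZ01 j ω with h | h <;> rcases h01 i j ω with h' | h' <;> simp [h, h']
  have hmulpre : ∀ j : Fin N, j ≠ i → μ {ω | Z j ω * Atil i j ω = 0}
      = ENNReal.ofReal (1 - (if A i j = 1 then 1 - β else α) * p) := by
    intro j hji
    rw [hsetm j, prob_compl_eq_one_sub (((hZmeas j) trivial).inter ((hmeas i j) trivial)),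
      aux_pair hsymm hindep hji, hZ1pre j, hAt1 j hji,
      ← ENNReal.ofReal_mul hp0, ← ENNReal.ofReal_one,
      ← ENNReal.ofReal_sub _ (mul_nonneg hp0 (hq0 j))]
    rw [mul_comm p]
  -- measurability of building blocks in the generated σ-algebras
  have hgen0 : ∀ j : Fin N, MeasurableSet[MeasurableSpace.generateFrom
      {S : Set Ω | ∃ u v : Set ℕ, S = Z j ⁻¹' u ∩ Atil i j ⁻¹' v}] {ω | Z j ω = 0} := by
    intro j
    have hmem : {ω | Z j ω = 0} ∈ {S : Set Ω | ∃ u v : Set ℕ, S = Z j ⁻¹' u ∩ Atil i j ⁻¹' v} :=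
      ⟨{0}, Set.univ, by ext ω; simp⟩
    exact measurableSet_generateFrom hmem
  have hgenm : ∀ j : Fin N, MeasurableSet[MeasurableSpace.generateFrom
      {S : Set Ω | ∃ u v : Set ℕ, S = Z j ⁻¹' u ∩ Atil i j ⁻¹' v}]
      {ω | Z j ω * Atil i j ω = 0} := by
    intro j
    rw [hsetm j]
    have hmem : (Z j ⁻¹' {1} ∩ Atil i j ⁻¹' {1})
        ∈ {S : Set Ω | ∃ u v : Set ℕ, S = Z j ⁻¹' u ∩ Atil i j ⁻¹' v} := ⟨{1}, {1}, rfl⟩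
    exact (measurableSet_generateFrom hmem).compl
  -- C2 : treatment-only neighbourhood event
  have hC2 : ∀ u₀ : Set ℕ, μ (Z i ⁻¹' u₀ ∩ Hᶜ)
      = μ (Z i ⁻¹' u₀) * ENNReal.ofReal ((1 - p) ^ d) := by
    intro u₀
    set B2 : Fin N → Set Ω := fun j =>
      if j = i then Set.univ else {ω | Z j ω * A i j = 0} with hB2
    have hB2m : ∀ j, MeasurableSet[MeasurableSpace.generateFrom
        {S : Set Ω | ∃ u v : Set ℕ, S = Z j ⁻¹' u ∩ Atil i j ⁻¹' v}] (B2 j) := by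
      intro j
      rw [hB2]; dsimp only
      by_cases hj : j = i
      · rw [if_pos hj]; exact MeasurableSet.univ
      · rw [if_neg hj]
        rcases hA01 i j with h0 | h1
        · rw [show {ω | Z j ω * A i j = 0} = Set.univ from by ext ω; simp [h0]]
          exact MeasurableSet.univ
        · rw [show {ω | Z j ω * A i j = 0} = {ω | Z j ω = 0} from by ext ω; simp [h1]]
          exact hgen0 j
    have hB2I : (⋂ j, B2 j) = Hᶜ := by
      ext ω
      simp only [Set.mem_iInter, Set.mem_compl_iff, hHd, Set.mem_setOf_eq, not_lt, Nat.le_zero,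
        hB2, Finset.sum_eq_zero_iff, Finset.mem_univ, forall_true_left]
      constructor
      · intro h j
        by_cases hj : j = i
        · rw [hj, hAdiag i, mul_zero]
        · have hh := h j; rw [if_neg hj] at hh; exact hh
      · intro h j
        by_cases hj : j = i
        · rw [if_pos hj]; trivial
        · rw [if_neg hj]; exact h j
    rw [← hB2I, hCgen u₀ B2 hB2m (by rw [hB2]; dsimp only; rw [if_pos rfl])]
    congr 1
    have hval : ∀ j ∈ Finset.univ.erase i,
        μ (B2 j) = (if A i j = 1 then ENNReal.ofReal (1 - p) else 1) := by
      intro j hj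
      have hji := (Finset.mem_erase.mp hj).1
      rw [hB2]; dsimp only; rw [if_neg hji]
      rcases hA01 i j with h0 | h1
      · rw [if_neg (by simp [h0]),
          show {ω | Z j ω * A i j = 0} = Set.univ from by ext ω; simp [h0], measure_univ]
      · rw [if_pos h1,
          show {ω | Z j ω * A i j = 0} = {ω | Z j ω = 0} from by ext ω; simp [h1], hZ0pre j]
    rw [Finset.prod_congr rfl hval, hcount, one_pow, mul_one, ← ENNReal.ofReal_pow h1p]
  -- C3 : observed neighbourhood event
  have hC3 : ∀ u₀ : Set ℕ, μ (Z i ⁻¹' u₀ ∩ Htᶜ)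
      = μ (Z i ⁻¹' u₀)
        * ENNReal.ofReal ((1 - (1 - β) * p) ^ d * (1 - α * p) ^ (N - 1 - d)) := by
    intro u₀
    set B3 : Fin N → Set Ω := fun j =>
      if j = i then Set.univ else {ω | Z j ω * Atil i j ω = 0} with hB3
    have hB3m : ∀ j, MeasurableSet[MeasurableSpace.generateFrom
        {S : Set Ω | ∃ u v : Set ℕ, S = Z j ⁻¹' u ∩ Atil i j ⁻¹' v}] (B3 j) := by
      intro j
      rw [hB3]; dsimp only
      by_cases hj : j = i
      · rw [if_pos hj]; exact MeasurableSet.univ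
      · rw [if_neg hj]; exact hgenm j
    have hB3I : (⋂ j, B3 j) = Htᶜ := by
      ext ω
      simp only [Set.mem_iInter, Set.mem_compl_iff, hHtd, Set.mem_setOf_eq, not_lt, Nat.le_zero,
        hB3, Finset.sum_eq_zero_iff, Finset.mem_univ, forall_true_left]
      constructor
      · intro h j
        by_cases hj : j = i
        · rw [hj, hdiag i ω, mul_zero]
        · have hh := h j; rw [if_neg hj] at hh; exact hh
      · intro h j
        by_cases hj : j = i
        · rw [if_pos hj]; trivial
        · rw [if_neg hj]; exact h j
    rw [← hB3I, hCgen u₀ B3 hB3m (by rw [hB3]; dsimp only; rw [if_pos rfl])]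
    congr 1
    have hval : ∀ j ∈ Finset.univ.erase i, μ (B3 j)
        = (if A i j = 1 then ENNReal.ofReal (1 - (1 - β) * p)
            else ENNReal.ofReal (1 - α * p)) := by
      intro j hj
      have hji := (Finset.mem_erase.mp hj).1
      rw [hB3]; dsimp only; rw [if_neg hji, hmulpre j hji]
      rcases hA01 i j with h0 | h1
      · rw [if_neg (by simp [h0]), if_neg (by simp [h0])]
      · rw [if_pos h1, if_pos h1]
    rw [Finset.prod_congr rfl hval, hcount, ← ENNReal.ofReal_pow hbp0,
      ← ENNReal.ofReal_pow hap0, ← ENNReal.ofReal_mul (pow_nonneg hbp0 _)]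
  -- C4 : joint event
  have hC4 : ∀ u₀ : Set ℕ, μ (Z i ⁻¹' u₀ ∩ (Htᶜ ∩ Hᶜ))
      = μ (Z i ⁻¹' u₀)
        * ENNReal.ofReal ((1 - p) ^ d * (1 - α * p) ^ (N - 1 - d)) := by
    intro u₀
    set B4 : Fin N → Set Ω := fun j =>
      if j = i then Set.univ else {ω | Z j ω * Atil i j ω = 0 ∧ Z j ω * A i j = 0} with hB4
    have hB4eq : ∀ j : Fin N, {ω | Z j ω * Atil i j ω = 0 ∧ Z j ω * A i j = 0}
        = (if A i j = 1 then {ω | Z j ω = 0} else {ω | Z j ω * Atil i j ω = 0}) := by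
      intro j
      rcases hA01 i j with h0 | h1
      · rw [if_neg (by simp [h0])]
        ext ω; simp [h0]
      · rw [if_pos h1]
        ext ω
        simp only [Set.mem_setOf_eq, h1, mul_one]
        exact ⟨fun h => h.2, fun h => ⟨by rw [h, zero_mul], h⟩⟩
    have hB4m : ∀ j, MeasurableSet[MeasurableSpace.generateFrom
        {S : Set Ω | ∃ u v : Set ℕ, S = Z j ⁻¹' u ∩ Atil i j ⁻¹' v}] (B4 j) := by
      intro j
      rw [hB4]; dsimp only
      by_cases hj : j = i
      · rw [if_pos hj]; exact MeasurableSet.univ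
      · rw [if_neg hj, hB4eq j]
        rcases hA01 i j with h0 | h1
        · rw [if_neg (by simp [h0])]; exact hgenm j
        · rw [if_pos h1]; exact hgen0 j
    have hB4I : (⋂ j, B4 j) = Htᶜ ∩ Hᶜ := by
      ext ω
      simp only [Set.mem_iInter, Set.mem_inter_iff, Set.mem_compl_iff, hHtd, hHd,
        Set.mem_setOf_eq, not_lt, Nat.le_zero, hB4, Finset.sum_eq_zero_iff, Finset.mem_univ,
        forall_true_left]
      constructor
      · intro h
        constructor
        · intro j
          by_cases hj : j = i
          · rw [hj, hdiag i ω, mul_zero]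
          · have hh := h j; rw [if_neg hj] at hh; exact hh.1
        · intro j
          by_cases hj : j = i
          · rw [hj, hAdiag i, mul_zero]
          · have hh := h j; rw [if_neg hj] at hh; exact hh.2
      · rintro ⟨ht, hh⟩ j
        by_cases hj : j = i
        · rw [if_pos hj]; trivial
        · rw [if_neg hj]
          exact ⟨ht j, hh j⟩
    rw [← hB4I, hCgen u₀ B4 hB4m (by rw [hB4]; dsimp only; rw [if_pos rfl])]
    congr 1
    have hval : ∀ j ∈ Finset.univ.erase i, μ (B4 j)
        = (if A i j = 1 then ENNReal.ofReal (1 - p) else ENNReal.ofReal (1 - α * p)) := by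
      intro j hj
      have hji := (Finset.mem_erase.mp hj).1
      rw [hB4]; dsimp only; rw [if_neg hji, hB4eq j]
      rcases hA01 i j with h0 | h1
      · rw [if_neg (by simp [h0]), if_neg (by simp [h0]), hmulpre j hji, if_neg (by simp [h0])]
      · rw [if_pos h1, if_pos h1, hZ0pre j]
    rw [Finset.prod_congr rfl hval, hcount, ← ENNReal.ofReal_pow h1p,
      ← ENNReal.ofReal_pow hap0, ← ENNReal.ofReal_mul (pow_nonneg h1p _)]
  -- real-valued versions
  have hμT1 : μ T1 = ENNReal.ofReal p := by rw [hT1d]; exact hZ1pre i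
  have hT0pre : Z i ⁻¹' ({1}ᶜ : Set ℕ) = T1ᶜ := by rw [Set.preimage_compl, hT1d]
  have hμT0 : μ (Z i ⁻¹' ({1}ᶜ : Set ℕ)) = ENNReal.ofReal (1 - p) := by
    rw [hT0pre, prob_compl_eq_one_sub hmT1, hμT1, ← ENNReal.ofReal_one,
      ← ENNReal.ofReal_sub _ hp0]
  have hsplitm : ∀ (s t : Set Ω), MeasurableSet t →
      (μ (s ∩ t)).toReal + (μ (s ∩ tᶜ)).toReal = (μ s).toReal := by
    intro s t ht
    rw [← ENNReal.toReal_add (measure_ne_top μ _) (measure_ne_top μ _)]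
    congr 1
    rw [show s ∩ tᶜ = s \ t from (Set.diff_eq s t).symm]
    exact measure_inter_add_diff s ht
  have key : ∀ (u₀ : Set ℕ) (wz : ℝ), 0 ≤ wz → μ (Z i ⁻¹' u₀) = ENNReal.ofReal wz →
      (μ (Z i ⁻¹' u₀ ∩ (Ht ∩ H))).toReal
          = wz * (1 - (1-p)^d - (1-(1-β)*p)^d * (1-α*p)^(N-1-d)
              + (1-p)^d * (1-α*p)^(N-1-d))
      ∧ (μ (Z i ⁻¹' u₀ ∩ (Ht ∩ Hᶜ))).toReal
          = wz * ((1-p)^d - (1-p)^d * (1-α*p)^(N-1-d))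
      ∧ (μ (Z i ⁻¹' u₀ ∩ (Htᶜ ∩ H))).toReal
          = wz * ((1-(1-β)*p)^d * (1-α*p)^(N-1-d) - (1-p)^d * (1-α*p)^(N-1-d))
      ∧ (μ (Z i ⁻¹' u₀ ∩ (Htᶜ ∩ Hᶜ))).toReal
          = wz * ((1-p)^d * (1-α*p)^(N-1-d)) := by
    intro u₀ wz hw0 hμw
    have toR : ∀ x : ℝ, 0 ≤ x → (μ (Z i ⁻¹' u₀) * ENNReal.ofReal x).toReal = wz * x := by
      intro x hx
      rw [hμw, ← ENNReal.ofReal_mul hw0, ENNReal.toReal_ofReal (mul_nonneg hw0 hx)]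
    have e1 : (μ (Z i ⁻¹' u₀)).toReal = wz := by rw [hμw, ENNReal.toReal_ofReal hw0]
    have e2 : (μ (Z i ⁻¹' u₀ ∩ Hᶜ)).toReal = wz * ((1-p)^d) := by
      rw [hC2 u₀]; exact toR _ (pow_nonneg h1p d)
    have e3 : (μ (Z i ⁻¹' u₀ ∩ Htᶜ)).toReal
        = wz * ((1-(1-β)*p)^d * (1-α*p)^(N-1-d)) := by
      rw [hC3 u₀]; exact toR _ (mul_nonneg (pow_nonneg hbp0 _) (pow_nonneg hap0 _))
    have e4 : (μ (Z i ⁻¹' u₀ ∩ (Htᶜ ∩ Hᶜ))).toReal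
        = wz * ((1-p)^d * (1-α*p)^(N-1-d)) := by
      rw [hC4 u₀]; exact toR _ (mul_nonneg (pow_nonneg h1p _) (pow_nonneg hap0 _))
    have s1 := hsplitm (Z i ⁻¹' u₀ ∩ Htᶜ) H hmH
    rw [Set.inter_assoc, Set.inter_assoc] at s1
    have s3 := hsplitm (Z i ⁻¹' u₀) Ht hmHt
    have s4 := hsplitm (Z i ⁻¹' u₀ ∩ Ht) H hmH
    rw [Set.inter_assoc, Set.inter_assoc] at s4
    have c1 : (Z i ⁻¹' u₀ ∩ Hᶜ) ∩ Ht = Z i ⁻¹' u₀ ∩ (Ht ∩ Hᶜ) := by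
      ext ω; simp only [Set.mem_inter_iff, Set.mem_compl_iff]; tauto
    have c2 : (Z i ⁻¹' u₀ ∩ Hᶜ) ∩ Htᶜ = Z i ⁻¹' u₀ ∩ (Htᶜ ∩ Hᶜ) := by
      ext ω; simp only [Set.mem_inter_iff, Set.mem_compl_iff]; tauto
    have s2 := hsplitm (Z i ⁻¹' u₀ ∩ Hᶜ) Ht hmHt
    rw [c1, c2] at s2
    refine ⟨by linarith, by linarith, by linarith, by linarith⟩
  obtain ⟨k11, k12, k13, k14⟩ := key {1} p hp0 (by rw [← hT1d]; exact hμT1)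
  rw [← hT1d] at k11 k12 k13 k14
  obtain ⟨k01, k02, k03, k04⟩ := key ({1}ᶜ) (1 - p) h1p hμT0
  rw [hT0pre] at k01 k02 k03 k04
  have ent : ∀ k l, P i k l = (μ (RowS k ∩ ColS l)).toReal := by
    intro k l; rw [hP i k l, hsetEq k l]
  have hR0 : RowS 0 = T1 ∩ Ht := by simp [hRowS]
  have hR1 : RowS 1 = T1 ∩ Htᶜ := by simp [hRowS]
  have hR2 : RowS 2 = T1ᶜ ∩ Ht := by simp [hRowS]
  have hR3 : RowS 3 = T1ᶜ ∩ Htᶜ := by simp [hRowS]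
  have hQ0 : ColS 0 = T1 ∩ H := by simp [hColS]
  have hQ1 : ColS 1 = T1 ∩ Hᶜ := by simp [hColS]
  have hQ2 : ColS 2 = T1ᶜ ∩ H := by simp [hColS]
  have hQ3 : ColS 3 = T1ᶜ ∩ Hᶜ := by simp [hColS]
  have inter1 : ∀ (X Y : Set Ω), (T1 ∩ X) ∩ (T1 ∩ Y) = T1 ∩ (X ∩ Y) := by
    intro X Y; ext ω; simp only [Set.mem_inter_iff]; tauto
  have inter0 : ∀ (X Y : Set Ω), (T1ᶜ ∩ X) ∩ (T1ᶜ ∩ Y) = T1ᶜ ∩ (X ∩ Y) := by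
    intro X Y; ext ω; simp only [Set.mem_inter_iff]; tauto
  have interE : ∀ (X Y : Set Ω), (T1 ∩ X) ∩ (T1ᶜ ∩ Y) = ∅ := by
    intro X Y; ext ω
    simp only [Set.mem_inter_iff, Set.mem_compl_iff, Set.mem_empty_iff_false]; tauto
  have interE' : ∀ (X Y : Set Ω), (T1ᶜ ∩ X) ∩ (T1 ∩ Y) = ∅ := by
    intro X Y; ext ω
    simp only [Set.mem_inter_iff, Set.mem_compl_iff, Set.mem_empty_iff_false]; tauto
  have E00 : P i 0 0 = p * (1 - (1-p)^d - (1-(1-β)*p)^d * (1-α*p)^(N-1-d)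
      + (1-p)^d * (1-α*p)^(N-1-d)) := by rw [ent 0 0, hR0, hQ0, inter1]; exact k11
  have E01 : P i 0 1 = p * ((1-p)^d - (1-p)^d * (1-α*p)^(N-1-d)) := by
    rw [ent 0 1, hR0, hQ1, inter1]; exact k12
  have E10 : P i 1 0 = p * ((1-(1-β)*p)^d * (1-α*p)^(N-1-d)
      - (1-p)^d * (1-α*p)^(N-1-d)) := by rw [ent 1 0, hR1, hQ0, inter1]; exact k13
  have E11 : P i 1 1 = p * ((1-p)^d * (1-α*p)^(N-1-d)) := by
    rw [ent 1 1, hR1, hQ1, inter1]; exact k14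
  have E22 : P i 2 2 = (1-p) * (1 - (1-p)^d - (1-(1-β)*p)^d * (1-α*p)^(N-1-d)
      + (1-p)^d * (1-α*p)^(N-1-d)) := by rw [ent 2 2, hR2, hQ2, inter0]; exact k01
  have E23 : P i 2 3 = (1-p) * ((1-p)^d - (1-p)^d * (1-α*p)^(N-1-d)) := by
    rw [ent 2 3, hR2, hQ3, inter0]; exact k02
  have E32 : P i 3 2 = (1-p) * ((1-(1-β)*p)^d * (1-α*p)^(N-1-d)
      - (1-p)^d * (1-α*p)^(N-1-d)) := by rw [ent 3 2, hR3, hQ2, inter0]; exact k03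
  have E33 : P i 3 3 = (1-p) * ((1-p)^d * (1-α*p)^(N-1-d)) := by
    rw [ent 3 3, hR3, hQ3, inter0]; exact k04
  have E02 : P i 0 2 = 0 := by rw [ent 0 2, hR0, hQ2, interE]; simp
  have E03 : P i 0 3 = 0 := by rw [ent 0 3, hR0, hQ3, interE]; simp
  have E12 : P i 1 2 = 0 := by rw [ent 1 2, hR1, hQ2, interE]; simp
  have E13 : P i 1 3 = 0 := by rw [ent 1 3, hR1, hQ3, interE]; simp
  have E20 : P i 2 0 = 0 := by rw [ent 2 0, hR2, hQ0, interE']; simp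
  have E21 : P i 2 1 = 0 := by rw [ent 2 1, hR2, hQ1, interE']; simp
  have E30 : P i 3 0 = 0 := by rw [ent 3 0, hR3, hQ0, interE']; simp
  have E31 : P i 3 1 = 0 := by rw [ent 3 1, hR3, hQ1, interE']; simp
  -- determinant
  have hdetEq : (P i).det = p ^ 2 * (1 - p) ^ 2 * (1 - p) ^ (2 * d)
      * (1 - α * p) ^ (2 * (N - 1 - d)) * (1 - (1 - (1 - β) * p) ^ d) ^ 2 := by
    rw [det4 (P i) E02 E03 E12 E13 E20 E21 E30 E31, E00, E01, E10, E11, E22, E23, E32, E33]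
    ring
  refine ⟨part1, hdetEq, ?_⟩
  intro hp0' hp1' hβ' hd1 hdN
  have v2 : (0:ℝ) < 1 - α * p := by
    have : α * p ≤ p := mul_le_of_le_one_left hp0 hα1
    linarith
  have v4 : (1 - (1 - β) * p) ^ d < 1 := by
    refine pow_lt_one₀ hbp0 ?_ (by omega)
    have : 0 < (1 - β) * p := mul_pos (by linarith) hp0'
    linarith
  have hdet_pos : 0 < (P i).det := by
    rw [hdetEq]
    have c1 : (0:ℝ) < p ^ 2 := pow_pos hp0' 2
    have c2 : (0:ℝ) < (1 - p) ^ 2 := pow_pos (by linarith) 2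
    have c3 : (0:ℝ) < (1 - p) ^ (2 * d) := pow_pos (by linarith) _
    have c4 : (0:ℝ) < (1 - α * p) ^ (2 * (N - 1 - d)) := pow_pos v2 _
    have c5 : (0:ℝ) < (1 - (1 - (1 - β) * p) ^ d) ^ 2 := pow_pos (by linarith) 2
    exact mul_pos (mul_pos (mul_pos (mul_pos c1 c2) c3) c4) c5
  have hunit : IsUnit (P i).det := isUnit_iff_ne_zero.mpr (ne_of_gt hdet_pos)
  have lin : ∀ k, ∫ ω, (P i)⁻¹.mulVec (ytil i ω) k ∂μ
      = (P i)⁻¹.mulVec (fun l => ∫ ω, ytil i ω l ∂μ) k := by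
    intro k
    have hrw : ∀ ω, (P i)⁻¹.mulVec (ytil i ω) k = ∑ l : Fin 4, (P i)⁻¹ k l * ytil i ω l := by
      intro ω; simp [Matrix.mulVec, dotProduct]
    simp only [hrw]
    rw [integral_finset_sum _ (fun l _ => ((hIntEach l).const_mul _))]
    have hcm : ∀ l : Fin 4, ∫ ω, (P i)⁻¹ k l * ytil i ω l ∂μ
        = (P i)⁻¹ k l * ∫ ω, ytil i ω l ∂μ := fun l => integral_const_mul _ _
    rw [Finset.sum_congr rfl (fun l _ => hcm l)]
    simp [Matrix.mulVec, dotProduct]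
  refine ⟨hunit, lin, fun k => ?_⟩
  rw [lin k, show (fun l => ∫ ω, ytil i ω l ∂μ) = (P i).mulVec (y i) from funext part1,
    Matrix.mulVec_mulVec, Matrix.nonsing_inv_mul (P i) hunit, Matrix.one_mulVec]
end

section
/- Under the four-level exposure model with noisy network observation and i.i.d. Bernoulli(p) treatment with 0 < p < 1, the Aronow–Samii estimator computed from the noisy network satisfies the exact bias identity E[ ȳ̃_{A&S}(c_{10}) ] − (1/N) Σ_{i=1}^N y_i(c_{10}) = (1/N) Σ_{i=1}^N [ 1 − (1 − βp)^{d_i} ] ( y_i(c_{11}) − y_i(c_{10}) ). -/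
open MeasureTheory ProbabilityTheory Filter

section Aux
variable {Ω : Type} [MeasurableSpace Ω] (μ : Measure Ω) [IsProbabilityMeasure μ]

lemma bern_ind_eq (X : Ω → ℕ) (hm : Measurable X) :
    (fun ω => (if X ω = 1 then (1:ℝ) else 0)) = Set.indicator {ω | X ω = 1} (fun _ => (1:ℝ)) := by
  funext ω
  by_cases h : X ω = 1 <;> simp [Set.indicator, h]

lemma bern_meas_set (X : Ω → ℕ) (hm : Measurable X) : MeasurableSet {ω | X ω = 1} :=
  hm (measurableSet_singleton 1)

lemma bern_ind_integral (X : Ω → ℕ) (hm : Measurable X) (t : ℝ) (ht0 : 0 ≤ t)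
    (ht : μ {ω | X ω = 1} = ENNReal.ofReal t) :
    ∫ ω, (if X ω = 1 then (1:ℝ) else 0) ∂μ = t := by
  rw [bern_ind_eq X hm, integral_indicator_const (1:ℝ) (bern_meas_set X hm), measureReal_def, ht,
    ENNReal.toReal_ofReal ht0, smul_eq_mul, mul_one]

lemma bern_decomp (X : Ω → ℕ) (h01 : ∀ ω, X ω = 0 ∨ X ω = 1) (g : ℕ → ℝ) :
    (fun ω => g (X ω)) = fun ω => g 0 + (g 1 - g 0) * (if X ω = 1 then (1:ℝ) else 0) := by
  funext ω
  rcases h01 ω with h | h <;> rw [h] <;> simp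

lemma bern_ind_integrable (X : Ω → ℕ) (hm : Measurable X) :
    Integrable (fun ω => (if X ω = 1 then (1:ℝ) else 0)) μ := by
  rw [bern_ind_eq X hm]
  exact (integrable_const (1:ℝ)).indicator (bern_meas_set X hm)

lemma bern_integrable (X : Ω → ℕ) (hm : Measurable X) (h01 : ∀ ω, X ω = 0 ∨ X ω = 1)
    (g : ℕ → ℝ) : Integrable (fun ω => g (X ω)) μ := by
  rw [bern_decomp X h01 g]
  exact (integrable_const _).add (((bern_ind_integrable μ X hm)).const_mul _)

lemma bern_integral (X : Ω → ℕ) (hm : Measurable X) (h01 : ∀ ω, X ω = 0 ∨ X ω = 1)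
    (t : ℝ) (ht0 : 0 ≤ t) (ht : μ {ω | X ω = 1} = ENNReal.ofReal t) (g : ℕ → ℝ) :
    ∫ ω, g (X ω) ∂μ = g 0 + (g 1 - g 0) * t := by
  rw [bern_decomp X h01 g, integral_add (integrable_const _)
    (((bern_ind_integrable μ X hm)).const_mul _), integral_const,
    integral_const_mul, bern_ind_integral μ X hm t ht0 ht]
  simp

/-- Product of independent real random variables: integrability and factorization. -/
lemma indep_prod_integral {ι : Type} (X : ι → Ω → ℝ)
    (hindep : iIndepFun X μ)
    (hmeas : ∀ i, Measurable (X i)) (hint : ∀ i, Integrable (X i) μ)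
    (s : Finset ι) :
    Integrable (fun ω => ∏ k ∈ s, X k ω) μ ∧
      ∫ ω, ∏ k ∈ s, X k ω ∂μ = ∏ k ∈ s, ∫ ω, X k ω ∂μ := by
  classical
  induction s using Finset.induction_on with
  | empty => simp
  | @insert k s hk ih =>
    have hfun : (fun ω => ∏ j ∈ s, X j ω) = ∏ j ∈ s, X j := by
      funext ω; rw [Finset.prod_apply]
    have hIF : IndepFun (∏ j ∈ s, X j) (X k) μ :=
      hindep.indepFun_finsetProd_of_notMem hmeas hk
    have hint_s : Integrable (∏ j ∈ s, X j) μ := by rw [← hfun]; exact ih.1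
    have hmul : Integrable ((∏ j ∈ s, X j) * X k) μ :=
      hIF.integrable_mul hint_s (hint k)
    have heq : (fun ω => ∏ j ∈ Insert.insert k s, X j ω) = (∏ j ∈ s, X j) * X k := by
      funext ω
      rw [Finset.prod_insert hk, Pi.mul_apply, Finset.prod_apply, mul_comm]
    constructor
    · rw [heq]; exact hmul
    · rw [heq, hIF.integral_mul_eq_mul_integral hint_s.aestronglyMeasurable (hint k).aestronglyMeasurable, Finset.prod_insert hk]
      have : integral μ (∏ j ∈ s, X j) = ∏ k ∈ s, ∫ ω, X k ω ∂μ := by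
        rw [← hfun] at *; exact ih.2
      rw [this, mul_comm]

end Aux

section EProd
variable {Ω : Type} [MeasurableSpace Ω] (μ : Measure Ω) [IsProbabilityMeasure μ]
variable {N : ℕ}

/-- index of the edge `{i,j}` in the indexing type of the independent family -/
noncomputable def eIdx (i j : Fin N) : Fin N ⊕ {e : Fin N × Fin N // e.1 < e.2} :=
  if hij : i < j then .inr ⟨(i, j), hij⟩
  else if hji : j < i then .inr ⟨(j, i), hji⟩
  else .inl i

lemma eprod
    (Z : Fin N → Ω → ℕ)
    (hZmeas : ∀ i, Measurable (Z i))
    (hZ01 : ∀ i ω, Z i ω = 0 ∨ Z i ω = 1)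
    (Atil : Fin N → Fin N → Ω → ℕ)
    (hmeas : ∀ i j, Measurable (Atil i j))
    (hsymm : ∀ i j ω, Atil i j ω = Atil j i ω)
    (h01 : ∀ i j ω, Atil i j ω = 0 ∨ Atil i j ω = 1)
    (hindep : iIndepFun
      (Sum.elim Z (fun e : {e : Fin N × Fin N // e.1 < e.2} => Atil e.1.1 e.1.2)) μ)
    (i : Fin N) (T : Finset (Fin N)) (hT : ∀ j ∈ T, j ≠ i) (h : Fin N → ℕ → ℝ) :
    Integrable (fun ω => (∏ j, h j (Z j ω)) * ∏ j ∈ T, (Atil i j ω : ℝ)) μ ∧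
      ∫ ω, (∏ j, h j (Z j ω)) * ∏ j ∈ T, (Atil i j ω : ℝ) ∂μ
        = (∏ j, ∫ ω, h j (Z j ω) ∂μ) * ∏ j ∈ T, ∫ ω, (Atil i j ω : ℝ) ∂μ := by
  classical
  set ι := (Fin N ⊕ {e : Fin N × Fin N // e.1 < e.2}) with hι
  set g : ι → ℕ → ℝ := Sum.elim h (fun _ n => (n : ℝ)) with hg
  set X : ι → Ω → ℕ := Sum.elim Z (fun e => Atil e.1.1 e.1.2) with hX
  set W : ι → Ω → ℝ := fun k ω => g k (X k ω) with hW
  have hWindep : iIndepFun W μ := by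
    have := hindep.comp g (fun k => measurable_from_top)
    convert this using 1
    rfl
  have hXmeas : ∀ k, Measurable (X k) := by
    rintro (j | e)
    · exact hZmeas j
    · exact hmeas e.1.1 e.1.2
  have hX01 : ∀ k ω, X k ω = 0 ∨ X k ω = 1 := by
    rintro (j | e) ω
    · exact hZ01 j ω
    · exact h01 e.1.1 e.1.2 ω
  have hWmeas : ∀ k, Measurable (W k) :=
    fun k => measurable_from_top.comp (hXmeas k)
  have hWint : ∀ k, Integrable (W k) μ :=
    fun k => bern_integrable μ (X k) (hXmeas k) (hX01 k) (g k)
  -- the edge-index facts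
  have heW : ∀ j : Fin N, j ≠ i → W (eIdx i j) = fun ω => (Atil i j ω : ℝ) := by
    intro j hj
    rcases hj.lt_or_gt with hji | hij
    · have : eIdx i j = .inr ⟨(j, i), hji⟩ := by
        rw [eIdx, dif_neg (by omega), dif_pos hji]
      rw [this]
      funext ω
      simp only [hW, hg, hX, Sum.elim_inr]
      rw [hsymm j i ω]
    · have : eIdx i j = .inr ⟨(i, j), hij⟩ := by rw [eIdx, dif_pos hij]
      rw [this]
      rfl
  have hdecode : ∀ j : Fin N, j ≠ i →
      (Sum.elim (fun _ => i) (fun e : {e : Fin N × Fin N // e.1 < e.2} =>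
        if e.1.1 = i then e.1.2 else e.1.1) (eIdx i j)) = j := by
    intro j hj
    rcases hj.lt_or_gt with hji | hij
    · have : eIdx i j = .inr ⟨(j, i), hji⟩ := by
        rw [eIdx, dif_neg (by omega), dif_pos hji]
      rw [this, Sum.elim_inr, if_neg hj]
    · have : eIdx i j = .inr ⟨(i, j), hij⟩ := by rw [eIdx, dif_pos hij]
      rw [this, Sum.elim_inr, if_pos rfl]
  have hinjOn : Set.InjOn (eIdx i) T := by
    intro j1 h1 j2 h2 heq
    have e1 := hdecode j1 (hT j1 h1)
    have e2 := hdecode j2 (hT j2 h2)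
    rw [← e1, ← e2, heq]
  set s' : Finset ι := (Finset.univ.image Sum.inl) ∪ T.image (eIdx i) with hs'
  have hdisj : Disjoint (Finset.univ.image (Sum.inl : Fin N → ι)) (T.image (eIdx i)) := by
    rw [Finset.disjoint_left]
    rintro k hk1 hk2
    obtain ⟨a, _, rfl⟩ := Finset.mem_image.mp hk1
    obtain ⟨j, hj, hje⟩ := Finset.mem_image.mp hk2
    rcases (hT j hj).lt_or_gt with hji | hij
    · rw [eIdx, dif_neg (by omega), dif_pos hji] at hje; exact absurd hje (by simp)
    · rw [eIdx, dif_pos hij] at hje; exact absurd hje (by simp)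
  have hinl_inj : ∀ x ∈ (Finset.univ : Finset (Fin N)), ∀ y ∈ (Finset.univ : Finset (Fin N)),
      (Sum.inl x : ι) = Sum.inl y → x = y := fun x _ y _ hxy => Sum.inl_injective hxy
  have hW_inl : ∀ (j : Fin N) (ω : Ω), W (.inl j) ω = h j (Z j ω) := fun j ω => rfl
  have key := indep_prod_integral μ W hWindep hWmeas hWint s'
  have hsplitfun : (fun ω => ∏ k ∈ s', W k ω)
      = fun ω => (∏ j, h j (Z j ω)) * ∏ j ∈ T, (Atil i j ω : ℝ) := by
    funext ω
    rw [hs', Finset.prod_union hdisj, Finset.prod_image hinl_inj,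
      Finset.prod_image (fun x hx y hy hxy => hinjOn hx hy hxy)]
    congr 1
    exact Finset.prod_congr rfl (fun j hj => by rw [heW j (hT j hj)])
  have hsplitint : ∏ k ∈ s', ∫ ω, W k ω ∂μ
      = (∏ j, ∫ ω, h j (Z j ω) ∂μ) * ∏ j ∈ T, ∫ ω, (Atil i j ω : ℝ) ∂μ := by
    rw [hs', Finset.prod_union hdisj, Finset.prod_image hinl_inj,
      Finset.prod_image (fun x hx y hy hxy => hinjOn hx hy hxy)]
    congr 1
    exact Finset.prod_congr rfl (fun j hj => by rw [heW j (hT j hj)])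
  constructor
  · rw [← hsplitfun]; exact key.1
  · rw [← hsplitfun, ← hsplitint]; exact key.2

end EProd

section Ptwise
variable {N : ℕ}

lemma prod_ite_subset {γ : Type} [DecidableEq γ] {s T : Finset γ} (hTs : T ⊆ s) (f : γ → ℝ) :
    ∏ j ∈ s, (if j ∈ T then f j else 1) = ∏ j ∈ T, f j := by
  rw [← Finset.prod_filter]
  congr 1
  ext x
  simp only [Finset.mem_filter]
  exact ⟨fun h => h.2, fun h => ⟨hTs h, h⟩⟩

lemma prod_ite_subset' {γ : Type} [DecidableEq γ] {s T : Finset γ} (hTs : T ⊆ s) (f g : γ → ℝ) :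
    ∏ j ∈ s, (if j ∈ T then f j else g j) = (∏ j ∈ T, f j) * ∏ j ∈ s \ T, g j := by
  rw [← Finset.prod_filter_mul_prod_filter_not s (· ∈ T)]
  have h1 : s.filter (· ∈ T) = T := by
    ext x
    simp only [Finset.mem_filter]
    exact ⟨fun h => h.2, fun h => ⟨hTs h, h⟩⟩
  have h2 : s.filter (fun x => ¬ x ∈ T) = s \ T := (Finset.sdiff_eq_filter s T).symm
  rw [h1, h2]
  congr 1
  · exact Finset.prod_congr rfl (fun x hx => if_pos hx)
  · exact Finset.prod_congr rfl (fun x hx => if_neg (Finset.mem_sdiff.mp hx).2)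

/-- the function applied to `Z j` in the "Q1" term, for a subset `T` of `univ.erase i` -/
noncomputable def hAfun (p q : ℝ) (i : Fin N) (T : Finset (Fin N)) : Fin N → ℕ → ℝ :=
  fun j z => if j = i then (if z = 1 then 1 else 0)
    else if j ∈ T then (p - (z : ℝ)) / q else 1

/-- the function applied to `Z j` in the "Q2" term -/
noncomputable def hBfun (A : Fin N → Fin N → ℕ) (p q : ℝ) (i : Fin N) (T : Finset (Fin N)) :
    Fin N → ℕ → ℝ :=
  fun j z => if j = i then (if z = 1 then 1 else 0)
    else (if j ∈ T then (p - (z : ℝ)) / q else 1) * (1 - (z : ℝ) * (A i j : ℝ))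

end Ptwise

section Big
variable {N : ℕ}

lemma ptwise (A : Fin N → Fin N → ℕ) (i : Fin N) (hAdiag : A i i = 0)
    (hA01 : ∀ j, A i j = 0 ∨ A i j = 1)
    (p : ℝ) (hp0 : 0 < p) (hp1 : p < 1) (y0 y1 y2 y3 : ℝ)
    (z a : Fin N → ℕ) (hz : ∀ j, z j = 0 ∨ z j = 1) (ha : ∀ j, a j = 0 ∨ a j = 1)
    (hai : a i = 0) :
    (if 0 < p * (1 - p) ^ (∑ j, a j) then (1:ℝ) else 0)
      * (if z i = 1 ∧ (∑ j, z j * a j) = 0 then (1:ℝ) else 0)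
      * (p * (1 - p) ^ (∑ j, a j))⁻¹
      * (if z i = 1 then (if 0 < ∑ j, z j * A i j then y0 else y1)
          else (if 0 < ∑ j, z j * A i j then y2 else y3))
    = p⁻¹ * ∑ T ∈ (Finset.univ.erase i).powerset,
        ( y0 * ((∏ j, hAfun p (1 - p) i T j (z j)) * ∏ j ∈ T, (a j : ℝ))
        + (y1 - y0) * ((∏ j, hBfun A p (1 - p) i T j (z j)) * ∏ j ∈ T, (a j : ℝ)) ) := by
  classical
  set q : ℝ := 1 - p with hqdef
  have hq0 : 0 < q := by rw [hqdef]; linarith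
  have hq0' : q ≠ 0 := ne_of_gt hq0
  have hqp : q + p = 1 := by rw [hqdef]; ring
  by_cases hzi : z i = 1
  · -- main case
    rw [if_pos (by positivity)]
    have hsa : ∑ j, a j = ∑ j ∈ Finset.univ.erase i, a j :=
      (Finset.sum_erase _ hai).symm
    have hsza : ∑ j, z j * a j = ∑ j ∈ Finset.univ.erase i, z j * a j :=
      (Finset.sum_erase _ (by rw [hai, Nat.mul_zero])).symm
    -- claim 1
    have c1 : (if (∑ j, z j * a j) = 0 then (1:ℝ) else 0) * ((q ^ (∑ j, a j))⁻¹)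
        = ∏ j ∈ Finset.univ.erase i, (1 + (a j : ℝ) * ((p - (z j : ℝ)) / q)) := by
      by_cases hall : ∀ j ∈ Finset.univ.erase i, z j * a j = 0
      · have hzero : ∑ j, z j * a j = 0 := by
          rw [hsza]; exact Finset.sum_eq_zero hall
        rw [if_pos hzero, one_mul]
        have hfac : ∀ j ∈ Finset.univ.erase i,
            (1 + (a j : ℝ) * ((p - (z j : ℝ)) / q)) = ((q ^ (a j))⁻¹ : ℝ) := by
          intro j hj
          rcases ha j with h0 | h1
          · simp [h0]
          · have hz0 : z j = 0 := by
              have := hall j hj; rw [h1, Nat.mul_one] at this; exact this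
            rw [h1, hz0]
            push_cast
            rw [pow_one]
            field_simp
            linarith
        rw [Finset.prod_congr rfl hfac, Finset.prod_inv_distrib,
          Finset.prod_pow_eq_pow_sum, ← hsa]
      · push_neg at hall
        obtain ⟨j0, hj0mem, hj0⟩ := hall
        have hzz := Nat.mul_ne_zero_iff.mp hj0
        have hz1 : z j0 = 1 := (hz j0).resolve_left hzz.1
        have ha1 : a j0 = 1 := (ha j0).resolve_left hzz.2
        have hne : ¬ (∑ j, z j * a j) = 0 := by
          intro h0
          exact hj0 (Finset.sum_eq_zero_iff.mp h0 j0 (Finset.mem_univ j0))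
        rw [if_neg hne, zero_mul]
        refine (Finset.prod_eq_zero hj0mem ?_).symm
        rw [hz1, ha1]
        push_cast
        field_simp
        linarith
    -- claim 2
    have c2 : (if 0 < ∑ j, z j * A i j then y0 else y1)
        = y0 + (y1 - y0) * ∏ j ∈ Finset.univ.erase i, (1 - (z j : ℝ) * (A i j : ℝ)) := by
      by_cases hpos : 0 < ∑ j, z j * A i j
      · rw [if_pos hpos]
        have : ∃ j0, z j0 * A i j0 ≠ 0 := by
          by_contra hcon
          push_neg at hcon
          rw [Finset.sum_eq_zero (fun j _ => hcon j)] at hpos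
          exact lt_irrefl 0 hpos
        obtain ⟨j0, hj0⟩ := this
        have hj0i : j0 ≠ i := by
          intro h; rw [h, hAdiag, Nat.mul_zero] at hj0; exact hj0 rfl
        have hzz := Nat.mul_ne_zero_iff.mp hj0
        have hz1 : z j0 = 1 := (hz j0).resolve_left hzz.1
        have hA1 : A i j0 = 1 := (hA01 j0).resolve_left hzz.2
        rw [Finset.prod_eq_zero (Finset.mem_erase.mpr ⟨hj0i, Finset.mem_univ j0⟩)
          (by rw [hz1, hA1]; push_cast; ring), mul_zero, add_zero]
      · rw [if_neg hpos]
        have hzero : ∀ j, z j * A i j = 0 := by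
          have := Nat.eq_zero_of_not_pos hpos
          intro j
          exact Finset.sum_eq_zero_iff.mp this j (Finset.mem_univ j)
        have hone : ∀ j ∈ Finset.univ.erase i, (1 - (z j : ℝ) * (A i j : ℝ)) = 1 := by
          intro j _
          have h0 : (z j : ℝ) * (A i j : ℝ) = 0 := by
            have := congrArg (fun n : ℕ => (n : ℝ)) (hzero j)
            push_cast at this
            exact this
          rw [h0, sub_zero]
        rw [Finset.prod_eq_one hone, mul_one]
        ring
    -- product formulas for hAfun / hBfun
    have hsub : ∀ T ∈ (Finset.univ.erase i).powerset, T ⊆ Finset.univ.erase i :=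
      fun T hT => Finset.mem_powerset.mp hT
    have hPA : ∀ T ∈ (Finset.univ.erase i).powerset,
        (∏ j, hAfun p q i T j (z j)) = ∏ j ∈ T, ((p - (z j : ℝ)) / q) := by
      intro T hT
      rw [← Finset.mul_prod_erase Finset.univ _ (Finset.mem_univ i)]
      have h1 : hAfun p q i T i (z i) = 1 := by rw [hAfun]; simp [hzi]
      rw [h1, one_mul,
        Finset.prod_congr rfl (fun j hj =>
          show hAfun p q i T j (z j) = (if j ∈ T then (p - (z j : ℝ)) / q else 1) by
            rw [hAfun]; exact if_neg (Finset.mem_erase.mp hj).1)]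
      exact prod_ite_subset (hsub T hT) _
    have hPB : ∀ T ∈ (Finset.univ.erase i).powerset,
        (∏ j, hBfun A p q i T j (z j))
          = (∏ j ∈ T, ((p - (z j : ℝ)) / q) * (1 - (z j : ℝ) * (A i j : ℝ)))
            * ∏ j ∈ Finset.univ.erase i \ T, (1 - (z j : ℝ) * (A i j : ℝ)) := by
      intro T hT
      rw [← Finset.mul_prod_erase Finset.univ _ (Finset.mem_univ i)]
      have h1 : hBfun A p q i T i (z i) = 1 := by rw [hBfun]; simp [hzi]
      rw [h1, one_mul,
        Finset.prod_congr rfl (fun j hj =>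
          show hBfun A p q i T j (z j)
              = (if j ∈ T then ((p - (z j : ℝ)) / q) * (1 - (z j : ℝ) * (A i j : ℝ))
                  else (1 - (z j : ℝ) * (A i j : ℝ))) by
            rw [hBfun, if_neg (Finset.mem_erase.mp hj).1, ite_mul, one_mul])]
      exact prod_ite_subset' (hsub T hT) _ _
    -- expansions of the two base products
    have expandA : (∏ j ∈ Finset.univ.erase i, (1 + (a j : ℝ) * ((p - (z j : ℝ)) / q)))
        = ∑ T ∈ (Finset.univ.erase i).powerset,
            (∏ j ∈ T, ((p - (z j : ℝ)) / q)) * ∏ j ∈ T, (a j : ℝ) := by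
      rw [Finset.prod_congr rfl (fun j _ =>
        show (1 + (a j : ℝ) * ((p - (z j : ℝ)) / q))
            = ((a j : ℝ) * ((p - (z j : ℝ)) / q) + 1) by ring), Finset.prod_add]
      refine Finset.sum_congr rfl (fun T hT => ?_)
      rw [Finset.prod_const_one, mul_one, Finset.prod_mul_distrib, mul_comm]
    have expandB : (∏ j ∈ Finset.univ.erase i, (1 + (a j : ℝ) * ((p - (z j : ℝ)) / q)))
          * (∏ j ∈ Finset.univ.erase i, (1 - (z j : ℝ) * (A i j : ℝ)))
        = ∑ T ∈ (Finset.univ.erase i).powerset,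
            ((∏ j ∈ T, ((p - (z j : ℝ)) / q) * (1 - (z j : ℝ) * (A i j : ℝ)))
              * ∏ j ∈ Finset.univ.erase i \ T, (1 - (z j : ℝ) * (A i j : ℝ)))
            * ∏ j ∈ T, (a j : ℝ) := by
      rw [← Finset.prod_mul_distrib,
        Finset.prod_congr rfl (fun j _ =>
          show (1 + (a j : ℝ) * ((p - (z j : ℝ)) / q)) * (1 - (z j : ℝ) * (A i j : ℝ))
              = (a j : ℝ) * (((p - (z j : ℝ)) / q) * (1 - (z j : ℝ) * (A i j : ℝ)))
                + (1 - (z j : ℝ) * (A i j : ℝ)) by ring), Finset.prod_add]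
      refine Finset.sum_congr rfl (fun T hT => ?_)
      rw [Finset.prod_mul_distrib]
      ring
    -- assemble
    simp only [hzi, if_true, true_and, one_mul]
    rw [c2, mul_inv]
    rw [show (if (∑ j, z j * a j) = 0 then (1:ℝ) else 0) * (p⁻¹ * (q ^ (∑ j, a j))⁻¹)
        * (y0 + (y1 - y0) * ∏ j ∈ Finset.univ.erase i, (1 - (z j : ℝ) * (A i j : ℝ)))
        = p⁻¹ * (((if (∑ j, z j * a j) = 0 then (1:ℝ) else 0) * (q ^ (∑ j, a j))⁻¹)
            * (y0 + (y1 - y0) * ∏ j ∈ Finset.univ.erase i, (1 - (z j : ℝ) * (A i j : ℝ))))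
      from by ring, c1]
    congr 1
    rw [Finset.sum_congr rfl (fun T hT => by rw [hPA T hT, hPB T hT])]
    rw [mul_add, mul_comm _ y0,
      show (∏ j ∈ Finset.univ.erase i, (1 + (a j : ℝ) * ((p - (z j : ℝ)) / q)))
          * ((y1 - y0) * ∏ j ∈ Finset.univ.erase i, (1 - (z j : ℝ) * (A i j : ℝ)))
        = (y1 - y0) * ((∏ j ∈ Finset.univ.erase i, (1 + (a j : ℝ) * ((p - (z j : ℝ)) / q)))
            * ∏ j ∈ Finset.univ.erase i, (1 - (z j : ℝ) * (A i j : ℝ))) from by ring,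
      expandB, expandA, Finset.mul_sum, Finset.mul_sum, ← Finset.sum_add_distrib]
  · -- z i ≠ 1, both sides vanish
    have hzi0 : z i = 0 := (hz i).resolve_right hzi
    have hind0 : (if z i = 1 ∧ (∑ j, z j * a j) = 0 then (1:ℝ) else 0) = 0 :=
      if_neg (fun hcon => hzi hcon.1)
    have hterm : ∀ T ∈ (Finset.univ.erase i).powerset,
        ( y0 * ((∏ j, hAfun p q i T j (z j)) * ∏ j ∈ T, (a j : ℝ))
        + (y1 - y0) * ((∏ j, hBfun A p q i T j (z j)) * ∏ j ∈ T, (a j : ℝ)) ) = 0 := by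
      intro T hT
      have hA0 : hAfun p q i T i (z i) = 0 := by rw [hAfun]; simp [hzi]
      have hB0 : hBfun A p q i T i (z i) = 0 := by rw [hBfun]; simp [hzi]
      rw [Finset.prod_eq_zero (Finset.mem_univ i) hA0,
        Finset.prod_eq_zero (Finset.mem_univ i) hB0]
      ring
    rw [hind0, Finset.sum_congr rfl hterm, Finset.sum_const_zero]
    ring

end Big

/-- Exact bias identity for the Aronow–Samii estimator of `ȳ(c_10)`
computed from the noisy network, under the four-level exposure model and i.i.d.
Bernoulli(p) treatment with 0 < p < 1. Outcomes are indexed by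
0 ↦ c_11, 1 ↦ c_10, 2 ↦ c_01, 3 ↦ c_00. -/
theorem aronow_samii_bias_c10
    {Ω : Type} [MeasurableSpace Ω] (μ : Measure Ω) [IsProbabilityMeasure μ]
    (N : ℕ)
    (A : Fin N → Fin N → ℕ)
    (hAsymm : ∀ i j, A i j = A j i)
    (hAdiag : ∀ i, A i i = 0)
    (hA01 : ∀ i j, A i j = 0 ∨ A i j = 1)
    (α β p : ℝ) (hα0 : 0 ≤ α) (hα1 : α ≤ 1) (hβ0 : 0 ≤ β) (hβ1 : β ≤ 1)
    (hp0 : 0 < p) (hp1 : p < 1)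
    (Z : Fin N → Ω → ℕ)
    (hZmeas : ∀ i, Measurable (Z i))
    (hZ01 : ∀ i ω, Z i ω = 0 ∨ Z i ω = 1)
    (hZp : ∀ i, μ {ω | Z i ω = 1} = ENNReal.ofReal p)
    (Atil : Fin N → Fin N → Ω → ℕ)
    (hmeas : ∀ i j, Measurable (Atil i j))
    (hsymm : ∀ i j ω, Atil i j ω = Atil j i ω)
    (hdiag : ∀ i ω, Atil i i ω = 0)
    (h01 : ∀ i j ω, Atil i j ω = 0 ∨ Atil i j ω = 1)
    (hfalse : ∀ i j : Fin N, i < j → A i j = 0 →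
      μ {ω | Atil i j ω = 1} = ENNReal.ofReal α)
    (htrue : ∀ i j : Fin N, i < j → A i j = 1 →
      μ {ω | Atil i j ω = 1} = ENNReal.ofReal (1 - β))
    (hindep : iIndepFun
      (Sum.elim Z (fun e : {e : Fin N × Fin N // e.1 < e.2} => Atil e.1.1 e.1.2)) μ)
    -- fixed potential outcomes, indexed 0 ↦ c_11, 1 ↦ c_10, 2 ↦ c_01, 3 ↦ c_00
    (y : Fin N → Fin 4 → ℝ) :
    (∫ ω, (N : ℝ)⁻¹ * ∑ i,
        -- ỹ_{A&S,i}(c_10): indicator of positive observed exposure probability,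
        -- times indicator of observed exposure c_10, divided by p̃_i(c_10),
        -- times the outcome at the true exposure
        ((if 0 < p * (1 - p) ^ (∑ j, Atil i j ω) then (1:ℝ) else 0)
          * (if Z i ω = 1 ∧ (∑ j, Z j ω * Atil i j ω) = 0 then (1:ℝ) else 0)
          * (p * (1 - p) ^ (∑ j, Atil i j ω))⁻¹
          * (if Z i ω = 1 then
              (if 0 < ∑ j, Z j ω * A i j then y i 0 else y i 1)
             else
              (if 0 < ∑ j, Z j ω * A i j then y i 2 else y i 3))) ∂μ)
      - (N : ℝ)⁻¹ * ∑ i, y i 1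
      = (N : ℝ)⁻¹ * ∑ i, (1 - (1 - β * p) ^ (∑ j, A i j)) * (y i 0 - y i 1) := by
  classical
  have hq0 : (0:ℝ) < 1 - p := by linarith
  -- shorthand for the edge success probability
  set ε : Fin N → Fin N → ℝ := fun i j => if A i j = 1 then 1 - β else α with hεdef
  have hεnn : ∀ i j, 0 ≤ ε i j := by
    intro i j; rw [hεdef]; dsimp only; split <;> linarith
  -- probability of an observed edge
  have hedge : ∀ i j : Fin N, j ≠ i →
      μ {ω | Atil i j ω = 1} = ENNReal.ofReal (ε i j) := by
    intro i j hj
    rw [hεdef]; dsimp only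
    rcases hj.lt_or_gt with hji | hij
    · have hset : {ω | Atil i j ω = 1} = {ω | Atil j i ω = 1} := by
        ext ω; simp [hsymm i j ω]
      rcases hA01 i j with h0 | h1
      · rw [if_neg (by omega), hset]
        exact hfalse j i hji (by rw [← hAsymm i j]; exact h0)
      · rw [if_pos h1, hset]
        exact htrue j i hji (by rw [← hAsymm i j]; exact h1)
    · rcases hA01 i j with h0 | h1
      · rw [if_neg (by omega)]; exact hfalse i j hij h0
      · rw [if_pos h1]; exact htrue i j hij h1
  have hedgeint : ∀ i j : Fin N, j ≠ i → ∫ ω, (Atil i j ω : ℝ) ∂μ = ε i j := by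
    intro i j hj
    have := bern_integral μ (Atil i j) (hmeas i j) (h01 i j) (ε i j) (hεnn i j)
      (hedge i j hj) (fun n => (n : ℝ))
    simpa using this
  have hZint : ∀ (j : Fin N) (g : ℕ → ℝ),
      ∫ ω, g (Z j ω) ∂μ = g 0 + (g 1 - g 0) * p :=
    fun j g => bern_integral μ (Z j) (hZmeas j) (hZ01 j) p (le_of_lt hp0) (hZp j) g
  -- pointwise rewriting of the integrand
  have hptw : (fun ω => (N : ℝ)⁻¹ * ∑ i,
        ((if 0 < p * (1 - p) ^ (∑ j, Atil i j ω) then (1:ℝ) else 0)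
          * (if Z i ω = 1 ∧ (∑ j, Z j ω * Atil i j ω) = 0 then (1:ℝ) else 0)
          * (p * (1 - p) ^ (∑ j, Atil i j ω))⁻¹
          * (if Z i ω = 1 then
              (if 0 < ∑ j, Z j ω * A i j then y i 0 else y i 1)
             else
              (if 0 < ∑ j, Z j ω * A i j then y i 2 else y i 3))))
      = fun ω => (N : ℝ)⁻¹ * ∑ i, p⁻¹ *
          ∑ T ∈ (Finset.univ.erase i).powerset,
            ( y i 0 * ((∏ j, hAfun p (1 - p) i T j (Z j ω)) * ∏ j ∈ T, (Atil i j ω : ℝ))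
            + (y i 1 - y i 0) *
                ((∏ j, hBfun A p (1 - p) i T j (Z j ω)) * ∏ j ∈ T, (Atil i j ω : ℝ)) ) := by
    funext ω
    congr 1
    refine Finset.sum_congr rfl (fun i _ => ?_)
    exact ptwise A i (hAdiag i) (fun j => hA01 i j) p hp0 hp1
      (y i 0) (y i 1) (y i 2) (y i 3)
      (fun j => Z j ω) (fun j => Atil i j ω)
      (fun j => hZ01 j ω) (fun j => h01 i j ω) (hdiag i ω)
  -- integrability and factorization of each elementary product
  have hTne : ∀ (i : Fin N) (T : Finset (Fin N)), T ∈ (Finset.univ.erase i).powerset →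
      ∀ j ∈ T, j ≠ i :=
    fun i T hT j hj => (Finset.mem_erase.mp (Finset.mem_powerset.mp hT hj)).1
  have hep : ∀ (i : Fin N) (T : Finset (Fin N)) (hT : T ∈ (Finset.univ.erase i).powerset)
      (h : Fin N → ℕ → ℝ),
      Integrable (fun ω => (∏ j, h j (Z j ω)) * ∏ j ∈ T, (Atil i j ω : ℝ)) μ ∧
        ∫ ω, (∏ j, h j (Z j ω)) * ∏ j ∈ T, (Atil i j ω : ℝ) ∂μ
          = (∏ j, ∫ ω, h j (Z j ω) ∂μ) * ∏ j ∈ T, ∫ ω, (Atil i j ω : ℝ) ∂μ :=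
    fun i T hT h => eprod μ Z hZmeas hZ01 Atil hmeas hsymm h01 hindep i T (hTne i T hT) h
  -- the integral of each i-summand
  have hFi : ∀ i : Fin N,
      ∫ ω, (p⁻¹ * ∑ T ∈ (Finset.univ.erase i).powerset,
        ( y i 0 * ((∏ j, hAfun p (1 - p) i T j (Z j ω)) * ∏ j ∈ T, (Atil i j ω : ℝ))
        + (y i 1 - y i 0) *
            ((∏ j, hBfun A p (1 - p) i T j (Z j ω)) * ∏ j ∈ T, (Atil i j ω : ℝ)) )) ∂μ
      = y i 0 + (y i 1 - y i 0) * (1 - β * p) ^ (∑ j, A i j) := by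
    intro i
    rw [integral_const_mul, integral_finset_sum (μ := μ)
      (f := fun T ω =>
        y i 0 * ((∏ j, hAfun p (1 - p) i T j (Z j ω)) * ∏ j ∈ T, (Atil i j ω : ℝ))
        + (y i 1 - y i 0) *
            ((∏ j, hBfun A p (1 - p) i T j (Z j ω)) * ∏ j ∈ T, (Atil i j ω : ℝ)))
      (Finset.univ.erase i).powerset (fun T hT =>
      ((hep i T hT (hAfun p (1 - p) i T)).1.const_mul _).add
        ((hep i T hT (hBfun A p (1 - p) i T)).1.const_mul _))]
    -- evaluate each T-term
    have hsub : ∀ T ∈ (Finset.univ.erase i).powerset, T ⊆ Finset.univ.erase i :=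
      fun T hT => Finset.mem_powerset.mp hT
    have hterm : ∀ T ∈ (Finset.univ.erase i).powerset,
        (∫ ω, ( y i 0 * ((∏ j, hAfun p (1 - p) i T j (Z j ω)) * ∏ j ∈ T, (Atil i j ω : ℝ))
        + (y i 1 - y i 0) *
            ((∏ j, hBfun A p (1 - p) i T j (Z j ω)) * ∏ j ∈ T, (Atil i j ω : ℝ)) ) ∂μ)
        = y i 0 * (p * ((∏ j ∈ T, ((0:ℝ) * ε i j)) * ∏ j ∈ Finset.univ.erase i \ T, (1:ℝ)))
          + (y i 1 - y i 0) * (p * ((∏ j ∈ T, (p * (A i j : ℝ) * ε i j))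
              * ∏ j ∈ Finset.univ.erase i \ T, (1 - p * (A i j : ℝ)))) := by
      intro T hT
      rw [integral_add ((hep i T hT _).1.const_mul _) ((hep i T hT _).1.const_mul _),
        integral_const_mul, integral_const_mul, (hep i T hT _).2, (hep i T hT _).2]
      -- evaluate the Z-integrals
      have hAi : ∫ ω, hAfun p (1 - p) i T i (Z i ω) ∂μ = p := by
        rw [hZint]; simp [hAfun]
      have hBi : ∫ ω, hBfun A p (1 - p) i T i (Z i ω) ∂μ = p := by
        rw [hZint]; simp [hBfun]
      have hAj : ∀ j ∈ Finset.univ.erase i,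
          ∫ ω, hAfun p (1 - p) i T j (Z j ω) ∂μ = (if j ∈ T then (0:ℝ) else 1) := by
        intro j hj
        have hji := (Finset.mem_erase.mp hj).1
        rw [hZint]
        simp only [hAfun, if_neg hji]
        by_cases hjT : j ∈ T
        · simp only [if_pos hjT]
          push_cast
          field_simp
          ring
        · simp only [if_neg hjT]
          norm_num
      have hBj : ∀ j ∈ Finset.univ.erase i,
          ∫ ω, hBfun A p (1 - p) i T j (Z j ω) ∂μ
            = (if j ∈ T then p * (A i j : ℝ) else 1 - p * (A i j : ℝ)) := by
        intro j hj
        have hji := (Finset.mem_erase.mp hj).1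
        rw [hZint]
        simp only [hBfun, if_neg hji]
        by_cases hjT : j ∈ T
        · simp only [if_pos hjT]
          push_cast
          field_simp
          ring
        · simp only [if_neg hjT]
          push_cast
          ring
      have hprodA : (∏ j, ∫ ω, hAfun p (1 - p) i T j (Z j ω) ∂μ)
          = p * ∏ j ∈ T, (0:ℝ) := by
        rw [← Finset.mul_prod_erase Finset.univ _ (Finset.mem_univ i), hAi,
          Finset.prod_congr rfl hAj, prod_ite_subset (hsub T hT)]
      have hprodB : (∏ j, ∫ ω, hBfun A p (1 - p) i T j (Z j ω) ∂μ)
          = p * ((∏ j ∈ T, (p * (A i j : ℝ)))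
              * ∏ j ∈ Finset.univ.erase i \ T, (1 - p * (A i j : ℝ))) := by
        rw [← Finset.mul_prod_erase Finset.univ _ (Finset.mem_univ i), hBi,
          Finset.prod_congr rfl hBj, prod_ite_subset' (hsub T hT)]
      have hprodE : (∏ j ∈ T, ∫ ω, (Atil i j ω : ℝ) ∂μ) = ∏ j ∈ T, ε i j :=
        Finset.prod_congr rfl (fun j hj => hedgeint i j (hTne i T hT j hj))
      rw [hprodA, hprodB, hprodE, Finset.prod_const_one, mul_one]
      simp only [Finset.prod_mul_distrib]
      ring
    rw [Finset.sum_congr rfl hterm]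
    have hgather : ∀ T ∈ (Finset.univ.erase i).powerset,
        (y i 0 * (p * ((∏ j ∈ T, ((0:ℝ) * ε i j)) * ∏ j ∈ Finset.univ.erase i \ T, (1:ℝ)))
          + (y i 1 - y i 0) * (p * ((∏ j ∈ T, (p * (A i j : ℝ) * ε i j))
              * ∏ j ∈ Finset.univ.erase i \ T, (1 - p * (A i j : ℝ)))))
        = (y i 0 * p) * ((∏ j ∈ T, ((0:ℝ) * ε i j)) * ∏ j ∈ Finset.univ.erase i \ T, (1:ℝ))
          + ((y i 1 - y i 0) * p) * ((∏ j ∈ T, (p * (A i j : ℝ) * ε i j))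
              * ∏ j ∈ Finset.univ.erase i \ T, (1 - p * (A i j : ℝ))) :=
      fun T _ => by ring
    rw [Finset.sum_congr rfl hgather, Finset.sum_add_distrib, ← Finset.mul_sum,
      ← Finset.mul_sum, ← Finset.prod_add, ← Finset.prod_add]
    have h1 : ∏ j ∈ Finset.univ.erase i, ((0:ℝ) * ε i j + 1) = 1 :=
      Finset.prod_eq_one (fun j _ => by ring)
    have h2 : ∏ j ∈ Finset.univ.erase i, (p * (A i j : ℝ) * ε i j + (1 - p * (A i j : ℝ)))
        = (1 - β * p) ^ (∑ j, A i j) := by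
      have hfac : ∀ j ∈ Finset.univ.erase i,
          (p * (A i j : ℝ) * ε i j + (1 - p * (A i j : ℝ))) = (1 - β * p) ^ (A i j) := by
        intro j _
        rcases hA01 i j with h | h
        · rw [h]; push_cast; norm_num
        · simp only [hεdef]; rw [if_pos h, h]; push_cast; ring
      rw [Finset.prod_congr rfl hfac, Finset.prod_pow_eq_pow_sum,
        Finset.sum_erase _ (hAdiag i)]
    rw [h1, h2, mul_one]
    field_simp
  rw [hptw, integral_const_mul, integral_finset_sum (μ := μ)
      (f := fun i ω => p⁻¹ * ∑ T ∈ (Finset.univ.erase i).powerset,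
        ( y i 0 * ((∏ j, hAfun p (1 - p) i T j (Z j ω)) * ∏ j ∈ T, (Atil i j ω : ℝ))
        + (y i 1 - y i 0) *
            ((∏ j, hBfun A p (1 - p) i T j (Z j ω)) * ∏ j ∈ T, (Atil i j ω : ℝ)) ))
      Finset.univ (fun i _ => Integrable.const_mul
        (integrable_finset_sum _ (fun T hT =>
          ((hep i T hT (hAfun p (1 - p) i T)).1.const_mul _).add
            ((hep i T hT (hBfun A p (1 - p) i T)).1.const_mul _))) _),
    Finset.sum_congr rfl (fun i _ => hFi i), ← mul_sub, ← Finset.sum_sub_distrib]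
  congr 1
  exact Finset.sum_congr rfl (fun i _ => by ring)
end
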